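/- arXiv:1205.3954 — 8 statements merged into one kernel-verified Lean document; each statement's English description precedes it below -/
import Mathlib

section
/- Let X = (X₁,...,X_d) have multivariate extreme value distribution with unit Fréchet margins F and tail dependence function l. Then for any λ ∈ (0,∞)^d, E[max_{1≤j≤d} F(X_j)^{λ_j}] = l(λ₁⁻¹,...,λ_d⁻¹) / (1 + l(λ₁⁻¹,...,λ_d⁻¹)). -/
open MeasureTheory Finset

/-- Unit Fréchet distribution function F(x) = exp(-1/x). -/
noncomputable def frechetCDF (x : ℝ) : ℝ := Real.exp (-x⁻¹)

/-- E[max_j F(X_j)^{λ_j}] = l(λ⁻¹)/(1 + l(λ⁻¹)). -/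
theorem stmt2
    {Ω : Type*} [MeasurableSpace Ω] (μ : Measure Ω) [IsProbabilityMeasure μ]
    {d : ℕ} (hd : 0 < d) (X : Fin d → Ω → ℝ) (hXm : ∀ j, Measurable (X j))
    (hmarg : ∀ j, ∀ t : ℝ, 0 < t → (μ {ω | X j ω ≤ t}).toReal = frechetCDF t)
    (hms : ∀ t : ℝ, 0 < t → ∀ x : Fin d → ℝ, (∀ j, 0 < x j) →
      ((μ {ω | ∀ j, X j ω ≤ t * x j}).toReal) ^ t = (μ {ω | ∀ j, X j ω ≤ x j}).toReal)
    (l : (Fin d → ℝ) → ℝ)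
    (hl : ∀ x : Fin d → ℝ, (∀ j, 0 ≤ x j) →
      l x = - Real.log ((μ {ω | ∀ j, 0 < x j → X j ω ≤ (x j)⁻¹}).toReal))
    (lam : Fin d → ℝ) (hlam : ∀ j, 0 < lam j) :
    ∫ ω, Finset.univ.sup' ⟨⟨0, hd⟩, Finset.mem_univ _⟩
        (fun j => frechetCDF (X j ω) ^ lam j) ∂μ
      = (l fun j => (lam j)⁻¹) / (1 + (l fun j => (lam j)⁻¹)) := by
  classical
  set j0 : Fin d := ⟨0, hd⟩
  have hne : (Finset.univ : Finset (Fin d)).Nonempty := ⟨j0, Finset.mem_univ _⟩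
  set M : Ω → ℝ := fun ω => Finset.univ.sup' hne (fun j => frechetCDF (X j ω) ^ lam j)
    with hM
  set p : ℝ := (μ {ω | ∀ j, X j ω ≤ lam j}).toReal with hp
  set c : ℝ := l (fun j => (lam j)⁻¹) with hc
  -- c = - log p
  have hcp : c = - Real.log p := by
    rw [hc, hl _ (fun j => (inv_pos.2 (hlam j)).le)]
    have hset : {ω | ∀ j, 0 < (lam j)⁻¹ → X j ω ≤ ((lam j)⁻¹)⁻¹}
        = {ω | ∀ j, X j ω ≤ lam j} := by
      ext ω
      simp only [Set.mem_setOf_eq]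
      constructor
      · intro h j; simpa [inv_inv] using h j (inv_pos.2 (hlam j))
      · intro h j _; simpa [inv_inv] using h j
    rw [hset, hp]
  -- basic measurability
  have hmSet : ∀ a : Fin d → ℝ, MeasurableSet {ω | ∀ j, X j ω ≤ a j} := by
    intro a
    have : {ω | ∀ j, X j ω ≤ a j} = ⋂ j, (X j) ⁻¹' Set.Iic (a j) := by
      ext ω; simp [Set.mem_iInter]
    rw [this]
    exact MeasurableSet.iInter fun j => (hXm j) measurableSet_Iic
  -- almost surely all X j are positive
  have hXpos : ∀ᵐ ω ∂μ, ∀ j, 0 < X j ω := by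
    rw [ae_all_iff]
    intro j
    have hz : μ {ω | X j ω ≤ 0} = 0 := by
      have hle : ∀ n : ℕ, (μ {ω | X j ω ≤ 0}).toReal ≤ Real.exp (-((n : ℝ) + 1)) := by
        intro n
        have hpos : (0 : ℝ) < ((n : ℝ) + 1)⁻¹ := by positivity
        have hsub : {ω | X j ω ≤ 0} ⊆ {ω | X j ω ≤ ((n : ℝ) + 1)⁻¹} :=
          fun ω hω => le_trans hω hpos.le
        have := ENNReal.toReal_mono (measure_ne_top μ _) (measure_mono hsub)
        rw [hmarg j _ hpos] at this
        simpa [frechetCDF, inv_inv] using this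
      have htend : Filter.Tendsto (fun n : ℕ => Real.exp (-((n : ℝ) + 1)))
          Filter.atTop (nhds 0) := by
        apply Real.tendsto_exp_atBot.comp
        apply Filter.tendsto_neg_atBot_iff.2
        exact Filter.tendsto_atTop_add_const_right _ 1 tendsto_natCast_atTop_atTop
      have h0 : (μ {ω | X j ω ≤ 0}).toReal ≤ 0 :=
        le_of_tendsto_of_tendsto' tendsto_const_nhds htend hle
      have := le_antisymm h0 ENNReal.toReal_nonneg
      rcases (ENNReal.toReal_eq_zero_iff _).1 this with h | h
      · exact h
      · exact absurd h (measure_ne_top μ _)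
    have : {ω | ¬ 0 < X j ω} = {ω | X j ω ≤ 0} := by ext ω; simp [not_lt]
    rw [ae_iff, this]; exact hz
  -- max-stability reformulated
  have hP : ∀ t : ℝ, 0 < t → (μ {ω | ∀ j, X j ω ≤ t * lam j}).toReal = p ^ t⁻¹ := by
    intro t ht
    have h := hms t ht lam hlam
    have h2 : ((μ {ω | ∀ j, X j ω ≤ t * lam j}).toReal ^ t) ^ t⁻¹
        = p ^ t⁻¹ := by rw [h, hp]
    rwa [← Real.rpow_mul ENNReal.toReal_nonneg, mul_inv_cancel₀ ht.ne',
      Real.rpow_one] at h2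
  -- p is positive
  have hppos : 0 < p := by
    set T : ℝ := 1 + ∑ j, (lam j)⁻¹ with hT
    have hsum_nonneg : 0 ≤ ∑ j, (lam j)⁻¹ :=
      Finset.sum_nonneg fun j _ => (inv_pos.2 (hlam j)).le
    have hTpos : 0 < T := by positivity
    set q : ℝ := (μ {ω | ∀ j, X j ω ≤ T * lam j}).toReal with hq
    have hqpos : 0 < q := by
      have hcompl : (μ ({ω | ∀ j, X j ω ≤ T * lam j}ᶜ)).toReal = 1 - q := by
        rw [prob_compl_eq_one_sub (hmSet _), ENNReal.toReal_sub_of_le prob_le_one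
          ENNReal.one_ne_top, ENNReal.toReal_one]
      have hsubset : ({ω | ∀ j, X j ω ≤ T * lam j}ᶜ : Set Ω)
          ⊆ ⋃ j, {ω | T * lam j < X j ω} := by
        intro ω hω
        simp only [Set.mem_compl_iff, Set.mem_setOf_eq, not_forall, not_le] at hω
        obtain ⟨j, hj⟩ := hω
        exact Set.mem_iUnion.2 ⟨j, hj⟩
      have hbound : (μ ({ω | ∀ j, X j ω ≤ T * lam j}ᶜ)).toReal
          ≤ ∑ j, (μ {ω | T * lam j < X j ω}).toReal := by
        calc (μ ({ω | ∀ j, X j ω ≤ T * lam j}ᶜ)).toReal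
            ≤ (μ (⋃ j, {ω | T * lam j < X j ω})).toReal :=
              ENNReal.toReal_mono (measure_ne_top μ _) (measure_mono hsubset)
          _ ≤ (∑ j, μ {ω | T * lam j < X j ω}).toReal :=
              ENNReal.toReal_mono (by
                exact ENNReal.sum_ne_top.2 fun j _ => measure_ne_top μ _)
                (measure_iUnion_fintype_le μ _)
          _ = ∑ j, (μ {ω | T * lam j < X j ω}).toReal := by
              rw [ENNReal.toReal_sum fun j _ => measure_ne_top μ _]
      have hterm : ∀ j, (μ {ω | T * lam j < X j ω}).toReal ≤ (T * lam j)⁻¹ := by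
        intro j
        have hTl : 0 < T * lam j := mul_pos hTpos (hlam j)
        have hcmp : {ω | T * lam j < X j ω} = {ω | X j ω ≤ T * lam j}ᶜ := by
          ext ω; simp [not_le]
        have hmeas : MeasurableSet {ω | X j ω ≤ T * lam j} := (hXm j) measurableSet_Iic
        rw [hcmp, prob_compl_eq_one_sub hmeas, ENNReal.toReal_sub_of_le prob_le_one
          ENNReal.one_ne_top, ENNReal.toReal_one, hmarg j _ hTl]
        have := Real.add_one_le_exp (-(T * lam j)⁻¹)
        simp only [frechetCDF]
        linarith
      have hsum_lt : ∑ j, (T * lam j)⁻¹ < 1 := by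
        have : ∑ j, (T * lam j)⁻¹ = T⁻¹ * ∑ j, (lam j)⁻¹ := by
          rw [Finset.mul_sum]; congr 1; ext j; rw [mul_inv]
        rw [this]
        rw [inv_mul_lt_iff₀ hTpos, mul_one, hT]
        linarith
      have : 1 - q < 1 := by
        calc 1 - q ≤ ∑ j, (μ {ω | T * lam j < X j ω}).toReal := hcompl ▸ hbound
          _ ≤ ∑ j, (T * lam j)⁻¹ := Finset.sum_le_sum fun j _ => hterm j
          _ < 1 := hsum_lt
      linarith
    have : q ^ T = p := hms T hTpos lam hlam
    rw [← this]
    exact Real.rpow_pos_of_pos hqpos T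
  -- p < 1
  have hplt1 : p < 1 := by
    have hsub : {ω | ∀ j, X j ω ≤ lam j} ⊆ {ω | X j0 ω ≤ lam j0} := fun ω hω => hω j0
    have h1 : p ≤ Real.exp (-(lam j0)⁻¹) := by
      have := ENNReal.toReal_mono (measure_ne_top μ _) (measure_mono hsub)
      rwa [hmarg j0 _ (hlam j0)] at this
    have h2 : Real.exp (-(lam j0)⁻¹) < 1 := by
      rw [← Real.exp_zero]
      exact Real.exp_lt_exp.2 (by simp [hlam j0, inv_pos.2 (hlam j0)])
    linarith
  have hcpos : 0 < c := by
    rw [hcp]; simpa using Real.log_neg hppos hplt1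
  -- measurability of M
  have hMmeas : Measurable M := by
    have hMeq : M = Finset.univ.sup' hne (fun j ω => frechetCDF (X j ω) ^ lam j) := by
      ext ω; rw [Finset.sup'_apply]
    rw [hMeq]
    exact Finset.measurable_sup' hne fun j _ =>
      ((Real.continuous_rpow_const (hlam j).le).measurable).comp
        ((hXm j).inv.neg.exp)
  -- pointwise bounds
  have hMnonneg : ∀ ω, 0 ≤ M ω := by
    intro ω
    refine le_trans ?_ (Finset.le_sup' (fun j => frechetCDF (X j ω) ^ lam j)
      (Finset.mem_univ j0))
    exact Real.rpow_nonneg (Real.exp_nonneg _) _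
  have hMle1 : ∀ᵐ ω ∂μ, M ω ≤ 1 := by
    filter_upwards [hXpos] with ω hω
    refine (Finset.sup'_le_iff hne _).2 fun j _ => ?_
    refine Real.rpow_le_one (Real.exp_nonneg _) ?_ (hlam j).le
    rw [frechetCDF, ← Real.exp_zero]
    exact Real.exp_le_exp.2 (by simp [(inv_pos.2 (hω j)).le])
  have hMlt1 : ∀ᵐ ω ∂μ, M ω < 1 := by
    filter_upwards [hXpos] with ω hω
    refine (Finset.sup'_lt_iff hne).2 fun j _ => ?_
    refine Real.rpow_lt_one (Real.exp_nonneg _) ?_ (hlam j)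
    rw [frechetCDF, ← Real.exp_zero]
    exact Real.exp_lt_exp.2 (by simp [inv_pos.2 (hω j)])
  -- integrability of M
  have hMint : Integrable M μ := by
    refine (integrable_const (1 : ℝ)).mono' hMmeas.aestronglyMeasurable ?_
    filter_upwards [hMle1] with ω hω
    rw [Real.norm_of_nonneg (hMnonneg ω)]
    exact hω
  -- CDF of M
  have hcdf : ∀ u : ℝ, 0 < u → u < 1 → (μ {ω | M ω ≤ u}).toReal = u ^ c := by
    intro u hu hu1
    set t : ℝ := - Real.log u with ht
    have htpos : 0 < t := by rw [ht]; simpa using Real.log_neg hu hu1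
    have hset : μ {ω | M ω ≤ u} = μ {ω | ∀ j, X j ω ≤ t⁻¹ * lam j} := by
      apply measure_congr
      apply Filter.eventuallyEq_set.2
      filter_upwards [hXpos] with ω hω
      have hlog : Real.log u = -t := by rw [ht]; ring
      simp only [Set.mem_setOf_eq, hM]
      rw [Finset.sup'_le_iff]
      constructor
      · intro h j
        have hj := h j (Finset.mem_univ j)
        rw [frechetCDF, ← Real.exp_mul, ← Real.le_log_iff_exp_le hu] at hj
        rw [le_inv_mul_iff₀ htpos]
        have h2 : t ≤ (X j ω)⁻¹ * lam j := by
          rw [hlog] at hj; linarith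
        calc t * X j ω ≤ ((X j ω)⁻¹ * lam j) * X j ω :=
              mul_le_mul_of_nonneg_right h2 (hω j).le
          _ = lam j := by
              rw [mul_comm ((X j ω)⁻¹) (lam j), mul_assoc,
                inv_mul_cancel₀ (hω j).ne', mul_one]
      · intro h j _
        have hj := h j
        rw [le_inv_mul_iff₀ htpos] at hj
        rw [frechetCDF, ← Real.exp_mul, ← Real.le_log_iff_exp_le hu]
        have h2 : t ≤ (X j ω)⁻¹ * lam j := by
          rw [le_inv_mul_iff₀ (hω j)]
          calc X j ω * t = t * X j ω := mul_comm _ _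
            _ ≤ lam j := hj
        rw [hlog]; linarith
    rw [hset, hP t⁻¹ (inv_pos.2 htpos), inv_inv]
    have hlog : Real.log u = -t := by rw [ht]; ring
    rw [Real.rpow_def_of_pos hppos, Real.rpow_def_of_pos hu, hlog, hcp]
    congr 1
    ring
  -- tail probability for u in (0, 1)
  have htail : ∀ u : ℝ, 0 < u → u < 1 → (μ {ω | u < M ω}).toReal = 1 - u ^ c := by
    intro u hu hu1
    have hcompl : {ω | u < M ω} = {ω | M ω ≤ u}ᶜ := by ext ω; simp [not_le]
    have hmeas : MeasurableSet {ω | M ω ≤ u} := hMmeas measurableSet_Iic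
    rw [hcompl, prob_compl_eq_one_sub hmeas,
      ENNReal.toReal_sub_of_le prob_le_one ENNReal.one_ne_top, ENNReal.toReal_one,
      hcdf u hu hu1]
  -- tail probability is 0 for u ≥ 1
  have hzero : ∀ u : ℝ, 1 ≤ u → μ {ω | u < M ω} = 0 := by
    intro u hu
    have hnull : μ {ω | ¬ M ω < 1} = 0 := by
      rw [← ae_iff] at *
      exact hMlt1
    refine measure_mono_null ?_ hnull
    intro ω hω
    simp only [Set.mem_setOf_eq, not_lt] at hω ⊢
    exact le_trans hu hω.le
  -- main computation
  rw [show (∫ ω, Finset.univ.sup' ⟨⟨0, hd⟩, Finset.mem_univ _⟩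
        (fun j => frechetCDF (X j ω) ^ lam j) ∂μ) = ∫ ω, M ω ∂μ from rfl]
  rw [hMint.integral_eq_integral_meas_lt (Filter.Eventually.of_forall hMnonneg)]
  simp only [measureReal_def]
  have hsplit : Set.Ioi (0:ℝ) = Set.Ioc 0 1 ∪ Set.Ioi 1 :=
    (Set.Ioc_union_Ioi_eq_Ioi zero_le_one).symm
  set g : ℝ → ℝ := fun u => (μ {a | u < M a}).toReal with hg
  have hgIoc : Set.EqOn (fun u : ℝ => 1 - u ^ c) g (Set.Ioc 0 1) := by
    intro u hu
    rcases eq_or_lt_of_le hu.2 with h1 | h1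
    · simp only [hg, h1, hzero 1 le_rfl, Real.one_rpow, ENNReal.toReal_zero, sub_self]
    · exact (htail u hu.1 h1).symm
  have hgIoi : Set.EqOn (fun _ : ℝ => (0:ℝ)) g (Set.Ioi 1) := by
    intro u hu
    simp only [hg, hzero u (le_of_lt hu), ENNReal.toReal_zero]
  have hint1 : IntegrableOn (fun u : ℝ => 1 - u ^ c) (Set.Ioc 0 1) volume := by
    have h := ((intervalIntegrable_const (μ := volume) (a := (0:ℝ)) (b := (1:ℝ)) (c := (1:ℝ))).sub
      (intervalIntegral.intervalIntegrable_rpow' (a := (0:ℝ)) (b := (1:ℝ))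
        (by linarith : (-1:ℝ) < c))).1
    simpa using h
  have hgint1 : IntegrableOn g (Set.Ioc 0 1) volume :=
    hint1.congr_fun hgIoc measurableSet_Ioc
  have hgint2 : IntegrableOn g (Set.Ioi 1) volume :=
    (integrableOn_zero).congr_fun hgIoi measurableSet_Ioi
  rw [hsplit, setIntegral_union (Set.Ioc_disjoint_Ioi le_rfl) measurableSet_Ioi
    hgint1 hgint2]
  have hI2 : ∫ u in Set.Ioi (1:ℝ), g u = 0 := by
    rw [setIntegral_congr_fun measurableSet_Ioi fun u hu => (hgIoi hu).symm]
    simp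
  have hI1 : ∫ u in Set.Ioc (0:ℝ) 1, g u = 1 - 1 / (c + 1) := by
    rw [setIntegral_congr_fun measurableSet_Ioc fun u hu => (hgIoc hu).symm]
    rw [← intervalIntegral.integral_of_le zero_le_one]
    rw [intervalIntegral.integral_sub intervalIntegrable_const
      (intervalIntegral.intervalIntegrable_rpow' (by linarith : (-1:ℝ) < c))]
    rw [integral_rpow (Or.inl (by linarith : (-1:ℝ) < c))]
    rw [Real.one_rpow, Real.zero_rpow (by linarith : c + 1 ≠ 0)]
    simp
  rw [hI1, hI2, add_zero]
  have h1 : (1:ℝ) + c ≠ 0 := by linarith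
  have h2 : c + 1 ≠ 0 := by linarith
  rw [eq_div_iff h1]
  field_simp
  ring
end

section
/- If Y = (Y₁,...,Y_d) has a multivariate extreme value distribution with continuous marginal distribution functions F₁,...,F_d and the same copula C as a vector X with unit Fréchet margins and tail dependence function l, then for λ ∈ (0,∞)^d, E[max_{1≤j≤d} F_j(Y_j)^{λ_j}] = E[max_{1≤j≤d} F(X_j)^{λ_j}] = l(λ₁⁻¹,...,λ_d⁻¹)/(1 + l(λ₁⁻¹,...,λ_d⁻¹)), i.e., this expectation depends only on the copula. -/
open MeasureTheory Finset

private lemma measSet_le {Ω : Type*} [MeasurableSpace Ω] {d : ℕ}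
    {f : Fin d → Ω → ℝ} (hf : ∀ j, Measurable (f j)) (b : Fin d → ℝ) :
    MeasurableSet {ω | ∀ j, f j ω ≤ b j} := by
  have h : {ω | ∀ j, f j ω ≤ b j} = ⋂ j, {ω | f j ω ≤ b j} := by ext ω; simp
  rw [h]
  exact MeasurableSet.iInter fun j => measurableSet_le (hf j) measurable_const

private lemma prob_compl_toReal {Ω : Type*} [MeasurableSpace Ω] (μ : Measure Ω)
    [IsProbabilityMeasure μ] {s : Set Ω} (hs : MeasurableSet s) :
    (μ sᶜ).toReal = 1 - (μ s).toReal := by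
  rw [measure_compl hs (measure_ne_top _ _), measure_univ,
    ENNReal.toReal_sub_of_le prob_le_one ENNReal.one_ne_top, ENNReal.toReal_one]

private lemma frechet_le_iff {x s lamj : ℝ} (hx : 0 < x) (hs0 : 0 < s) (hs1 : s < 1)
    (hl : 0 < lamj) : frechetCDF x ≤ s ^ lamj⁻¹ ↔ x ≤ (-Real.log s)⁻¹ * lamj := by
  have hlogs : Real.log s < 0 := Real.log_neg hs0 hs1
  have hb : 0 < -Real.log s * lamj⁻¹ := by
    have : 0 < -Real.log s := by linarith
    positivity
  rw [frechetCDF, Real.rpow_def_of_pos hs0, Real.exp_le_exp]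
  constructor
  · intro h
    have h2 : -Real.log s * lamj⁻¹ ≤ x⁻¹ := by
      have : -(Real.log s * lamj⁻¹) ≤ x⁻¹ := by linarith
      linarith [this, (by ring : -(Real.log s * lamj⁻¹) = -Real.log s * lamj⁻¹)]
    have h3 : x ≤ (-Real.log s * lamj⁻¹)⁻¹ := ((le_inv_comm₀ hx hb).mpr h2)
    calc x ≤ (-Real.log s * lamj⁻¹)⁻¹ := h3
      _ = (-Real.log s)⁻¹ * lamj := by rw [mul_inv, inv_inv]
  · intro h
    have h3 : x ≤ (-Real.log s * lamj⁻¹)⁻¹ := by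
      rw [mul_inv, inv_inv]; exact h
    have h2 : -Real.log s * lamj⁻¹ ≤ x⁻¹ := (le_inv_comm₀ hx hb).mp h3
    nlinarith [h2]

/-- E[max_j F_j(Y_j)^{λ_j}] depends only on the copula: it equals
E[max_j F(X_j)^{λ_j}] = l(λ⁻¹)/(1+l(λ⁻¹)) for the unit-Fréchet representative X. -/
theorem stmt3
    {Ω : Type*} [MeasurableSpace Ω] (μ : Measure Ω) [IsProbabilityMeasure μ]
    {Ω' : Type*} [MeasurableSpace Ω'] (ν : Measure Ω') [IsProbabilityMeasure ν]
    {d : ℕ} (hd : 0 < d)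
    (X : Fin d → Ω → ℝ) (hXm : ∀ j, Measurable (X j))
    (hmarg : ∀ j, ∀ t : ℝ, 0 < t → (μ {ω | X j ω ≤ t}).toReal = frechetCDF t)
    (hms : ∀ t : ℝ, 0 < t → ∀ x : Fin d → ℝ, (∀ j, 0 < x j) →
      ((μ {ω | ∀ j, X j ω ≤ t * x j}).toReal) ^ t = (μ {ω | ∀ j, X j ω ≤ x j}).toReal)
    (l : (Fin d → ℝ) → ℝ)
    (hl : ∀ x : Fin d → ℝ, (∀ j, 0 ≤ x j) →
      l x = - Real.log ((μ {ω | ∀ j, 0 < x j → X j ω ≤ (x j)⁻¹}).toReal))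
    (Y : Fin d → Ω' → ℝ) (hYm : ∀ j, Measurable (Y j))
    (Fm : Fin d → ℝ → ℝ) (hFc : ∀ j, Continuous (Fm j))
    -- Fm j is the marginal distribution function of Y j
    (hYmarg : ∀ j, ∀ t : ℝ, (ν {ω | Y j ω ≤ t}).toReal = Fm j t)
    -- Y has the same copula as X: the probability integral transforms have the same law
    (hcop : ∀ u : Fin d → ℝ, (∀ j, u j ∈ Set.Icc (0 : ℝ) 1) →
      (ν {ω | ∀ j, Fm j (Y j ω) ≤ u j}).toReal
        = (μ {ω | ∀ j, frechetCDF (X j ω) ≤ u j}).toReal)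
    (lam : Fin d → ℝ) (hlam : ∀ j, 0 < lam j) :
    (∫ ω, Finset.univ.sup' ⟨⟨0, hd⟩, Finset.mem_univ _⟩
        (fun j => Fm j (Y j ω) ^ lam j) ∂ν
      = ∫ ω, Finset.univ.sup' ⟨⟨0, hd⟩, Finset.mem_univ _⟩
        (fun j => frechetCDF (X j ω) ^ lam j) ∂μ) ∧
    (∫ ω, Finset.univ.sup' ⟨⟨0, hd⟩, Finset.mem_univ _⟩
        (fun j => Fm j (Y j ω) ^ lam j) ∂ν
      = (l fun j => (lam j)⁻¹) / (1 + (l fun j => (lam j)⁻¹))) := by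
  have hne : ((⟨⟨0, hd⟩, Finset.mem_univ _⟩ : (Finset.univ : Finset (Fin d)).Nonempty))
      = ⟨⟨0, hd⟩, Finset.mem_univ _⟩ := rfl
  set j0 : Fin d := ⟨0, hd⟩ with hj0
  set c : ℝ := l (fun j => (lam j)⁻¹) with hc
  -- marginal bounds for Y
  have hF0 : ∀ j t, 0 ≤ Fm j t := fun j t => (hYmarg j t) ▸ ENNReal.toReal_nonneg
  have hF1 : ∀ j t, Fm j t ≤ 1 := by
    intro j t
    rw [← hYmarg j t]
    calc (ν {ω | Y j ω ≤ t}).toReal ≤ (ν Set.univ).toReal :=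
      ENNReal.toReal_mono (measure_ne_top _ _) (measure_mono (Set.subset_univ _))
      _ = 1 := by rw [measure_univ]; rfl
  have hfr_pos : ∀ x : ℝ, 0 < frechetCDF x := fun x => Real.exp_pos _
  have hfr_le_one : ∀ x : ℝ, 0 < x → frechetCDF x ≤ 1 := by
    intro x hx
    rw [frechetCDF, Real.exp_le_one_iff]
    simp [inv_nonneg.mpr hx.le]
  -- each X j is a.s. positive
  have hnullj : ∀ j, μ {ω | X j ω ≤ 0} = 0 := by
    intro j
    have hle : ∀ n : ℕ, (μ {ω | X j ω ≤ 0}).toReal ≤ Real.exp (-((n : ℝ) + 1)) := by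
      intro n
      have he : (0:ℝ) < ((n : ℝ) + 1)⁻¹ := by positivity
      have hm := hmarg j (((n : ℝ) + 1)⁻¹) he
      have hmono : (μ {ω | X j ω ≤ 0}).toReal ≤ (μ {ω | X j ω ≤ ((n:ℝ)+1)⁻¹}).toReal :=
        ENNReal.toReal_mono (measure_ne_top _ _)
          (measure_mono (fun ω hω => le_trans hω he.le))
      rw [hm, frechetCDF, inv_inv] at hmono
      exact hmono
    have h1 : Filter.Tendsto (fun n : ℕ => ((n : ℝ) + 1)) Filter.atTop Filter.atTop :=
      Filter.tendsto_atTop_add_const_right _ 1 tendsto_natCast_atTop_atTop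
    have hlim : Filter.Tendsto (fun n : ℕ => Real.exp (-((n : ℝ) + 1)))
        Filter.atTop (nhds 0) :=
      Real.tendsto_exp_atBot.comp (Filter.tendsto_neg_atTop_atBot.comp h1)
    have h0 : (μ {ω | X j ω ≤ 0}).toReal ≤ 0 :=
      ge_of_tendsto hlim (Filter.Eventually.of_forall hle)
    have h0' : (μ {ω | X j ω ≤ 0}).toReal = 0 := le_antisymm h0 ENNReal.toReal_nonneg
    rcases (ENNReal.toReal_eq_zero_iff _).mp h0' with h | h
    · exact h
    · exact absurd h (measure_ne_top _ _)
  have hnull : μ {ω | ¬ ∀ j, 0 < X j ω} = 0 := by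
    have hsub : {ω | ¬ ∀ j, 0 < X j ω} ⊆ ⋃ j, {ω | X j ω ≤ 0} := by
      intro ω hω
      push_neg at hω
      obtain ⟨j, hj⟩ := hω
      exact Set.mem_iUnion.mpr ⟨j, hj⟩
    exact measure_mono_null hsub (measure_iUnion_null fun j => hnullj j)
  -- G(lam) is positive
  set Gl : ℝ := (μ {ω | ∀ j, X j ω ≤ lam j}).toReal with hGl
  have hGl_le_one : Gl ≤ 1 := by
    rw [hGl]
    calc (μ {ω | ∀ j, X j ω ≤ lam j}).toReal ≤ (μ Set.univ).toReal :=
      ENNReal.toReal_mono (measure_ne_top _ _) (measure_mono (Set.subset_univ _))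
      _ = 1 := by rw [measure_univ]; rfl
  have hGl_pos : 0 < Gl := by
    set S : ℝ := ∑ j, (lam j)⁻¹ with hS
    have hS0 : 0 ≤ S := Finset.sum_nonneg fun j _ => (inv_nonneg.mpr (hlam j).le)
    set T : ℝ := S + 1 with hT
    have hT0 : 0 < T := by positivity
    have hmsT := hms T hT0 lam hlam
    have hE : MeasurableSet {ω | ∀ j, X j ω ≤ T * lam j} := measSet_le hXm _
    have hAc : ∀ j, (μ {ω | X j ω ≤ T * lam j}ᶜ).toReal ≤ (T * lam j)⁻¹ := by
      intro j
      have hAm : MeasurableSet {ω | X j ω ≤ T * lam j} :=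
        measurableSet_le (hXm j) measurable_const
      have hpos : (0:ℝ) < T * lam j := by have := hlam j; positivity
      rw [prob_compl_toReal μ hAm, hmarg j _ hpos, frechetCDF]
      have := Real.add_one_le_exp (-(T * lam j)⁻¹)
      linarith
    have hcompl : (μ {ω | ∀ j, X j ω ≤ T * lam j}ᶜ).toReal ≤ ∑ j, (T * lam j)⁻¹ := by
      have hsub : {ω | ∀ j, X j ω ≤ T * lam j}ᶜ ⊆ ⋃ j, {ω | X j ω ≤ T * lam j}ᶜ := by
        intro ω hω
        simp only [Set.mem_compl_iff, Set.mem_setOf_eq, not_forall] at hω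
        obtain ⟨j, hj⟩ := hω
        exact Set.mem_iUnion.mpr ⟨j, hj⟩
      calc (μ {ω | ∀ j, X j ω ≤ T * lam j}ᶜ).toReal
          ≤ (∑ j, μ {ω | X j ω ≤ T * lam j}ᶜ).toReal := by
            refine ENNReal.toReal_mono ?_ ?_
            · exact (ENNReal.sum_lt_top.mpr fun j _ => measure_lt_top _ _).ne
            · refine le_trans (measure_mono hsub) ?_
              refine le_trans (measure_iUnion_le _) ?_
              rw [tsum_fintype]
        _ = ∑ j, (μ {ω | X j ω ≤ T * lam j}ᶜ).toReal :=
            ENNReal.toReal_sum fun j _ => measure_ne_top _ _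
        _ ≤ ∑ j, (T * lam j)⁻¹ := Finset.sum_le_sum fun j _ => hAc j
    have hsum : ∑ j, (T * lam j)⁻¹ < 1 := by
      have heq : ∑ j, (T * lam j)⁻¹ = T⁻¹ * S := by
        rw [hS, Finset.mul_sum]
        exact Finset.sum_congr rfl fun j _ => by rw [mul_inv]
      rw [heq]
      rw [inv_mul_eq_div, div_lt_one hT0]
      linarith
    have hEpos : 0 < (μ {ω | ∀ j, X j ω ≤ T * lam j}).toReal := by
      have := prob_compl_toReal μ hE
      linarith [hcompl, hsum, this]
    rw [hGl, ← hmsT]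
    exact Real.rpow_pos_of_pos hEpos T
  -- c = - log Gl
  have hc_eq : c = - Real.log Gl := by
    rw [hc, hl _ (fun j => inv_nonneg.mpr (hlam j).le), hGl]
    have hsets : {ω | ∀ j, 0 < (lam j)⁻¹ → X j ω ≤ ((lam j)⁻¹)⁻¹}
        = {ω | ∀ j, X j ω ≤ lam j} := by
      ext ω
      simp only [Set.mem_setOf_eq, inv_inv]
      exact forall_congr' fun j => by simp [inv_pos.mpr (hlam j)]
    rw [show {ω | ∀ (j : Fin d), 0 < (lam j)⁻¹ → X j ω ≤ ((lam j)⁻¹)⁻¹}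
        = {ω | ∀ j, X j ω ≤ lam j} from hsets]
  have hc0 : 0 ≤ c := by
    rw [hc_eq]
    have := Real.log_nonpos hGl_pos.le hGl_le_one
    linarith
  have hGl_exp : Real.exp (-c) = Gl := by
    rw [hc_eq, neg_neg, Real.exp_log hGl_pos]
  -- key distribution computation for X
  have hXdist : ∀ s : ℝ, s ∈ Set.Ioo (0:ℝ) 1 →
      (μ {ω | ∀ j, frechetCDF (X j ω) ≤ s ^ (lam j)⁻¹}).toReal = s ^ c := by
    intro s hs
    obtain ⟨hs0, hs1⟩ := hs
    have hlogs : Real.log s < 0 := Real.log_neg hs0 hs1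
    set t : ℝ := (-Real.log s)⁻¹ with htdef
    have ht0 : 0 < t := by rw [htdef]; exact inv_pos.mpr (by linarith)
    have hset : {ω | ∀ j, frechetCDF (X j ω) ≤ s ^ (lam j)⁻¹}
        = {ω | ∀ j, X j ω ≤ t * lam j} ∩ {ω | ∀ j, 0 < X j ω} := by
      ext ω
      simp only [Set.mem_setOf_eq, Set.mem_inter_iff]
      constructor
      · intro h
        have hpos : ∀ j, 0 < X j ω := by
          intro j
          by_contra hx
          push_neg at hx
          have h1 : (1:ℝ) ≤ frechetCDF (X j ω) := by
            rw [frechetCDF, show (1:ℝ) = Real.exp 0 from (Real.exp_zero).symm,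
              Real.exp_le_exp]
            simp [inv_nonpos.mpr hx]
          have h2 : s ^ (lam j)⁻¹ < 1 :=
            Real.rpow_lt_one hs0.le hs1 (inv_pos.mpr (hlam j))
          linarith [h j]
        exact ⟨fun j => (frechet_le_iff (hpos j) hs0 hs1 (hlam j)).mp (h j), hpos⟩
      · rintro ⟨h, hpos⟩ j
        exact (frechet_le_iff (hpos j) hs0 hs1 (hlam j)).mpr (h j)
    have hmeas_eq : μ {ω | ∀ j, frechetCDF (X j ω) ≤ s ^ (lam j)⁻¹}
        = μ {ω | ∀ j, X j ω ≤ t * lam j} := by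
      rw [hset]
      apply le_antisymm (measure_mono Set.inter_subset_left)
      calc μ {ω | ∀ j, X j ω ≤ t * lam j}
          ≤ μ (({ω | ∀ j, X j ω ≤ t * lam j} ∩ {ω | ∀ j, 0 < X j ω})
              ∪ {ω | ¬ ∀ j, 0 < X j ω}) := by
            apply measure_mono
            intro ω hω
            by_cases hp : ∀ j, 0 < X j ω
            · exact Or.inl ⟨hω, hp⟩
            · exact Or.inr hp
        _ ≤ μ ({ω | ∀ j, X j ω ≤ t * lam j} ∩ {ω | ∀ j, 0 < X j ω})
              + μ {ω | ¬ ∀ j, 0 < X j ω} := measure_union_le _ _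
        _ = μ ({ω | ∀ j, X j ω ≤ t * lam j} ∩ {ω | ∀ j, 0 < X j ω}) := by
            rw [hnull, add_zero]
    rw [hmeas_eq]
    -- use max-stability
    have hmsT := hms t ht0 lam hlam
    have ha0 : 0 ≤ (μ {ω | ∀ j, X j ω ≤ t * lam j}).toReal := ENNReal.toReal_nonneg
    have : (μ {ω | ∀ j, X j ω ≤ t * lam j}).toReal
        = ((μ {ω | ∀ j, X j ω ≤ t * lam j}).toReal ^ t) ^ t⁻¹ :=
      (Real.rpow_rpow_inv ha0 ht0.ne').symm
    rw [this, hmsT, ← hGl]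
    rw [Real.rpow_def_of_pos hGl_pos, htdef, inv_inv, Real.rpow_def_of_pos hs0]
    congr 1
    rw [hc_eq]
    ring
  -- the sets {sup' ≤ s} as intersections
  have hYset : ∀ s : ℝ, 0 < s → s < 1 → ∀ ω,
      ((Finset.univ.sup' ⟨j0, Finset.mem_univ _⟩ (fun j => Fm j (Y j ω) ^ lam j) ≤ s)
        ↔ ∀ j, Fm j (Y j ω) ≤ s ^ (lam j)⁻¹) := by
    intro s hs0 hs1 ω
    refine (Finset.sup'_le_iff _ _).trans ?_
    constructor
    · intro h j
      exact (Real.le_rpow_inv_iff_of_pos (hF0 j _) hs0.le (hlam j)).mpr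
        (h j (Finset.mem_univ j))
    · intro h j _
      exact (Real.le_rpow_inv_iff_of_pos (hF0 j _) hs0.le (hlam j)).mp (h j)
  have hXset : ∀ s : ℝ, 0 < s → s < 1 → ∀ ω,
      ((Finset.univ.sup' ⟨j0, Finset.mem_univ _⟩ (fun j => frechetCDF (X j ω) ^ lam j) ≤ s)
        ↔ ∀ j, frechetCDF (X j ω) ≤ s ^ (lam j)⁻¹) := by
    intro s hs0 hs1 ω
    refine (Finset.sup'_le_iff _ _).trans ?_
    constructor
    · intro h j
      exact (Real.le_rpow_inv_iff_of_pos (hfr_pos _).le hs0.le (hlam j)).mpr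
        (h j (Finset.mem_univ j))
    · intro h j _
      exact (Real.le_rpow_inv_iff_of_pos (hfr_pos _).le hs0.le (hlam j)).mp (h j)
  -- measurability of the sup functions
  have hMYm : Measurable (fun ω => Finset.univ.sup' ⟨j0, Finset.mem_univ _⟩
      (fun j => Fm j (Y j ω) ^ lam j)) := by
    have : Measurable ((Finset.univ : Finset (Fin d)).sup' ⟨j0, Finset.mem_univ _⟩
        (fun j ω => Fm j (Y j ω) ^ lam j)) :=
      Finset.measurable_sup' _ fun j _ =>
        (Real.continuous_rpow_const (hlam j).le).measurable.comp
          (((hFc j).measurable).comp (hYm j))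
    convert this using 1
    funext ω
    exact (Finset.sup'_apply (C := fun _ : Ω' => ℝ) _ (fun j ω => Fm j (Y j ω) ^ lam j) ω).symm
  have hMXm : Measurable (fun ω => Finset.univ.sup' ⟨j0, Finset.mem_univ _⟩
      (fun j => frechetCDF (X j ω) ^ lam j)) := by
    have : Measurable ((Finset.univ : Finset (Fin d)).sup' ⟨j0, Finset.mem_univ _⟩
        (fun j ω => frechetCDF (X j ω) ^ lam j)) := by
      refine Finset.measurable_sup' _ fun j _ => ?_
      have h1 : Measurable (fun ω => frechetCDF (X j ω)) :=
        Real.measurable_exp.comp ((hXm j).inv.neg)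
      exact (Real.continuous_rpow_const (hlam j).le).measurable.comp h1
    convert this using 1
    funext ω
    exact (Finset.sup'_apply (C := fun _ : Ω => ℝ) _ (fun j ω => frechetCDF (X j ω) ^ lam j) ω).symm
  -- bounds
  have hMY0 : ∀ ω, 0 ≤ Finset.univ.sup' ⟨j0, Finset.mem_univ _⟩
      (fun j => Fm j (Y j ω) ^ lam j) := by
    intro ω
    exact le_trans (Real.rpow_nonneg (hF0 j0 _) _) (Finset.le_sup' (fun j => Fm j (Y j ω) ^ lam j) (Finset.mem_univ j0))
  have hMY1 : ∀ ω, Finset.univ.sup' ⟨j0, Finset.mem_univ _⟩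
      (fun j => Fm j (Y j ω) ^ lam j) ≤ 1 := by
    intro ω
    exact Finset.sup'_le _ _ fun j _ => Real.rpow_le_one (hF0 j _) (hF1 j _) (hlam j).le
  have hMX0 : ∀ ω, 0 ≤ Finset.univ.sup' ⟨j0, Finset.mem_univ _⟩
      (fun j => frechetCDF (X j ω) ^ lam j) := by
    intro ω
    exact le_trans (Real.rpow_nonneg (hfr_pos _).le _)
      (Finset.le_sup' (fun j => frechetCDF (X j ω) ^ lam j) (Finset.mem_univ j0))
  have hMX1 : ∀ ω, (∀ j, 0 < X j ω) → Finset.univ.sup' ⟨j0, Finset.mem_univ _⟩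
      (fun j => frechetCDF (X j ω) ^ lam j) ≤ 1 := by
    intro ω hω
    exact Finset.sup'_le _ _ fun j _ =>
      Real.rpow_le_one (hfr_pos _).le (hfr_le_one _ (hω j)) (hlam j).le
  have haeX : ∀ᵐ ω ∂μ, ∀ j, 0 < X j ω := by
    rw [MeasureTheory.ae_iff]
    exact hnull
  -- integrability
  have hintY : Integrable (fun ω => Finset.univ.sup' ⟨j0, Finset.mem_univ _⟩
      (fun j => Fm j (Y j ω) ^ lam j)) ν := by
    refine Integrable.mono' (integrable_const 1) hMYm.aestronglyMeasurable ?_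
    filter_upwards with ω
    rw [Real.norm_eq_abs, abs_of_nonneg (hMY0 ω)]
    exact hMY1 ω
  have hintX : Integrable (fun ω => Finset.univ.sup' ⟨j0, Finset.mem_univ _⟩
      (fun j => frechetCDF (X j ω) ^ lam j)) μ := by
    refine Integrable.mono' (integrable_const 1) hMXm.aestronglyMeasurable ?_
    filter_upwards [haeX] with ω hω
    rw [Real.norm_eq_abs, abs_of_nonneg (hMX0 ω)]
    exact hMX1 ω hω
  -- layer cake
  have hlcY := Integrable.integral_eq_integral_meas_lt hintY
    (Filter.Eventually.of_forall hMY0)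
  have hlcX := Integrable.integral_eq_integral_meas_lt hintX
    (Filter.Eventually.of_forall hMX0)
  -- tail probabilities
  have htailY : ∀ s : ℝ, 0 < s →
      (ν {ω | s < Finset.univ.sup' ⟨j0, Finset.mem_univ _⟩
        (fun j => Fm j (Y j ω) ^ lam j)}).toReal
      = if s < 1 then 1 - s ^ c else 0 := by
    intro s hs0
    by_cases hs1 : s < 1
    · rw [if_pos hs1]
      have hev : {ω | s < Finset.univ.sup' ⟨j0, Finset.mem_univ _⟩
          (fun j => Fm j (Y j ω) ^ lam j)}
          = {ω | ∀ j, Fm j (Y j ω) ≤ s ^ (lam j)⁻¹}ᶜ := by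
        ext ω
        simp only [Set.mem_setOf_eq, Set.mem_compl_iff, ← hYset s hs0 hs1 ω]
        exact lt_iff_not_ge
      rw [hev, prob_compl_toReal ν (measSet_le (f := fun j ω => Fm j (Y j ω)) (fun j => ((hFc j).measurable).comp (hYm j)) _)]
      have hu : ∀ j, s ^ (lam j)⁻¹ ∈ Set.Icc (0:ℝ) 1 := fun j =>
        ⟨Real.rpow_nonneg hs0.le _,
          Real.rpow_le_one hs0.le hs1.le (inv_nonneg.mpr (hlam j).le)⟩
      rw [hcop _ hu, hXdist s ⟨hs0, hs1⟩]
    · rw [if_neg hs1]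
      push_neg at hs1
      have : {ω | s < Finset.univ.sup' ⟨j0, Finset.mem_univ _⟩
          (fun j => Fm j (Y j ω) ^ lam j)} = ∅ := by
        ext ω
        simp only [Set.mem_setOf_eq, Set.mem_empty_iff_false, iff_false, not_lt]
        exact le_trans (hMY1 ω) hs1
      rw [this, measure_empty]
      rfl
  have htailX : ∀ s : ℝ, 0 < s →
      (μ {ω | s < Finset.univ.sup' ⟨j0, Finset.mem_univ _⟩
        (fun j => frechetCDF (X j ω) ^ lam j)}).toReal
      = if s < 1 then 1 - s ^ c else 0 := by
    intro s hs0
    by_cases hs1 : s < 1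
    · rw [if_pos hs1]
      have hev : {ω | s < Finset.univ.sup' ⟨j0, Finset.mem_univ _⟩
          (fun j => frechetCDF (X j ω) ^ lam j)}
          = {ω | ∀ j, frechetCDF (X j ω) ≤ s ^ (lam j)⁻¹}ᶜ := by
        ext ω
        simp only [Set.mem_setOf_eq, Set.mem_compl_iff, ← hXset s hs0 hs1 ω]
        exact lt_iff_not_ge
      have hmeasX : ∀ j, Measurable (fun ω => frechetCDF (X j ω)) := fun j =>
        Real.measurable_exp.comp ((hXm j).inv.neg)
      rw [hev, prob_compl_toReal μ (measSet_le hmeasX _), hXdist s ⟨hs0, hs1⟩]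
    · rw [if_neg hs1]
      push_neg at hs1
      have hsub : {ω | s < Finset.univ.sup' ⟨j0, Finset.mem_univ _⟩
          (fun j => frechetCDF (X j ω) ^ lam j)} ⊆ {ω | ¬ ∀ j, 0 < X j ω} := by
        intro ω hω
        simp only [Set.mem_setOf_eq] at hω ⊢
        intro hp
        exact absurd hω (not_lt.mpr (le_trans (hMX1 ω hp) hs1))
      rw [measure_mono_null hsub hnull]
      rfl
  constructor
  · rw [hlcY, hlcX]
    apply setIntegral_congr_fun measurableSet_Ioi
    intro s hs
    simp only [measureReal_def, htailY s hs, htailX s hs]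
  · rw [hlcY]
    simp only [measureReal_def]
    have heq : Set.EqOn
        (fun s => (ν {ω | s < Finset.univ.sup' ⟨j0, Finset.mem_univ _⟩
          (fun j => Fm j (Y j ω) ^ lam j)}).toReal)
        (Set.indicator (Set.Ioo (0:ℝ) 1) (fun s => 1 - s ^ c)) (Set.Ioi 0) := by
      intro s hs
      have hs0 : 0 < s := hs
      by_cases hs1 : s < 1
      · simp only [htailY s hs0]
        rw [if_pos hs1, Set.indicator_of_mem (Set.mem_Ioo.mpr ⟨hs0, hs1⟩)]
      · simp only [htailY s hs0]
        rw [if_neg hs1, Set.indicator_of_notMem (fun h => hs1 h.2)]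
    rw [setIntegral_congr_fun measurableSet_Ioi heq,
      setIntegral_indicator measurableSet_Ioo,
      Set.inter_eq_self_of_subset_right Set.Ioo_subset_Ioi_self,
      ← integral_Ioc_eq_integral_Ioo,
      ← intervalIntegral.integral_of_le (zero_le_one (α := ℝ))]
    have hii : IntervalIntegrable (fun x : ℝ => x ^ c) volume 0 1 :=
      intervalIntegral.intervalIntegrable_rpow (Or.inl hc0)
    rw [intervalIntegral.integral_sub intervalIntegrable_const hii,
      intervalIntegral.integral_const,
      integral_rpow (Or.inl (by linarith : (-1:ℝ) < c))]
    rw [Real.one_rpow, Real.zero_rpow (by positivity : c + 1 ≠ 0)]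
    have h1c : (1:ℝ) + c ≠ 0 := by positivity
    have hc1 : c + 1 ≠ 0 := by positivity
    rw [smul_eq_mul]
    field_simp
    ring
end

section
/- Let X have MEV distribution with unit Fréchet margins F and tail dependence function l, let I = {I₁,...,I_p} be a partition of {1,...,d}, and λ ∈ (0,∞)^p. Define M(I_j) = max_{i∈I_j} X_i, the max-min coefficient R(X,λ,I) = E[max_j F(M(I_j))^{λ_j} − min_j F(M(I_j))^{λ_j}], and for ∅≠T⊆{1,...,p}, e(T) = l(Σ_{j∈T} λ_j⁻¹ δ₁(I_j),...,Σ_{j∈T} λ_j⁻¹ δ_d(I_j)) / (1 + l(...)), where δ_i(I_j)=1 if i∈I_j and 0 otherwise. Then R(X,λ,I) = e({1,...,p}) − Σ_{∅≠T⊆{1,...,p}} (−1)^{|T|+1} e(T). -/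
open MeasureTheory Finset

section helpers

lemma measurable_finset_sup' {Ω ι : Type*} [MeasurableSpace Ω] (T : Finset ι) (hT : T.Nonempty)
    (f : ι → Ω → ℝ) (hf : ∀ j, Measurable (f j)) :
    Measurable (fun ω => T.sup' hT (fun j => f j ω)) := by
  induction hT using Finset.Nonempty.cons_induction with
  | singleton x => simpa using hf x
  | cons x s hxs hsne ih =>
      simp only [Finset.sup'_cons (H := hsne)]
      exact (hf x).sup ih

lemma measurable_finset_inf' {Ω ι : Type*} [MeasurableSpace Ω] (T : Finset ι) (hT : T.Nonempty)
    (f : ι → Ω → ℝ) (hf : ∀ j, Measurable (f j)) :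
    Measurable (fun ω => T.inf' hT (fun j => f j ω)) := by
  induction hT using Finset.Nonempty.cons_induction with
  | singleton x => simpa using hf x
  | cons x s hxs hsne ih =>
      simp only [Finset.inf'_cons (H := hsne)]
      exact (hf x).inf ih

-- null sets
lemma null_nonpos {Ω : Type*} [MeasurableSpace Ω] (μ : Measure Ω) [IsProbabilityMeasure μ]
    (Y : Ω → ℝ) (hY : Measurable Y)
    (hmargY : ∀ t : ℝ, 0 < t → (μ {ω | Y ω ≤ t}).toReal = Real.exp (-t⁻¹)) :
    μ {ω | Y ω ≤ 0} = 0 := by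
  have key : ∀ n : ℕ, μ {ω | Y ω ≤ 0} ≤ ENNReal.ofReal (Real.exp (-(n+1 : ℝ))) := by
    intro n
    have h1 : (0:ℝ) < ((n:ℝ)+1)⁻¹ := by positivity
    have h2 := hmargY ((n:ℝ)+1)⁻¹ h1
    have hfin : μ {ω | Y ω ≤ ((n:ℝ)+1)⁻¹} ≠ ⊤ := measure_ne_top μ _
    have h3 : μ {ω | Y ω ≤ ((n:ℝ)+1)⁻¹} = ENNReal.ofReal (Real.exp (-(n+1 : ℝ))) := by
      rw [← ENNReal.ofReal_toReal hfin, h2, inv_inv]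
    rw [← h3]
    exact measure_mono (fun ω hω => le_trans hω h1.le)
  have htend : Filter.Tendsto (fun n : ℕ => ENNReal.ofReal (Real.exp (-(n+1 : ℝ))))
      Filter.atTop (nhds 0) := by
    rw [show (0 : ENNReal) = ENNReal.ofReal 0 by simp]
    apply ENNReal.tendsto_ofReal
    have : Filter.Tendsto (fun n : ℕ => -((n:ℝ)+1)) Filter.atTop Filter.atBot := by
      apply Filter.tendsto_neg_atBot_iff.mpr
      exact Filter.tendsto_atTop_add_const_right _ 1 tendsto_natCast_atTop_atTop
    exact Real.tendsto_exp_atBot.comp this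
  exact le_antisymm (ge_of_tendsto htend (Filter.Eventually.of_forall key)) zero_le

lemma homog_subset {Ω : Type*} [MeasurableSpace Ω] (μ : Measure Ω) [IsProbabilityMeasure μ]
    {d : ℕ} (X : Fin d → Ω → ℝ)
    (hms : ∀ t : ℝ, 0 < t → ∀ x : Fin d → ℝ, (∀ j, 0 < x j) →
      ((μ {ω | ∀ j, X j ω ≤ t * x j}).toReal) ^ t = (μ {ω | ∀ j, X j ω ≤ x j}).toReal)
    (v : Fin d → ℝ) (hv : ∀ i, 0 ≤ v i) (t : ℝ) (ht : 0 < t) :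
    (μ {ω | ∀ i, v i ≠ 0 → X i ω ≤ t * (v i)⁻¹}).toReal ^ t
      = (μ {ω | ∀ i, v i ≠ 0 → X i ω ≤ (v i)⁻¹}).toReal := by
  set x : ℕ → Fin d → ℝ := fun n i => if v i = 0 then (n+1 : ℝ) else (v i)⁻¹ with hx
  have hxpos : ∀ n i, 0 < x n i := by
    intro n i
    by_cases h : v i = 0 <;> simp [hx, h]
    · positivity
    · exact lt_of_le_of_ne (hv i) (Ne.symm h)
  set A : ℝ → ℕ → Set Ω := fun r n => {ω | ∀ i, X i ω ≤ r * x n i} with hA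
  have hmono : ∀ r : ℝ, 0 < r → Monotone (A r) := by
    intro r hr n m hnm ω hω i
    refine le_trans (hω i) (mul_le_mul_of_nonneg_left ?_ hr.le)
    by_cases h : v i = 0 <;> simp [hx, h]
    exact_mod_cast hnm
  have hunion : ∀ r : ℝ, 0 < r →
      (⋃ n, A r n) = {ω | ∀ i, v i ≠ 0 → X i ω ≤ r * (v i)⁻¹} := by
    intro r hr
    ext ω
    simp only [Set.mem_iUnion, Set.mem_setOf_eq]
    constructor
    · rintro ⟨n, hn⟩ i hi
      have := hn i
      simpa [hx, hi] using this
    · intro h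
      obtain ⟨n, hn⟩ := exists_nat_ge (∑ i, |X i ω| / r)
      refine ⟨n, fun i => ?_⟩
      by_cases hvi : v i = 0
      · simp only [hx, hvi, if_true]
        have h1 : X i ω / r ≤ |X i ω| / r := by
          gcongr
          exact le_abs_self _
        have h2 : |X i ω| / r ≤ ∑ k, |X k ω| / r :=
          Finset.single_le_sum (f := fun k => |X k ω| / r)
            (fun k _ => by positivity) (Finset.mem_univ i)
        have : X i ω / r ≤ (n : ℝ) + 1 := by linarith
        calc X i ω = r * (X i ω / r) := by field_simp
          _ ≤ r * ((n:ℝ)+1) := mul_le_mul_of_nonneg_left this hr.le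
      · simpa [hx, hvi] using h i hvi
  have htend : ∀ r : ℝ, 0 < r → Filter.Tendsto (fun n => (μ (A r n)).toReal)
      Filter.atTop (nhds ((μ {ω | ∀ i, v i ≠ 0 → X i ω ≤ r * (v i)⁻¹}).toReal)) := by
    intro r hr
    have h1 : Filter.Tendsto (fun n => μ (A r n)) Filter.atTop (nhds (μ (⋃ n, A r n))) :=
      tendsto_measure_iUnion_atTop (hmono r hr)
    rw [hunion r hr] at h1
    exact (ENNReal.tendsto_toReal (measure_ne_top μ _)).comp h1
  have heq : ∀ n, ((μ (A t n)).toReal) ^ t = (μ (A 1 n)).toReal := by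
    intro n
    have h2 := hms t ht (x n) (hxpos n)
    have : A 1 n = {ω | ∀ i, X i ω ≤ x n i} := by
      ext ω; simp [hA]
    rw [this]
    exact h2
  have h3 : Filter.Tendsto (fun n => ((μ (A t n)).toReal) ^ t) Filter.atTop
      (nhds (((μ {ω | ∀ i, v i ≠ 0 → X i ω ≤ t * (v i)⁻¹}).toReal) ^ t)) := by
    exact ((Real.continuousAt_rpow_const _ t (Or.inr ht.le)).tendsto).comp (htend t ht)
  have h4 := htend 1 one_pos
  simp only [heq] at h3
  simp only [one_mul] at h4
  exact tendsto_nhds_unique h3 h4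

lemma pos_event {Ω : Type*} [MeasurableSpace Ω] (μ : Measure Ω) [IsProbabilityMeasure μ]
    {d : ℕ} (X : Fin d → Ω → ℝ) (hXm : ∀ j, Measurable (X j))
    (hmarg : ∀ j, ∀ t : ℝ, 0 < t → (μ {ω | X j ω ≤ t}).toReal = Real.exp (-t⁻¹))
    (hms : ∀ t : ℝ, 0 < t → ∀ x : Fin d → ℝ, (∀ j, 0 < x j) →
      ((μ {ω | ∀ j, X j ω ≤ t * x j}).toReal) ^ t = (μ {ω | ∀ j, X j ω ≤ x j}).toReal)
    (v : Fin d → ℝ) (hv : ∀ i, 0 ≤ v i) :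
    0 < (μ {ω | ∀ i, v i ≠ 0 → X i ω ≤ (v i)⁻¹}).toReal := by
  set t₀ : ℝ := (∑ i, v i) + 1 with ht₀
  have hsum : 0 ≤ ∑ i, v i := Finset.sum_nonneg (fun i _ => hv i)
  have ht₀pos : 0 < t₀ := by positivity
  have hhom := homog_subset μ X hms v hv t₀ ht₀pos
  rw [← hhom]
  apply Real.rpow_pos_of_pos
  -- show 0 < (μ E(t₀)).toReal
  set E : Set Ω := {ω | ∀ i, v i ≠ 0 → X i ω ≤ t₀ * (v i)⁻¹} with hE
  set B : Fin d → Set Ω := fun i => if v i = 0 then ∅ else {ω | t₀ * (v i)⁻¹ < X i ω} with hB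
  have hcompl : Eᶜ ⊆ ⋃ i, B i := by
    intro ω hω
    simp only [hE, Set.mem_compl_iff, Set.mem_setOf_eq, not_forall] at hω
    obtain ⟨i, hvi, hXi⟩ := hω
    refine Set.mem_iUnion.mpr ⟨i, ?_⟩
    simp [hB, hvi, lt_of_not_ge hXi]
  have hBle : ∀ i, μ (B i) ≤ ENNReal.ofReal (v i / t₀) := by
    intro i
    by_cases hvi : v i = 0
    · simp [hB, hvi]
    · have hvpos : 0 < v i := lt_of_le_of_ne (hv i) (Ne.symm hvi)
      have hc : 0 < t₀ * (v i)⁻¹ := by positivity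
      have hle : μ {ω | X i ω ≤ t₀ * (v i)⁻¹} = ENNReal.ofReal (Real.exp (-(v i / t₀))) := by
        rw [← ENNReal.ofReal_toReal (measure_ne_top μ _), hmarg i _ hc]
        congr 2
        rw [mul_inv, inv_inv]
        ring
      have hBi : B i = {ω | X i ω ≤ t₀ * (v i)⁻¹}ᶜ := by
        simp only [hB, if_neg hvi]
        ext ω; simp [not_le]
      rw [hBi, measure_compl (measurableSet_le (hXm i) measurable_const) (measure_ne_top μ _),
        measure_univ, hle]
      rw [tsub_le_iff_right, ← ENNReal.ofReal_add (div_nonneg (hv i) ht₀pos.le) (Real.exp_nonneg _),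
        ← ENNReal.ofReal_one]
      apply ENNReal.ofReal_le_ofReal
      have := Real.add_one_le_exp (-(v i / t₀))
      linarith
  have hEc : μ Eᶜ ≤ ENNReal.ofReal ((∑ i, v i) / t₀) := by
    calc μ Eᶜ ≤ ∑ i, μ (B i) := le_trans (measure_mono hcompl) (measure_iUnion_fintype_le _ _)
      _ ≤ ∑ i, ENNReal.ofReal (v i / t₀) := Finset.sum_le_sum (fun i _ => hBle i)
      _ = ENNReal.ofReal (∑ i, v i / t₀) :=
          (ENNReal.ofReal_sum_of_nonneg (fun i _ => div_nonneg (hv i) ht₀pos.le)).symm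
      _ = ENNReal.ofReal ((∑ i, v i) / t₀) := by rw [Finset.sum_div]
  have hq : (∑ i, v i) / t₀ < 1 := by
    rw [div_lt_one ht₀pos]; simp [ht₀]
  have hEpos : 0 < μ E := by
    by_contra h
    push_neg at h
    have hE0 : μ E = 0 := le_antisymm (by simpa using h) zero_le
    have h1 : (1 : ENNReal) = μ Set.univ := measure_univ.symm
    have h2 : (Set.univ : Set Ω) ⊆ E ∪ Eᶜ := by simp
    have h3 : (1 : ENNReal) ≤ μ E + μ Eᶜ :=
      h1.le.trans (le_trans (measure_mono h2) (measure_union_le _ _))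
    rw [hE0, zero_add] at h3
    have h4 : (1:ENNReal) ≤ ENNReal.ofReal ((∑ i, v i) / t₀) := h3.trans hEc
    rw [← ENNReal.ofReal_one] at h4
    have := (ENNReal.ofReal_le_ofReal_iff (div_nonneg hsum ht₀pos.le)).mp h4
    linarith
  exact ENNReal.toReal_pos hEpos.ne' (measure_ne_top μ _)


lemma sup'_const_sup {ι : Type*} (c : ℝ) (a : ι → ℝ) (U : Finset ι) (hU : U.Nonempty) :
    U.sup' hU (fun j => c ⊔ a j) = c ⊔ U.sup' hU a := by
  induction hU using Finset.Nonempty.cons_induction with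
  | singleton y => simp
  | cons y U hyU hUne ih =>
      rw [Finset.sup'_cons hUne, Finset.sup'_cons hUne, ih, sup_sup_sup_comm, sup_idem]

lemma incl_excl_min {ι : Type*} [DecidableEq ι] (s : Finset ι) (hs : s.Nonempty) :
    ∀ (a : ι → ℝ),
    s.inf' hs a = ∑ T ∈ s.powerset,
      (if h : T.Nonempty then (-1 : ℝ) ^ (T.card + 1) * T.sup' h a else 0) := by
  induction hs using Finset.Nonempty.cons_induction with
  | singleton x =>
      intro a
      have h1 : ({x} : Finset ι).powerset = {∅, {x}} := rfl
      rw [Finset.inf'_singleton, h1]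
      rw [Finset.sum_insert (by simp [Ne.symm (Finset.singleton_ne_empty x)])]
      simp [Ne.symm (Finset.singleton_ne_empty x)]
  | cons x s hxs hsne ih =>
      intro a
      simp only [Finset.cons_eq_insert]
      rw [Finset.sum_powerset_insert hxs]
      have key2 : ∑ T ∈ s.powerset,
          (if h : T.Nonempty then (-1 : ℝ) ^ (T.card + 1) * T.sup' h (fun j => a x ⊔ a j) else 0)
          = s.inf' hsne (fun j => a x ⊔ a j) := (ih (fun j => a x ⊔ a j)).symm
      have step : ∀ T ∈ s.powerset,
          (if h : (insert x T).Nonempty then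
              (-1 : ℝ) ^ ((insert x T).card + 1) * (insert x T).sup' h a else 0)
          = (if T = ∅ then a x else 0)
            - (if h : T.Nonempty then (-1 : ℝ) ^ (T.card + 1) * T.sup' h (fun j => a x ⊔ a j) else 0) := by
        intro T hT
        have hxT : x ∉ T := fun hx => hxs (Finset.mem_powerset.mp hT hx)
        rcases T.eq_empty_or_nonempty with rfl | hTne
        · simp
        · have h1 : (insert x T).Nonempty := ⟨x, Finset.mem_insert_self _ _⟩
          rw [dif_pos h1, dif_pos hTne, if_neg (Finset.nonempty_iff_ne_empty.mp hTne)]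
          have hcard : (insert x T).card = T.card + 1 := Finset.card_insert_of_notMem hxT
          have hsup : (insert x T).sup' h1 a = a x ⊔ T.sup' hTne a := by
            rw [Finset.sup'_insert]
          have hsup2 : T.sup' hTne (fun j => a x ⊔ a j) = a x ⊔ T.sup' hTne a :=
            sup'_const_sup _ _ _ _
          rw [hcard, hsup, hsup2]
          ring
      rw [Finset.sum_congr rfl step, Finset.sum_sub_distrib, key2,
        Finset.sum_ite_eq' s.powerset (∅ : Finset ι) (fun _ => a x)]
      rw [if_pos (Finset.empty_mem_powerset s), ← ih a]
      rw [← Finset.inf'_sup_distrib_left hsne, Finset.inf'_insert hsne]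
      have := min_add_max (a x) (s.inf' hsne a)
      linarith

end helpers

section keyexp
variable {Ω : Type*} [MeasurableSpace Ω] (μ : Measure Ω) [IsProbabilityMeasure μ]
  {d p : ℕ} (X : Fin d → Ω → ℝ)

set_option maxHeartbeats 1000000 in
lemma key_exp (hXm : ∀ j, Measurable (X j))
    (hmarg : ∀ j, ∀ t : ℝ, 0 < t → (μ {ω | X j ω ≤ t}).toReal = Real.exp (-t⁻¹))
    (hms : ∀ t : ℝ, 0 < t → ∀ x : Fin d → ℝ, (∀ j, 0 < x j) →
      ((μ {ω | ∀ j, X j ω ≤ t * x j}).toReal) ^ t = (μ {ω | ∀ j, X j ω ≤ x j}).toReal)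
    (l : (Fin d → ℝ) → ℝ)
    (hl : ∀ x : Fin d → ℝ, (∀ j, 0 ≤ x j) →
      l x = - Real.log ((μ {ω | ∀ j, 0 < x j → X j ω ≤ (x j)⁻¹}).toReal))
    (I : Fin p → Finset (Fin d)) (hIne : ∀ j, (I j).Nonempty)
    (hdisj : ∀ j k, j ≠ k → Disjoint (I j) (I k))
    (lam : Fin p → ℝ) (hlam : ∀ j, 0 < lam j)
    (T : Finset (Fin p)) (hT : T.Nonempty) :
    ∫ ω, T.sup' hT (fun j => Real.exp (-((I j).sup' (hIne j) (fun i => X i ω))⁻¹) ^ lam j) ∂μ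
      = l (fun i => ∑ j ∈ T, (lam j)⁻¹ * (if i ∈ I j then 1 else 0))
        / (1 + l (fun i => ∑ j ∈ T, (lam j)⁻¹ * (if i ∈ I j then 1 else 0))) := by
  set v : Fin d → ℝ := fun i => ∑ j ∈ T, (lam j)⁻¹ * (if i ∈ I j then 1 else 0) with hvdef
  have hv0 : ∀ i, 0 ≤ v i := by
    intro i
    apply Finset.sum_nonneg
    intro j _
    have := (hlam j).le
    positivity
  have hvval : ∀ j ∈ T, ∀ i ∈ I j, v i = (lam j)⁻¹ := by
    intro j hj i hi
    show (∑ k ∈ T, (lam k)⁻¹ * (if i ∈ I k then 1 else 0)) = (lam j)⁻¹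
    rw [Finset.sum_eq_single j]
    · simp [hi]
    · intro k hk hkj
      have : i ∉ I k := fun h => (Finset.disjoint_left.mp (hdisj k j hkj)) h hi
      simp [this]
    · intro h; exact absurd hj h
  have hvne : ∀ i, v i ≠ 0 ↔ ∃ j ∈ T, i ∈ I j := by
    intro i
    constructor
    · intro h
      by_contra hc
      push_neg at hc
      apply h
      show (∑ k ∈ T, (lam k)⁻¹ * (if i ∈ I k then 1 else 0)) = 0
      apply Finset.sum_eq_zero
      intro j hj
      simp [hc j hj]
    · rintro ⟨j, hj, hij⟩
      rw [hvval j hj i hij]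
      exact inv_ne_zero (hlam j).ne'
  set c : ℝ := l v with hcdef
  -- value of c
  have hEeq : {ω | ∀ i, 0 < v i → X i ω ≤ (v i)⁻¹} = {ω | ∀ i, v i ≠ 0 → X i ω ≤ (v i)⁻¹} := by
    ext ω
    simp only [Set.mem_setOf_eq]
    constructor
    · intro h i hi; exact h i (lt_of_le_of_ne (hv0 i) (Ne.symm hi))
    · intro h i hi; exact h i hi.ne'
  have hc : c = - Real.log ((μ {ω | ∀ i, v i ≠ 0 → X i ω ≤ (v i)⁻¹}).toReal) := by
    rw [hcdef, hl v hv0, hEeq]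
  have hpos : 0 < (μ {ω | ∀ i, v i ≠ 0 → X i ω ≤ (v i)⁻¹}).toReal :=
    pos_event μ X hXm hmarg hms v hv0
  have hle1 : (μ {ω | ∀ i, v i ≠ 0 → X i ω ≤ (v i)⁻¹}).toReal ≤ 1 := by
    rw [show (1:ℝ) = (μ (Set.univ : Set Ω)).toReal by simp]
    exact ENNReal.toReal_mono (measure_ne_top μ _) (measure_mono (Set.subset_univ _))
  have hc0 : 0 ≤ c := by
    rw [hc, neg_nonneg]
    exact Real.log_nonpos hpos.le hle1
  have hPc : (μ {ω | ∀ i, v i ≠ 0 → X i ω ≤ (v i)⁻¹}).toReal = Real.exp (-c) := by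
    rw [hc, neg_neg, Real.exp_log hpos]
  -- CDF identity
  have hcdf_s : ∀ s : ℝ, 0 < s →
      (μ {ω | ∀ i, v i ≠ 0 → X i ω ≤ s⁻¹ * (v i)⁻¹}).toReal = Real.exp (-(c * s)) := by
    intro s hs
    have h1 := homog_subset μ X hms v hv0 s⁻¹ (inv_pos.mpr hs)
    have h2 : (μ {ω | ∀ i, v i ≠ 0 → X i ω ≤ s⁻¹ * (v i)⁻¹}).toReal
        = ((μ {ω | ∀ i, v i ≠ 0 → X i ω ≤ s⁻¹ * (v i)⁻¹}).toReal ^ s⁻¹) ^ s := by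
      rw [Real.rpow_inv_rpow ENNReal.toReal_nonneg hs.ne']
    rw [h2, h1, hPc, ← Real.exp_mul]
    ring_nf
  -- good set
  have hnull : ∀ i : Fin d, μ {ω | X i ω ≤ 0} = 0 := fun i =>
    null_nonpos μ (X i) (hXm i) (hmarg i)
  set G : Set Ω := {ω | ∀ i, 0 < X i ω} with hGdef
  have hGc : μ Gᶜ = 0 := by
    have hsub : Gᶜ ⊆ ⋃ i, {ω | X i ω ≤ 0} := by
      intro ω hω
      simp only [hGdef, Set.mem_compl_iff, Set.mem_setOf_eq, not_forall, not_lt] at hω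
      obtain ⟨i, hi⟩ := hω
      exact Set.mem_iUnion.mpr ⟨i, hi⟩
    exact le_antisymm (le_trans (measure_mono hsub)
      (le_of_eq (measure_iUnion_null (fun i => hnull i)))) zero_le
  set Zf : Ω → ℝ := fun ω =>
    T.sup' hT (fun j => Real.exp (-((I j).sup' (hIne j) (fun i => X i ω))⁻¹) ^ lam j) with hZdef
  have hZm : Measurable Zf := by
    apply measurable_finset_sup' T hT
    intro j
    have hM : Measurable (fun ω => (I j).sup' (hIne j) (fun i => X i ω)) :=
      measurable_finset_sup' _ _ _ hXm
    exact (Real.continuous_rpow_const (hlam j).le).measurable.comp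
      (Real.measurable_exp.comp hM.inv.neg)
  have hZpos : ∀ ω, 0 < Zf ω := by
    intro ω
    obtain ⟨j, hj⟩ := hT
    exact lt_of_lt_of_le (Real.rpow_pos_of_pos (Real.exp_pos _) _)
      (Finset.le_sup' (fun j => Real.exp (-((I j).sup' (hIne j) (fun i => X i ω))⁻¹) ^ lam j) hj)
  have hZle : ∀ ω ∈ G, Zf ω ≤ 1 := by
    intro ω hω
    apply Finset.sup'_le
    intro j hj
    have hM : 0 < (I j).sup' (hIne j) (fun i => X i ω) := by
      obtain ⟨i, hi⟩ := hIne j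
      exact lt_of_lt_of_le (hω i) (Finset.le_sup' (fun i => X i ω) hi)
    apply Real.rpow_le_one (Real.exp_nonneg _) _ (hlam j).le
    rw [Real.exp_le_one_iff, neg_nonpos]
    positivity
  -- CDF of Zf
  have hZcdf : ∀ u : ℝ, 0 < u → u < 1 → (μ {ω | Zf ω ≤ u}).toReal = u ^ c := by
    intro u hu hu1
    set s : ℝ := -Real.log u with hsdef
    have hs : 0 < s := by
      rw [hsdef]; linarith [Real.log_neg hu hu1]
    have hlogu : Real.log u = -s := by rw [hsdef]; ring
    have hset : {ω | Zf ω ≤ u} ∩ G = {ω | ∀ i, v i ≠ 0 → X i ω ≤ s⁻¹ * (v i)⁻¹} ∩ G := by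
      ext ω
      simp only [Set.mem_inter_iff, Set.mem_setOf_eq, hGdef]
      refine and_congr_left fun hω => ?_
      have hstep : Zf ω ≤ u ↔ ∀ j ∈ T, ∀ i ∈ I j, X i ω ≤ s⁻¹ * lam j := by
        rw [hZdef]
        rw [Finset.sup'_le_iff]
        apply forall₂_congr
        intro j hj
        have hMpos : 0 < (I j).sup' (hIne j) (fun i => X i ω) := by
          obtain ⟨i, hi⟩ := hIne j
          exact lt_of_lt_of_le (hω i) (Finset.le_sup' (fun i => X i ω) hi)
        set M : ℝ := (I j).sup' (hIne j) (fun i => X i ω) with hMdef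
        have e1 : Real.exp (-M⁻¹) ^ lam j = Real.exp (-M⁻¹ * lam j) := (Real.exp_mul _ _).symm
        rw [e1, show u = Real.exp (Real.log u) from (Real.exp_log hu).symm, Real.exp_le_exp,
          hlogu]
        have e2 : (-M⁻¹ * lam j ≤ -s) ↔ (s / lam j ≤ M⁻¹) := by
          rw [div_le_iff₀ (hlam j)]
          constructor <;> intro h <;> nlinarith
        rw [e2, le_inv_comm₀ (div_pos hs (hlam j)) hMpos, inv_div, div_eq_inv_mul]
        exact Finset.sup'_le_iff (hIne j) _
      rw [hstep]
      constructor
      · intro h i hvi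
        obtain ⟨j, hj, hij⟩ := (hvne i).mp hvi
        have := h j hj i hij
        rwa [hvval j hj i hij, inv_inv]
      · intro h j hj i hij
        have hvi : v i ≠ 0 := (hvne i).mpr ⟨j, hj, hij⟩
        have := h i hvi
        rwa [hvval j hj i hij, inv_inv] at this
    have hmeas_eq : μ {ω | Zf ω ≤ u} = μ {ω | ∀ i, v i ≠ 0 → X i ω ≤ s⁻¹ * (v i)⁻¹} := by
      rw [← measure_inter_conull (s := {ω | Zf ω ≤ u}) hGc, hset, measure_inter_conull hGc]
    rw [hmeas_eq, hcdf_s s hs, Real.rpow_def_of_pos hu]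
    congr 1
    rw [hlogu]; ring
  -- integral computation
  have hae_nonneg : 0 ≤ᵐ[μ] Zf := Filter.Eventually.of_forall (fun ω => (hZpos ω).le)
  have h1 : ∫ ω, Zf ω ∂μ = (∫⁻ ω, ENNReal.ofReal (Zf ω) ∂μ).toReal :=
    integral_eq_lintegral_of_nonneg_ae hae_nonneg hZm.aestronglyMeasurable
  have h2 : ∫⁻ ω, ENNReal.ofReal (Zf ω) ∂μ = ∫⁻ t in Set.Ioi (0:ℝ), μ {a | t < Zf a} :=
    lintegral_eq_lintegral_meas_lt μ hae_nonneg hZm.aemeasurable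
  have hsplit : ∫⁻ t in Set.Ioi (0:ℝ), μ {a | t < Zf a}
      = (∫⁻ t in Set.Ioc (0:ℝ) 1, μ {a | t < Zf a})
        + ∫⁻ t in Set.Ioi (1:ℝ), μ {a | t < Zf a} := by
    rw [← lintegral_union measurableSet_Ioi (Set.Ioc_disjoint_Ioi le_rfl),
      Set.Ioc_union_Ioi_eq_Ioi zero_le_one]
  have htail : ∫⁻ t in Set.Ioi (1:ℝ), μ {a | t < Zf a} = 0 := by
    rw [setLIntegral_congr_fun measurableSet_Ioi
      (fun t (ht : 1 < t) => ?_), lintegral_zero]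
    have hsub : {a | t < Zf a} ⊆ Gᶜ := by
      intro a ha
      simp only [Set.mem_setOf_eq] at ha
      intro hG
      exact absurd (le_trans (hZle a hG) ht.le) (not_le.mpr ha)
    exact measure_mono_null hsub hGc
  have h4 : IntervalIntegrable (fun t : ℝ => t ^ c) volume 0 1 :=
    intervalIntegral.intervalIntegrable_rpow' (by linarith)
  have hmain : ∫⁻ t in Set.Ioc (0:ℝ) 1, μ {a | t < Zf a} = ENNReal.ofReal (c/(1+c)) := by
    rw [show (volume.restrict (Set.Ioc (0:ℝ) 1)) = volume.restrict (Set.Ioo (0:ℝ) 1) from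
      (Measure.restrict_congr_set MeasureTheory.Ioo_ae_eq_Ioc).symm]
    have hptw : ∀ t ∈ Set.Ioo (0:ℝ) 1, μ {a | t < Zf a} = ENNReal.ofReal (1 - t ^ c) := by
      intro t ht
      have h3 : μ {a | Zf a ≤ t} = ENNReal.ofReal (t ^ c) := by
        rw [← ENNReal.ofReal_toReal (measure_ne_top μ _), hZcdf t ht.1 ht.2]
      have hcompl : {a | t < Zf a} = {a | Zf a ≤ t}ᶜ := by
        ext a; simp [not_le]
      rw [hcompl, measure_compl (measurableSet_le hZm measurable_const)
        (measure_ne_top μ _), measure_univ, h3,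
        ENNReal.ofReal_sub _ (Real.rpow_nonneg ht.1.le c), ENNReal.ofReal_one]
    rw [setLIntegral_congr_fun measurableSet_Ioo hptw]
    have hInt : IntegrableOn (fun t => 1 - t ^ c) (Set.Ioo (0:ℝ) 1) := by
      have h5 : IntervalIntegrable (fun t : ℝ => 1 - t ^ c) volume 0 1 :=
        (intervalIntegrable_const).sub h4
      exact h5.1.mono_set Set.Ioo_subset_Ioc_self
    have hnn : 0 ≤ᵐ[volume.restrict (Set.Ioo (0:ℝ) 1)] (fun t => 1 - t ^ c) := by
      refine (ae_restrict_iff' measurableSet_Ioo).mpr (ae_of_all _ (fun t ht => ?_))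
      simp only [Pi.zero_apply]
      have := Real.rpow_le_one ht.1.le ht.2.le hc0
      linarith
    rw [← ofReal_integral_eq_lintegral_ofReal hInt hnn]
    congr 1
    rw [← MeasureTheory.integral_Ioc_eq_integral_Ioo,
      ← intervalIntegral.integral_of_le zero_le_one,
      intervalIntegral.integral_sub intervalIntegrable_const h4,
      intervalIntegral.integral_const, integral_rpow (Or.inl (by linarith))]
    rw [Real.one_rpow, Real.zero_rpow (show c+1 ≠ 0 by linarith)]
    have : (1:ℝ) + c ≠ 0 := by linarith
    field_simp
    ring_nf
    try exact Or.inl trivial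
  have hfinal : ∫ ω, Zf ω ∂μ = c / (1 + c) := by
    rw [h1, h2, hsplit, htail, add_zero, hmain,
      ENNReal.toReal_ofReal (div_nonneg hc0 (by linarith))]
  exact hfinal
end keyexp

set_option maxHeartbeats 1000000 in
/-- The max-min coefficient R(X,λ,I) equals e({1,...,p}) minus the alternating
sum of e(T) over nonempty subsets T. -/
theorem stmt6
    {Ω : Type*} [MeasurableSpace Ω] (μ : Measure Ω) [IsProbabilityMeasure μ]
    {d p : ℕ} (hd : 0 < d) (hp : 0 < p)
    (X : Fin d → Ω → ℝ) (hXm : ∀ j, Measurable (X j))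
    (hmarg : ∀ j, ∀ t : ℝ, 0 < t → (μ {ω | X j ω ≤ t}).toReal = frechetCDF t)
    (hms : ∀ t : ℝ, 0 < t → ∀ x : Fin d → ℝ, (∀ j, 0 < x j) →
      ((μ {ω | ∀ j, X j ω ≤ t * x j}).toReal) ^ t = (μ {ω | ∀ j, X j ω ≤ x j}).toReal)
    (l : (Fin d → ℝ) → ℝ)
    (hl : ∀ x : Fin d → ℝ, (∀ j, 0 ≤ x j) →
      l x = - Real.log ((μ {ω | ∀ j, 0 < x j → X j ω ≤ (x j)⁻¹}).toReal))
    -- I is a partition of {1,...,d} into nonempty blocks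
    (I : Fin p → Finset (Fin d)) (hIne : ∀ j, (I j).Nonempty)
    (hdisj : ∀ j k, j ≠ k → Disjoint (I j) (I k)) (hcover : ∀ i, ∃ j, i ∈ I j)
    (lam : Fin p → ℝ) (hlam : ∀ j, 0 < lam j)
    (e : Finset (Fin p) → ℝ)
    (he : ∀ T, e T =
      l (fun i => ∑ j ∈ T, (lam j)⁻¹ * (if i ∈ I j then 1 else 0))
        / (1 + l (fun i => ∑ j ∈ T, (lam j)⁻¹ * (if i ∈ I j then 1 else 0)))) :
    ∫ ω, (Finset.univ.sup' ⟨⟨0, hp⟩, Finset.mem_univ _⟩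
          (fun j => frechetCDF ((I j).sup' (hIne j) (fun i => X i ω)) ^ lam j)
        - Finset.univ.inf' ⟨⟨0, hp⟩, Finset.mem_univ _⟩
          (fun j => frechetCDF ((I j).sup' (hIne j) (fun i => X i ω)) ^ lam j)) ∂μ
      = e Finset.univ
        - ∑ T ∈ ((Finset.univ : Finset (Fin p)).powerset.erase ∅),
            (-1 : ℝ) ^ (T.card + 1) * e T := by
  have hmarg' : ∀ j, ∀ t : ℝ, 0 < t → (μ {ω | X j ω ≤ t}).toReal = Real.exp (-t⁻¹) :=
    fun j t ht => hmarg j t ht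
  -- the expectation formula
  have hexp : ∀ (T : Finset (Fin p)) (hT : T.Nonempty),
      ∫ ω, T.sup' hT (fun j => frechetCDF ((I j).sup' (hIne j) (fun i => X i ω)) ^ lam j) ∂μ
        = e T := by
    intro T hT
    rw [he T]
    exact key_exp μ X hXm hmarg' hms l hl I hIne hdisj lam hlam T hT
  -- measurability and integrability
  have hmeasT : ∀ (T : Finset (Fin p)) (hT : T.Nonempty),
      Measurable (fun ω =>
        T.sup' hT (fun j => frechetCDF ((I j).sup' (hIne j) (fun i => X i ω)) ^ lam j)) := by
    intro T hT
    apply measurable_finset_sup' T hT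
    intro j
    exact (Real.continuous_rpow_const (hlam j).le).measurable.comp
      (Real.measurable_exp.comp (measurable_finset_sup' _ (hIne j) _ hXm).inv.neg)
  have hGc : μ {ω | ∀ i, 0 < X i ω}ᶜ = 0 := by
    have hsub : {ω | ∀ i, 0 < X i ω}ᶜ ⊆ ⋃ i, {ω | X i ω ≤ 0} := by
      intro ω hω
      simp only [Set.mem_compl_iff, Set.mem_setOf_eq, not_forall, not_lt] at hω
      obtain ⟨i, hi⟩ := hω
      exact Set.mem_iUnion.mpr ⟨i, hi⟩
    exact le_antisymm (le_trans (measure_mono hsub)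
      (le_of_eq (measure_iUnion_null (fun i => null_nonpos μ (X i) (hXm i) (hmarg' i)))))
      zero_le
  have haeG : ∀ᵐ ω ∂μ, ∀ i, 0 < X i ω := by
    rw [MeasureTheory.ae_iff]
    convert hGc using 2
    rfl
  have hpos : ∀ (T : Finset (Fin p)) (hT : T.Nonempty) (ω : Ω),
      0 < T.sup' hT (fun j => frechetCDF ((I j).sup' (hIne j) (fun i => X i ω)) ^ lam j) := by
    intro T hT ω
    obtain ⟨j, hj⟩ := hT
    exact lt_of_lt_of_le (Real.rpow_pos_of_pos (Real.exp_pos _) _)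
      (Finset.le_sup' (fun j => frechetCDF ((I j).sup' (hIne j) (fun i => X i ω)) ^ lam j) hj)
  have hle1 : ∀ (T : Finset (Fin p)) (hT : T.Nonempty) (ω : Ω), (∀ i, 0 < X i ω) →
      T.sup' hT (fun j => frechetCDF ((I j).sup' (hIne j) (fun i => X i ω)) ^ lam j) ≤ 1 := by
    intro T hT ω hω
    apply Finset.sup'_le
    intro j hj
    have hM : 0 < (I j).sup' (hIne j) (fun i => X i ω) := by
      obtain ⟨i, hi⟩ := hIne j
      exact lt_of_lt_of_le (hω i) (Finset.le_sup' (fun i => X i ω) hi)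
    apply Real.rpow_le_one (Real.exp_nonneg _) _ (hlam j).le
    rw [Real.exp_le_one_iff, neg_nonpos]
    positivity
  have hintT : ∀ (T : Finset (Fin p)) (hT : T.Nonempty),
      Integrable (fun ω =>
        T.sup' hT (fun j => frechetCDF ((I j).sup' (hIne j) (fun i => X i ω)) ^ lam j)) μ := by
    intro T hT
    refine Integrable.mono' (integrable_const (1:ℝ)) (hmeasT T hT).aestronglyMeasurable ?_
    filter_upwards [haeG] with ω hω
    rw [Real.norm_eq_abs, abs_of_pos (hpos T hT ω)]
    exact hle1 T hT ω hω
  set h0 : (Finset.univ : Finset (Fin p)).Nonempty := ⟨⟨0, hp⟩, Finset.mem_univ _⟩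
  -- inf' decomposition
  have hinf : ∀ ω : Ω,
      Finset.univ.inf' h0 (fun j => frechetCDF ((I j).sup' (hIne j) (fun i => X i ω)) ^ lam j)
      = ∑ T ∈ (Finset.univ : Finset (Fin p)).powerset,
          (if h : T.Nonempty then (-1 : ℝ) ^ (T.card + 1)
            * T.sup' h (fun j => frechetCDF ((I j).sup' (hIne j) (fun i => X i ω)) ^ lam j)
           else 0) :=
    fun ω => incl_excl_min Finset.univ h0 _
  have hint_inf : Integrable (fun ω =>
      Finset.univ.inf' h0 (fun j => frechetCDF ((I j).sup' (hIne j) (fun i => X i ω)) ^ lam j)) μ := by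
    refine Integrable.mono' (integrable_const (1:ℝ))
      (measurable_finset_inf' _ h0 _ (fun j =>
        (Real.continuous_rpow_const (hlam j).le).measurable.comp
          (Real.measurable_exp.comp (measurable_finset_sup' _ (hIne j) _ hXm).inv.neg))).aestronglyMeasurable ?_
    filter_upwards [haeG] with ω hω
    rw [Real.norm_eq_abs, abs_le]
    constructor
    · have : (0:ℝ) < Finset.univ.inf' h0
          (fun j => frechetCDF ((I j).sup' (hIne j) (fun i => X i ω)) ^ lam j) := by
        rw [Finset.lt_inf'_iff]
        intro j _
        exact Real.rpow_pos_of_pos (Real.exp_pos _) _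
      linarith
    · obtain ⟨j, hj⟩ := h0
      refine le_trans (Finset.inf'_le _ hj) ?_
      have hM : 0 < (I j).sup' (hIne j) (fun i => X i ω) := by
        obtain ⟨i, hi⟩ := hIne j
        exact lt_of_lt_of_le (hω i) (Finset.le_sup' (fun i => X i ω) hi)
      apply Real.rpow_le_one (Real.exp_nonneg _) _ (hlam j).le
      rw [Real.exp_le_one_iff, neg_nonpos]
      positivity
  rw [integral_sub (hintT Finset.univ h0) hint_inf, hexp Finset.univ h0]
  congr 1
  -- compute integral of inf'
  have hsummand_int : ∀ T ∈ (Finset.univ : Finset (Fin p)).powerset,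
      Integrable (fun ω => (if h : T.Nonempty then (-1 : ℝ) ^ (T.card + 1)
          * T.sup' h (fun j => frechetCDF ((I j).sup' (hIne j) (fun i => X i ω)) ^ lam j)
        else 0)) μ := by
    intro T _
    rcases T.eq_empty_or_nonempty with rfl | hTne
    · simp only [Finset.not_nonempty_empty, dif_neg, not_false_iff]
      exact integrable_const 0
    · simp only [dif_pos hTne]
      exact (hintT T hTne).const_mul _
  calc ∫ ω, Finset.univ.inf' h0
        (fun j => frechetCDF ((I j).sup' (hIne j) (fun i => X i ω)) ^ lam j) ∂μ
      = ∫ ω, (∑ T ∈ (Finset.univ : Finset (Fin p)).powerset,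
          (if h : T.Nonempty then (-1 : ℝ) ^ (T.card + 1)
            * T.sup' h (fun j => frechetCDF ((I j).sup' (hIne j) (fun i => X i ω)) ^ lam j)
           else 0)) ∂μ := integral_congr_ae (Filter.Eventually.of_forall hinf)
    _ = ∑ T ∈ (Finset.univ : Finset (Fin p)).powerset,
          ∫ ω, (if h : T.Nonempty then (-1 : ℝ) ^ (T.card + 1)
            * T.sup' h (fun j => frechetCDF ((I j).sup' (hIne j) (fun i => X i ω)) ^ lam j)
           else 0) ∂μ := integral_finset_sum _ hsummand_int
    _ = ∑ T ∈ (Finset.univ : Finset (Fin p)).powerset,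
          (if h : T.Nonempty then (-1 : ℝ) ^ (T.card + 1) * e T else 0) := by
        apply Finset.sum_congr rfl
        intro T _
        rcases T.eq_empty_or_nonempty with rfl | hTne
        · simp
        · simp only [dif_pos hTne]
          rw [MeasureTheory.integral_const_mul, hexp T hTne]
    _ = ∑ T ∈ ((Finset.univ : Finset (Fin p)).powerset.erase ∅),
          (if h : T.Nonempty then (-1 : ℝ) ^ (T.card + 1) * e T else 0) :=
        (Finset.sum_erase _ (by simp)).symm
    _ = ∑ T ∈ ((Finset.univ : Finset (Fin p)).powerset.erase ∅),
            (-1 : ℝ) ^ (T.card + 1) * e T := by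
        apply Finset.sum_congr rfl
        intro T hT
        have hTne : T.Nonempty := Finset.nonempty_iff_ne_empty.mpr (Finset.ne_of_mem_erase hT)
        rw [dif_pos hTne]
end

section
/- Let X have MEV distribution with unit Fréchet margins and tail dependence function l, and let I = {I₁,...,I_p} partition {1,...,d}. With λ = (1,...,1), R(X,1,I) = ε_X/(1+ε_X) − Σ_{∅≠T⊆{1,...,p}} (−1)^{|T|+1} ε_{X_{∪_{j∈T} I_j}}/(1 + ε_{X_{∪_{j∈T} I_j}}), where ε_{X_S} = l(δ₁(S),...,δ_d(S)) is the extremal coefficient of the subvector indexed by S ⊆ {1,...,d} and ε_X = ε_{X_{{1,...,d}}}. -/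
open MeasureTheory Finset


noncomputable def supd {ι : Type*} (f : ι → ℝ) (T : Finset ι) : ℝ :=
  if h : T.Nonempty then T.sup' h f else 0

lemma supd_eq {ι : Type*} (f : ι → ℝ) {T : Finset ι} (h : T.Nonempty) :
    supd f T = T.sup' h f := dif_pos h

lemma sup'_const_sup_s7 {ι : Type*} {T : Finset ι} (h : T.Nonempty) (c : ℝ) (f : ι → ℝ) :
    T.sup' h (fun i => c ⊔ f i) = c ⊔ T.sup' h f := by
  apply le_antisymm
  · exact Finset.sup'_le _ _ fun i hi => sup_le_sup_left (Finset.le_sup' f hi) c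
  · obtain ⟨i0, hi0⟩ := h
    refine sup_le (le_trans (le_sup_left) (Finset.le_sup' (fun i => c ⊔ f i) hi0)) ?_
    exact Finset.sup'_le _ _ fun i hi => le_trans le_sup_right (Finset.le_sup' (fun i => c ⊔ f i) hi)

lemma inf'_const_sup {ι : Type*} {T : Finset ι} (h : T.Nonempty) (c : ℝ) (f : ι → ℝ) :
    T.inf' h (fun i => c ⊔ f i) = c ⊔ T.inf' h f := by
  apply le_antisymm
  · obtain ⟨i0, hi0, hv⟩ := Finset.exists_mem_eq_inf' h f
    refine le_trans (Finset.inf'_le _ hi0) ?_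
    rw [hv]
  · exact Finset.le_inf' _ _ fun i hi => sup_le_sup_left (Finset.inf'_le f hi) c

lemma inf'_eq_alt_sum {ι : Type*} [DecidableEq ι] {S : Finset ι} (hS : S.Nonempty) (f : ι → ℝ) :
    S.inf' hS f = ∑ T ∈ S.powerset.erase ∅, (-1 : ℝ)^(T.card+1) * supd f T := by
  induction hS using Finset.Nonempty.cons_induction generalizing f with
  | singleton a =>
      have he : ({a} : Finset ι).powerset.erase ∅ = {{a}} := by
        ext T
        simp only [Finset.mem_erase, Finset.mem_powerset, Finset.subset_singleton_iff,
          Finset.mem_singleton]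
        constructor
        · rintro ⟨hne, rfl | rfl⟩
          · exact absurd rfl hne
          · rfl
        · rintro rfl
          exact ⟨Finset.singleton_ne_empty a, Or.inr rfl⟩
      rw [he, Finset.sum_singleton, supd_eq f (Finset.singleton_nonempty a)]
      simp
  | cons a s ha hs ih =>
      simp only [Finset.cons_eq_insert, Finset.powerset_insert]
      have hdisj : Disjoint (s.powerset.erase ∅) ((s.powerset).image (insert a)) := by
        rw [Finset.disjoint_left]
        intro T hT hT'
        obtain ⟨U, hU, rfl⟩ := Finset.mem_image.1 hT'
        have := Finset.mem_powerset.1 (Finset.mem_of_mem_erase hT)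
        exact ha (this (Finset.mem_insert_self a U))
      have herase : ((s.powerset ∪ (s.powerset).image (insert a))).erase ∅
          = s.powerset.erase ∅ ∪ (s.powerset).image (insert a) := by
        ext T
        simp only [Finset.mem_erase, Finset.mem_union, Finset.mem_image]
        constructor
        · rintro ⟨hne, h | ⟨U, hU, rfl⟩⟩
          · exact Or.inl ⟨hne, h⟩
          · exact Or.inr ⟨U, hU, rfl⟩
        · rintro (⟨hne, h⟩ | ⟨U, hU, rfl⟩)
          · exact ⟨hne, Or.inl h⟩
          · exact ⟨by simp [Finset.insert_ne_empty], Or.inr ⟨U, hU, rfl⟩⟩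
      rw [herase, Finset.sum_union hdisj]
      have hinj : Set.InjOn (insert a) (s.powerset : Set (Finset ι)) := by
        intro T1 h1 T2 h2 he
        have ha1 : a ∉ T1 := fun h => ha (Finset.mem_powerset.1 (by exact_mod_cast h1) h)
        have ha2 : a ∉ T2 := fun h => ha (Finset.mem_powerset.1 (by exact_mod_cast h2) h)
        rw [← Finset.erase_insert ha1, ← Finset.erase_insert ha2, he]
      rw [Finset.sum_image hinj]
      have hterm : ∀ T ∈ s.powerset,
          (-1 : ℝ)^((insert a T).card+1) * supd f (insert a T)
          = (-1 : ℝ)^(T.card) * supd (fun i => f a ⊔ f i) T + (if T = ∅ then f a else 0) := by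
        intro T hT
        have haT : a ∉ T := fun h => ha (Finset.mem_powerset.1 hT h)
        rw [Finset.card_insert_of_notMem haT]
        by_cases hTe : T = ∅
        · subst hTe
          simp [supd, pow_succ]
        · have hTne : T.Nonempty := Finset.nonempty_iff_ne_empty.2 hTe
          rw [supd_eq _ (Finset.insert_nonempty a T), Finset.sup'_insert hTne,
            supd_eq _ hTne, sup'_const_sup_s7 hTne, if_neg hTe]
          rw [pow_succ, pow_succ]
          ring
      rw [Finset.sum_congr rfl hterm, Finset.sum_add_distrib]
      have h1 : ∑ T ∈ s.powerset, (if T = ∅ then f a else (0:ℝ)) = f a := by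
        rw [Finset.sum_ite_eq' s.powerset ∅ (fun _ => f a)]
        simp [Finset.empty_mem_powerset]
      have h2 : ∑ T ∈ s.powerset, (-1 : ℝ)^(T.card) * supd (fun i => f a ⊔ f i) T
          = - (f a ⊔ s.inf' hs f) := by
        rw [← Finset.sum_erase_add _ _ (Finset.empty_mem_powerset s)]
        have hneg : ∑ T ∈ s.powerset.erase ∅, (-1:ℝ)^T.card * supd (fun i => f a ⊔ f i) T
            = - ∑ T ∈ s.powerset.erase ∅, (-1:ℝ)^(T.card+1) * supd (fun i => f a ⊔ f i) T := by
          rw [← Finset.sum_neg_distrib]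
          exact Finset.sum_congr rfl fun T _ => by rw [pow_succ]; ring
        rw [hneg, ← ih (fun i => f a ⊔ f i), inf'_const_sup hs]
        simp [supd]
      rw [← ih f, h1, h2, Finset.inf'_insert hs f]
      have hmm := min_add_max (f a) (s.inf' hs f)
      linarith

lemma expectation_of_cdf {Ω : Type*} [MeasurableSpace Ω] (μ : Measure Ω) [IsProbabilityMeasure μ]
    (Y : Ω → ℝ) (hYm : Measurable Y) (h0 : ∀ ω, 0 ≤ Y ω)
    (hlt1 : ∀ᵐ ω ∂μ, Y ω < 1)
    (e : ℝ) (he : 1 ≤ e)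
    (hcdf : ∀ u : ℝ, 0 < u → u < 1 → (μ {ω | Y ω ≤ u}).toReal = u ^ e) :
    ∫ ω, Y ω ∂μ = e / (1 + e) := by
  have hint : Integrable Y μ := by
    apply Integrable.mono' (integrable_const (1 : ℝ)) hYm.aestronglyMeasurable
    filter_upwards [hlt1] with ω hω
    rw [Real.norm_eq_abs, abs_of_nonneg (h0 ω)]
    exact hω.le
  rw [hint.integral_eq_integral_meas_lt (Filter.Eventually.of_forall h0)]
  have hsurv : ∀ u : ℝ, 0 < u → u < 1 → (μ {ω | u < Y ω}).toReal = 1 - u ^ e := by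
    intro u hu hu1
    have hmeas : MeasurableSet {ω | Y ω ≤ u} := hYm measurableSet_Iic
    have hc : {ω | u < Y ω} = {ω | Y ω ≤ u}ᶜ := by ext ω; simp [not_le]
    rw [hc, measure_compl hmeas (measure_ne_top μ _), measure_univ,
      ENNReal.toReal_sub_of_le prob_le_one (by simp), ENNReal.toReal_one, hcdf u hu hu1]
  have hzero : ∀ u : ℝ, 1 ≤ u → (μ {ω | u < Y ω}).toReal = 0 := by
    intro u hu
    have hnull : μ {ω | ¬ Y ω < 1} = 0 := ae_iff.1 hlt1
    have hsub : {ω | u < Y ω} ⊆ {ω | ¬ Y ω < 1} := by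
      intro ω hω
      simp only [Set.mem_setOf_eq, not_lt] at *
      exact hu.trans hω.le
    rw [measure_mono_null hsub hnull]
    simp
  have hcongr : ∀ u ∈ Set.Ioi (0:ℝ), (μ {ω | u < Y ω}).toReal
      = Set.indicator (Set.Ioc (0:ℝ) 1) (fun u => 1 - u ^ e) u := by
    intro u hu
    rcases lt_or_ge u 1 with h1 | h1
    · rw [Set.indicator_of_mem (by exact ⟨hu, h1.le⟩), hsurv u hu h1]
    · rcases eq_or_lt_of_le h1 with rfl | h1'
      · rw [Set.indicator_of_mem (by constructor <;> norm_num), hzero 1 le_rfl]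
        norm_num
      · rw [Set.indicator_of_notMem (by simp [not_le.2 h1']), hzero u h1]
  change ∫ t in Set.Ioi (0:ℝ), (μ {a | t < Y a}).toReal = e / (1 + e)
  rw [setIntegral_congr_fun measurableSet_Ioi hcongr,
    MeasureTheory.integral_indicator measurableSet_Ioc]
  have hIoc : Set.Ioc (0:ℝ) 1 ∩ Set.Ioi 0 = Set.Ioc 0 1 := by
    ext u
    simp only [Set.mem_inter_iff, Set.mem_Ioc, Set.mem_Ioi, and_iff_left_iff_imp]
    exact fun h => h.1
  rw [Measure.restrict_restrict measurableSet_Ioc, hIoc,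
    ← intervalIntegral.integral_of_le zero_le_one]
  have hi1 : IntervalIntegrable (fun u : ℝ => u ^ e) volume 0 1 :=
    intervalIntegral.intervalIntegrable_rpow (Or.inl (by linarith))
  rw [intervalIntegral.integral_sub intervalIntegrable_const hi1,
    integral_rpow (Or.inl (by linarith))]
  simp only [intervalIntegral.integral_const, smul_eq_mul, mul_one, sub_zero]
  rw [Real.one_rpow, Real.zero_rpow (by linarith)]
  have : (0:ℝ) < 1 + e := by linarith
  field_simp
  ring

lemma measurable_inf'' {ι : Type*} {Ω : Type*} [MeasurableSpace Ω] {s : Finset ι}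
    (hs : s.Nonempty) (f : ι → Ω → ℝ) (hf : ∀ j, Measurable (f j)) :
    Measurable (fun ω => s.inf' hs fun j => f j ω) := by
  induction hs using Finset.Nonempty.cons_induction with
  | singleton a =>
      have h1 : (fun ω => ({a} : Finset ι).inf' (Finset.singleton_nonempty a) fun j => f j ω)
          = f a := funext fun ω => Finset.inf'_singleton (fun j => f j ω)
      rw [h1]
      exact hf a
  | cons a s ha hs ih =>
      have h2 : (fun ω => (Finset.cons a s ha).inf' (Finset.cons_nonempty ha) fun j => f j ω)
          = fun ω => f a ω ⊓ (s.inf' hs fun j => f j ω) := by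
        funext ω
        exact Finset.inf'_cons hs (fun j => f j ω)
      rw [h2]
      exact (hf a).inf ih

/-- With λ = (1,...,1), the max-min coefficient is expressed via extremal
coefficients of the unions of blocks. -/
theorem stmt7
    {Ω : Type*} [MeasurableSpace Ω] (μ : Measure Ω) [IsProbabilityMeasure μ]
    {d p : ℕ} (hd : 0 < d) (hp : 0 < p)
    (X : Fin d → Ω → ℝ) (hXm : ∀ j, Measurable (X j))
    (hmarg : ∀ j, ∀ t : ℝ, 0 < t → (μ {ω | X j ω ≤ t}).toReal = frechetCDF t)
    (hms : ∀ t : ℝ, 0 < t → ∀ x : Fin d → ℝ, (∀ j, 0 < x j) →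
      ((μ {ω | ∀ j, X j ω ≤ t * x j}).toReal) ^ t = (μ {ω | ∀ j, X j ω ≤ x j}).toReal)
    (l : (Fin d → ℝ) → ℝ)
    (hl : ∀ x : Fin d → ℝ, (∀ j, 0 ≤ x j) →
      l x = - Real.log ((μ {ω | ∀ j, 0 < x j → X j ω ≤ (x j)⁻¹}).toReal))
    (I : Fin p → Finset (Fin d)) (hIne : ∀ j, (I j).Nonempty)
    (hdisj : ∀ j k, j ≠ k → Disjoint (I j) (I k)) (hcover : ∀ i, ∃ j, i ∈ I j)
    -- extremal coefficients of subvectors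
    (ε : Finset (Fin d) → ℝ)
    (hε : ∀ S, ε S = l (fun i => if i ∈ S then 1 else 0)) :
    ∫ ω, (Finset.univ.sup' ⟨⟨0, hp⟩, Finset.mem_univ _⟩
          (fun j => frechetCDF ((I j).sup' (hIne j) (fun i => X i ω)))
        - Finset.univ.inf' ⟨⟨0, hp⟩, Finset.mem_univ _⟩
          (fun j => frechetCDF ((I j).sup' (hIne j) (fun i => X i ω)))) ∂μ
      = ε Finset.univ / (1 + ε Finset.univ)
        - ∑ T ∈ ((Finset.univ : Finset (Fin p)).powerset.erase ∅),
            (-1 : ℝ) ^ (T.card + 1) * (ε (T.biUnion I) / (1 + ε (T.biUnion I))) := by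
  classical
  have hF0 : ∀ x : ℝ, 0 ≤ frechetCDF x := fun x => (Real.exp_pos _).le
  have hFmono : ∀ x y : ℝ, 0 < x → x ≤ y → frechetCDF x ≤ frechetCDF y := by
    intro x y hx hxy
    have hy : 0 < y := lt_of_lt_of_le hx hxy
    have h2 : y⁻¹ ≤ x⁻¹ := by
      rw [inv_le_inv₀ hy hx] at *
      exact hxy
    exact Real.exp_le_exp.2 (by linarith)
  have hFlt : ∀ x y : ℝ, 0 < x → x < y → frechetCDF x < frechetCDF y := by
    intro x y hx hxy
    have hy : 0 < y := lt_trans hx hxy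
    have h2 : y⁻¹ < x⁻¹ := by
      rw [inv_lt_inv₀ hy hx] at *
      exact hxy
    exact Real.exp_lt_exp.2 (by linarith)
  have hduniv : (Finset.univ : Finset (Fin d)).Nonempty := ⟨⟨0, hd⟩, Finset.mem_univ _⟩
  have npuniv : (Finset.univ : Finset (Fin p)).Nonempty := ⟨⟨0, hp⟩, Finset.mem_univ _⟩
  -- a.e. positivity of coordinates
  have h0i : ∀ i, μ {ω | X i ω ≤ 0} = 0 := by
    intro i
    have hb : ∀ n : ℕ, (μ {ω | X i ω ≤ 0}).toReal ≤ Real.exp (-((n:ℝ)+1)) := by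
      intro n
      have hposn : (0:ℝ) < ((n:ℝ)+1)⁻¹ := by positivity
      have hmono : (μ {ω | X i ω ≤ 0}).toReal ≤ (μ {ω | X i ω ≤ ((n:ℝ)+1)⁻¹}).toReal :=
        ENNReal.toReal_mono (measure_ne_top μ _)
          (measure_mono fun ω hω => le_trans hω hposn.le)
      rw [hmarg i _ hposn] at hmono
      simpa [frechetCDF, inv_inv] using hmono
    have htend : Filter.Tendsto (fun n : ℕ => Real.exp (-((n:ℝ)+1))) Filter.atTop (nhds 0) := by
      apply Real.tendsto_exp_atBot.comp
      apply Filter.tendsto_neg_atTop_atBot.comp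
      exact Filter.tendsto_atTop_add_const_right _ 1 tendsto_natCast_atTop_atTop
    have hle0 : (μ {ω | X i ω ≤ 0}).toReal ≤ 0 :=
      ge_of_tendsto htend (Filter.Eventually.of_forall hb)
    have heq0 : (μ {ω | X i ω ≤ 0}).toReal = 0 := le_antisymm hle0 ENNReal.toReal_nonneg
    rcases (ENNReal.toReal_eq_zero_iff _).1 heq0 with h | h
    · exact h
    · exact absurd h (measure_ne_top μ _)
  have hpos : ∀ᵐ ω ∂μ, ∀ i, 0 < X i ω := by
    rw [ae_all_iff]
    intro i
    rw [ae_iff]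
    have : {ω | ¬ 0 < X i ω} = {ω | X i ω ≤ 0} := by ext ω; simp [not_lt]
    rw [this]
    exact h0i i
  -- measurability of finite suprema
  have hMmeas : ∀ (S : Finset (Fin d)) (hS : S.Nonempty),
      Measurable (fun ω => S.sup' hS fun i => X i ω) := by
    intro S hS
    have h2 : (fun ω => S.sup' hS fun i => X i ω) = S.sup' hS (fun i => X i) := by
      funext ω
      exact (Finset.sup'_apply hS (fun i => X i) ω).symm
    rw [h2]
    exact Finset.measurable_sup' hS fun i _ => hXm i
  -- increasing limits of full-vector sets
  have hlim : ∀ (S : Finset (Fin d)) (t c : ℝ), 0 < c →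
      Filter.Tendsto
        (fun n : ℕ => (μ {ω | ∀ j, X j ω ≤ if j ∈ S then t else c*((n:ℝ)+1)}).toReal)
        Filter.atTop (nhds ((μ {ω | ∀ i ∈ S, X i ω ≤ t}).toReal)) := by
    intro S t c hc
    set A : ℕ → Set Ω := fun n => {ω | ∀ j, X j ω ≤ if j ∈ S then t else c*((n:ℝ)+1)} with hA
    have hmono : Monotone A := by
      intro n m hnm ω hω j
      have := hω j
      by_cases hj : j ∈ S
      · rwa [if_pos hj] at *
      · rw [if_neg hj] at *
        have : c*((n:ℝ)+1) ≤ c*((m:ℝ)+1) := by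
          have : ((n:ℝ)+1) ≤ ((m:ℝ)+1) := by
            have := Nat.cast_le (α := ℝ) |>.2 hnm
            linarith
          nlinarith
        linarith
    have hunion : (⋃ n, A n) = {ω | ∀ i ∈ S, X i ω ≤ t} := by
      ext ω
      simp only [Set.mem_iUnion, hA, Set.mem_setOf_eq]
      constructor
      · rintro ⟨n, hn⟩ i hi
        have := hn i
        rwa [if_pos hi] at this
      · intro h
        obtain ⟨n, hn⟩ := exists_nat_ge ((Finset.univ.sup' hduniv (fun j => X j ω)) / c)
        refine ⟨n, fun j => ?_⟩
        by_cases hj : j ∈ S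
        · rw [if_pos hj]; exact h j hj
        · rw [if_neg hj]
          have h1 : X j ω ≤ Finset.univ.sup' hduniv (fun j => X j ω) :=
            Finset.le_sup' (fun j => X j ω) (Finset.mem_univ j)
          rw [div_le_iff₀ hc] at hn
          nlinarith
    have h3 := MeasureTheory.tendsto_measure_iUnion_atTop (μ := μ) hmono
    rw [hunion] at h3
    exact (ENNReal.tendsto_toReal (measure_ne_top μ _)).comp h3
  -- positivity of the full-vector df
  have hq : 0 < (μ {ω | ∀ j, X j ω ≤ (1:ℝ)}).toReal := by
    rcases eq_or_lt_of_le (ENNReal.toReal_nonneg :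
        (0:ℝ) ≤ (μ {ω | ∀ j, X j ω ≤ (1:ℝ)}).toReal) with hq0 | h
    · exfalso
      have hzn : ∀ n : ℕ, (μ {ω | ∀ j, X j ω ≤ if j ∈ (∅ : Finset (Fin d)) then (0:ℝ)
          else 1*((n:ℝ)+1)}).toReal = 0 := by
        intro n
        have hn1 : (0:ℝ) < (n:ℝ)+1 := by positivity
        have h1 := hms ((n:ℝ)+1) hn1 (fun _ => 1) (fun _ => one_pos)
        have hseteq : {ω | ∀ j, X j ω ≤ ((n:ℝ)+1) * 1}
            = {ω | ∀ j, X j ω ≤ if j ∈ (∅ : Finset (Fin d)) then (0:ℝ) else 1*((n:ℝ)+1)} := by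
          ext ω; simp [mul_comm]
        have hseteq2 : {ω | ∀ j, X j ω ≤ (fun _ : Fin d => (1:ℝ)) j} = {ω | ∀ j, X j ω ≤ (1:ℝ)} := by
          ext ω; simp
        rw [hseteq, hseteq2, ← hq0] at h1
        by_contra hne
        have hgt : 0 < (μ {ω | ∀ j, X j ω ≤ if j ∈ (∅ : Finset (Fin d)) then (0:ℝ)
            else 1*((n:ℝ)+1)}).toReal := lt_of_le_of_ne ENNReal.toReal_nonneg (Ne.symm hne)
        exact absurd h1 (ne_of_gt (Real.rpow_pos_of_pos hgt _))
      have h4 := hlim ∅ 0 1 one_pos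
      have h5 : {ω | ∀ i ∈ (∅ : Finset (Fin d)), X i ω ≤ (0:ℝ)} = Set.univ := by
        ext ω; simp
      rw [h5] at h4
      simp only [measure_univ, ENNReal.toReal_one] at h4
      have h6 : Filter.Tendsto (fun _ : ℕ => (0:ℝ)) Filter.atTop (nhds 1) := by
        rw [show (fun _ : ℕ => (0:ℝ)) = (fun n : ℕ => (μ {ω | ∀ j, X j ω ≤
          if j ∈ (∅ : Finset (Fin d)) then (0:ℝ) else 1*((n:ℝ)+1)}).toReal) from
          funext fun n => (hzn n).symm]
        exact h4
      exact absurd (tendsto_nhds_unique h6 tendsto_const_nhds) one_ne_zero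
    · exact h
  have hqt : ∀ t : ℝ, 0 < t → 0 < (μ {ω | ∀ j, X j ω ≤ t}).toReal := by
    intro t ht
    have h1 := hms t ht (fun _ => 1) (fun _ => one_pos)
    have hseteq : {ω | ∀ j, X j ω ≤ t * (fun _ : Fin d => (1:ℝ)) j} = {ω | ∀ j, X j ω ≤ t} := by
      ext ω; simp
    have hseteq2 : {ω | ∀ j, X j ω ≤ (fun _ : Fin d => (1:ℝ)) j} = {ω | ∀ j, X j ω ≤ (1:ℝ)} := by
      ext ω; simp
    rw [hseteq, hseteq2] at h1
    by_contra hle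
    push_neg at hle
    have h0 : (μ {ω | ∀ j, X j ω ≤ t}).toReal = 0 := le_antisymm hle ENNReal.toReal_nonneg
    rw [h0, Real.zero_rpow ht.ne'] at h1
    exact absurd h1.symm (ne_of_gt hq)
  have hPSpos : ∀ (S : Finset (Fin d)) (t : ℝ), 0 < t →
      0 < (μ {ω | ∀ i ∈ S, X i ω ≤ t}).toReal := by
    intro S t ht
    refine lt_of_lt_of_le (hqt t ht) (ENNReal.toReal_mono (measure_ne_top μ _)
      (measure_mono fun ω hω i _ => hω i))
  -- scaling relation
  have hscale : ∀ (S : Finset (Fin d)) (t : ℝ), 0 < t →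
      (μ {ω | ∀ i ∈ S, X i ω ≤ t}).toReal ^ t = (μ {ω | ∀ i ∈ S, X i ω ≤ (1:ℝ)}).toReal := by
    intro S t ht
    have hRQ : ∀ n : ℕ,
        (μ {ω | ∀ j, X j ω ≤ if j ∈ S then t else t*((n:ℝ)+1)}).toReal ^ t
        = (μ {ω | ∀ j, X j ω ≤ if j ∈ S then (1:ℝ) else 1*((n:ℝ)+1)}).toReal := by
      intro n
      have hxpos : ∀ j : Fin d, (0:ℝ) < if j ∈ S then 1 else (n:ℝ)+1 := by
        intro j; split_ifs
        · exact one_pos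
        · positivity
      have h1 := hms t ht _ hxpos
      have hs1 : {ω | ∀ j, X j ω ≤ t * if j ∈ S then (1:ℝ) else (n:ℝ)+1}
          = {ω | ∀ j, X j ω ≤ if j ∈ S then t else t*((n:ℝ)+1)} := by
        ext ω
        simp only [Set.mem_setOf_eq, mul_ite, mul_one]
      have hs2 : {ω | ∀ j, X j ω ≤ if j ∈ S then (1:ℝ) else (n:ℝ)+1}
          = {ω | ∀ j, X j ω ≤ if j ∈ S then (1:ℝ) else 1*((n:ℝ)+1)} := by
        ext ω
        simp only [Set.mem_setOf_eq, one_mul]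
      rw [hs1, hs2] at h1
      exact h1
    have hR := hlim S t t ht
    have hQ := hlim S 1 1 one_pos
    have hRt : Filter.Tendsto
        (fun n : ℕ => (μ {ω | ∀ j, X j ω ≤ if j ∈ S then t else t*((n:ℝ)+1)}).toReal ^ t)
        Filter.atTop (nhds ((μ {ω | ∀ i ∈ S, X i ω ≤ t}).toReal ^ t)) :=
      hR.rpow_const (Or.inr ht.le)
    rw [show (fun n : ℕ => (μ {ω | ∀ j, X j ω ≤ if j ∈ S then t else t*((n:ℝ)+1)}).toReal ^ t)
      = (fun n : ℕ => (μ {ω | ∀ j, X j ω ≤ if j ∈ S then (1:ℝ) else 1*((n:ℝ)+1)}).toReal)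
      from funext hRQ] at hRt
    exact tendsto_nhds_unique hRt hQ
  -- the value at 1 via the tail dependence function
  have hε1 : ∀ S : Finset (Fin d),
      ε S = - Real.log ((μ {ω | ∀ i ∈ S, X i ω ≤ (1:ℝ)}).toReal) := by
    intro S
    have hset : {ω | ∀ j, (0:ℝ) < (if j ∈ S then (1:ℝ) else 0) →
        X j ω ≤ (if j ∈ S then (1:ℝ) else 0)⁻¹} = {ω | ∀ i ∈ S, X i ω ≤ (1:ℝ)} := by
      ext ω
      simp only [Set.mem_setOf_eq]
      constructor
      · intro h i hi
        have := h i
        rw [if_pos hi] at this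
        simpa using this one_pos
      · intro h j
        split_ifs with hj
        · intro _
          simpa using h j hj
        · intro h0
          norm_num at h0
    rw [hε S, hl _ (fun j => by split_ifs <;> norm_num), hset]
  have hval : ∀ (S : Finset (Fin d)) (t : ℝ), 0 < t →
      (μ {ω | ∀ i ∈ S, X i ω ≤ t}).toReal = Real.exp (-(ε S)/t) := by
    intro S t ht
    have h1 : (μ {ω | ∀ i ∈ S, X i ω ≤ (1:ℝ)}).toReal = Real.exp (-(ε S)) := by
      rw [hε1 S]
      rw [neg_neg, Real.exp_log (hPSpos S 1 one_pos)]
    have h2 := hscale S t ht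
    rw [h1] at h2
    have h3 := congrArg Real.log h2
    rw [Real.log_rpow (hPSpos S t ht), Real.log_exp] at h3
    have h4 : Real.log ((μ {ω | ∀ i ∈ S, X i ω ≤ t}).toReal) = -(ε S)/t := by
      field_simp
      linarith [h3]
    rw [← h4, Real.exp_log (hPSpos S t ht)]
  have hεge1 : ∀ S : Finset (Fin d), S.Nonempty → 1 ≤ ε S := by
    intro S hS
    obtain ⟨i, hi⟩ := hS
    have h1 : (μ {ω | ∀ i' ∈ S, X i' ω ≤ (1:ℝ)}).toReal ≤ (μ {ω | X i ω ≤ (1:ℝ)}).toReal :=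
      ENNReal.toReal_mono (measure_ne_top μ _) (measure_mono fun ω hω => hω i hi)
    rw [hval S 1 one_pos, hmarg i 1 one_pos] at h1
    have h2 : frechetCDF 1 = Real.exp (-1) := by simp [frechetCDF]
    rw [h2] at h1
    have := Real.exp_le_exp.1 h1
    have h3 : -(ε S)/1 = -(ε S) := by ring
    rw [h3] at this
    linarith
  -- the CDF of Y_S = F(M_S)
  have hcdfS : ∀ (S : Finset (Fin d)) (hS : S.Nonempty) (u : ℝ), 0 < u → u < 1 →
      (μ {ω | frechetCDF (S.sup' hS fun i => X i ω) ≤ u}).toReal = u ^ ε S := by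
    intro S hS u hu hu1
    have hlogu : Real.log u < 0 := Real.log_neg hu hu1
    set t : ℝ := (-Real.log u)⁻¹ with htdef
    have ht : 0 < t := inv_pos.2 (neg_pos.2 hlogu)
    have hFt : frechetCDF t = u := by
      rw [frechetCDF, htdef, inv_inv]
      rw [neg_neg, Real.exp_log hu]
    have haeq : {ω | frechetCDF (S.sup' hS fun i => X i ω) ≤ u}
        =ᵐ[μ] {ω | ∀ i ∈ S, X i ω ≤ t} := by
      apply Filter.eventuallyEq_set.2
      filter_upwards [hpos] with ω hω
      have hScopy := hS
      obtain ⟨i0, hi0⟩ := hScopy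
      have hM : 0 < S.sup' hS fun i => X i ω :=
        lt_of_lt_of_le (hω i0) (Finset.le_sup' (fun i => X i ω) hi0)
      rw [← hFt]
      constructor
      · intro h i hi
        refine le_trans (Finset.le_sup' (fun i => X i ω) hi) ?_
        by_contra hlt
        push_neg at hlt
        exact absurd h (not_le.2 (hFlt _ _ ht hlt))
      · intro h
        exact hFmono _ _ hM (Finset.sup'_le hS _ h)
    rw [measure_congr haeq, hval S t ht]
    rw [Real.rpow_def_of_pos hu]
    congr 1
    rw [htdef, div_eq_mul_inv, inv_inv]
    ring
  -- a.e. the transformed variable is < 1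
  have hYlt1 : ∀ (S : Finset (Fin d)) (hS : S.Nonempty),
      ∀ᵐ ω ∂μ, frechetCDF (S.sup' hS fun i => X i ω) < 1 := by
    intro S hS
    filter_upwards [hpos] with ω hω
    have hScopy := hS
    obtain ⟨i0, hi0⟩ := hScopy
    have hM : 0 < S.sup' hS fun i => X i ω :=
      lt_of_lt_of_le (hω i0) (Finset.le_sup' (fun i => X i ω) hi0)
    rw [frechetCDF, Real.exp_lt_one_iff]
    simp only [neg_lt, neg_zero]
    positivity
  have hYmeas : ∀ (S : Finset (Fin d)) (hS : S.Nonempty),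
      Measurable (fun ω => frechetCDF (S.sup' hS fun i => X i ω)) :=
    fun S hS => Real.measurable_exp.comp ((hMmeas S hS).inv.neg)
  -- the expectation of the transformed variable
  have hEY : ∀ (S : Finset (Fin d)) (hS : S.Nonempty),
      ∫ ω, frechetCDF (S.sup' hS fun i => X i ω) ∂μ = ε S / (1 + ε S) :=
    fun S hS => expectation_of_cdf μ _ (hYmeas S hS) (fun ω => hF0 _) (hYlt1 S hS)
      (ε S) (hεge1 S hS) (hcdfS S hS)
  -- block suprema
  have hbne : ∀ (T : Finset (Fin p)), T.Nonempty → (T.biUnion I).Nonempty := by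
    rintro T ⟨j, hj⟩
    obtain ⟨i, hi⟩ := hIne j
    exact ⟨i, Finset.mem_biUnion.2 ⟨j, hj, hi⟩⟩
  have hsupT : ∀ (T : Finset (Fin p)) (hT : T.Nonempty),
      (fun ω => T.sup' hT fun j => frechetCDF ((I j).sup' (hIne j) fun i => X i ω))
      =ᵐ[μ] (fun ω => frechetCDF ((T.biUnion I).sup' (hbne T hT) fun i => X i ω)) := by
    intro T hT
    filter_upwards [hpos] with ω hω
    have hbu := Finset.sup'_biUnion (fun i => X i ω) hT hIne
    have hg : ∀ j : Fin p, 0 < (I j).sup' (hIne j) fun i => X i ω := by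
      intro j
      obtain ⟨i, hi⟩ := hIne j
      exact lt_of_lt_of_le (hω i) (Finset.le_sup' (fun i => X i ω) hi)
    rw [hbu]
    obtain ⟨j0, hj0, hv⟩ := Finset.exists_mem_eq_sup' hT
      (fun j => (I j).sup' (hIne j) fun i => X i ω)
    apply le_antisymm
    · exact Finset.sup'_le _ _ fun j hj =>
        hFmono _ _ (hg j) (Finset.le_sup' (fun j => (I j).sup' (hIne j) fun i => X i ω) hj)
    · rw [hv]
      exact Finset.le_sup' (fun j => frechetCDF ((I j).sup' (hIne j) fun i => X i ω)) hj0
  -- integrability of block suprema / infima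
  have hGm : ∀ j : Fin p, Measurable (fun ω => frechetCDF ((I j).sup' (hIne j) fun i => X i ω)) :=
    fun j => hYmeas (I j) (hIne j)
  have hGlt1 : ∀ᵐ ω ∂μ, ∀ j : Fin p,
      frechetCDF ((I j).sup' (hIne j) fun i => X i ω) < 1 :=
    ae_all_iff.2 fun j => hYlt1 (I j) (hIne j)
  have hsupint : ∀ (T : Finset (Fin p)) (hT : T.Nonempty),
      Integrable (fun ω => T.sup' hT fun j =>
        frechetCDF ((I j).sup' (hIne j) fun i => X i ω)) μ := by
    intro T hT
    apply Integrable.mono' (integrable_const (1:ℝ))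
    · have h2 : (fun ω => T.sup' hT fun j => frechetCDF ((I j).sup' (hIne j) fun i => X i ω))
          = T.sup' hT (fun j ω => frechetCDF ((I j).sup' (hIne j) fun i => X i ω)) := by
        funext ω
        exact (Finset.sup'_apply hT (fun j ω => frechetCDF ((I j).sup' (hIne j) fun i => X i ω)) ω).symm
      rw [h2]
      exact (Finset.measurable_sup' hT fun j _ => hGm j).aestronglyMeasurable
    · filter_upwards [hGlt1] with ω hω
      rw [Real.norm_eq_abs, abs_of_nonneg]
      · exact Finset.sup'_le hT _ fun j hj => (hω j).le
      · have hTcopy := hT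
        obtain ⟨j0, hj0⟩ := hTcopy
        exact le_trans (hF0 _)
          (Finset.le_sup' (fun j => frechetCDF ((I j).sup' (hIne j) fun i => X i ω)) hj0)
  have hinfint : Integrable (fun ω => Finset.univ.inf' npuniv fun j =>
      frechetCDF ((I j).sup' (hIne j) fun i => X i ω)) μ := by
    apply Integrable.mono' (integrable_const (1:ℝ))
    · exact (measurable_inf'' npuniv _ fun j => hGm j).aestronglyMeasurable
    · filter_upwards [hGlt1] with ω hω
      rw [Real.norm_eq_abs, abs_of_nonneg]
      · have hcopy := npuniv
        obtain ⟨j0, hj0⟩ := hcopy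
        exact le_trans (Finset.inf'_le _ hj0) (hω j0).le
      · exact Finset.le_inf' npuniv _ fun j hj => hF0 _
  -- expectation of each block supremum
  have hET : ∀ (T : Finset (Fin p)) (hT : T.Nonempty),
      ∫ ω, (T.sup' hT fun j => frechetCDF ((I j).sup' (hIne j) fun i => X i ω)) ∂μ
      = ε (T.biUnion I) / (1 + ε (T.biUnion I)) := by
    intro T hT
    rw [integral_congr_ae (hsupT T hT)]
    exact hEY (T.biUnion I) (hbne T hT)
  -- put everything together
  rw [integral_sub (hsupint Finset.univ npuniv) hinfint]
  have hbuniv : Finset.univ.biUnion I = (Finset.univ : Finset (Fin d)) := by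
    ext i
    simpa using hcover i
  have h1 : ∫ ω, (Finset.univ.sup' npuniv fun j =>
      frechetCDF ((I j).sup' (hIne j) fun i => X i ω)) ∂μ
      = ε Finset.univ / (1 + ε Finset.univ) := by
    rw [hET Finset.univ npuniv, hbuniv]
  rw [h1]
  congr 1
  -- the infimum part
  have h2 : (fun ω => Finset.univ.inf' npuniv fun j =>
      frechetCDF ((I j).sup' (hIne j) fun i => X i ω))
      = fun ω => ∑ T ∈ (Finset.univ : Finset (Fin p)).powerset.erase ∅,
          (-1:ℝ)^(T.card+1) * supd (fun j => frechetCDF ((I j).sup' (hIne j) fun i => X i ω)) T :=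
    funext fun ω => inf'_eq_alt_sum npuniv _
  rw [h2, integral_finset_sum]
  · apply Finset.sum_congr rfl
    intro T hT
    have hTne : T.Nonempty :=
      Finset.nonempty_iff_ne_empty.2 (Finset.ne_of_mem_erase hT)
    have h3 : (fun ω => (-1:ℝ)^(T.card+1) *
        supd (fun j => frechetCDF ((I j).sup' (hIne j) fun i => X i ω)) T)
        = fun ω => (-1:ℝ)^(T.card+1) *
          (T.sup' hTne fun j => frechetCDF ((I j).sup' (hIne j) fun i => X i ω)) := by
      funext ω
      rw [supd_eq _ hTne]
    rw [h3, integral_const_mul, hET T hTne]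
  · intro T hT
    have hTne : T.Nonempty :=
      Finset.nonempty_iff_ne_empty.2 (Finset.ne_of_mem_erase hT)
    have h3 : (fun ω => (-1:ℝ)^(T.card+1) *
        supd (fun j => frechetCDF ((I j).sup' (hIne j) fun i => X i ω)) T)
        = fun ω => (-1:ℝ)^(T.card+1) *
          (T.sup' hTne fun j => frechetCDF ((I j).sup' (hIne j) fun i => X i ω)) := by
      funext ω
      rw [supd_eq _ hTne]
    rw [h3]
    exact (hsupint T hTne).const_mul _
end

section
/- For d = 2 and λ₁ = λ ∈ (0,1), λ₂ = 1−λ, the λ-madogram ν(λ) = (1/2) R(X,(λ,1−λ)) satisfies ν(λ) = l(1/λ, 1/(1−λ))/(1 + l(1/λ, 1/(1−λ))) − (3/2)·1/((1+λ)(2−λ)). -/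
open MeasureTheory

lemma meas_eq_of_diff_null {Ω : Type*} [MeasurableSpace Ω] (μ : Measure Ω) {s t N : Set Ω}
    (hN : μ N = 0) (h : s \ N = t \ N) : μ s = μ t := by
  have key : ∀ a b : Set Ω, a \ N = b \ N → μ a ≤ μ b := by
    intro a b hab
    calc μ a ≤ μ ((a \ N) ∪ N) := by
          apply measure_mono
          intro x hx
          by_cases hxN : x ∈ N
          · exact Or.inr hxN
          · exact Or.inl ⟨hx, hxN⟩
    _ = μ ((b \ N) ∪ N) := by rw [hab]
    _ ≤ μ (b \ N) + μ N := measure_union_le _ _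
    _ = μ (b \ N) := by rw [hN, add_zero]
    _ ≤ μ b := measure_mono Set.diff_subset
  exact le_antisymm (key s t h) (key t s h.symm)

lemma layercake_pow {Ω : Type*} [MeasurableSpace Ω] (μ : Measure Ω) [IsProbabilityMeasure μ]
    {W : Ω → ℝ} (hW : Measurable W) (h0 : ∀ᵐ ω ∂μ, 0 ≤ W ω) (h1 : ∀ᵐ ω ∂μ, W ω ≤ 1)
    {c : ℝ} (hc : 0 < c)
    (hcdf : ∀ u : ℝ, 0 < u → u < 1 → (μ {ω | W ω ≤ u}).toReal = u ^ c) :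
    ∫ ω, W ω ∂μ = c / (c + 1) := by
  have hint : Integrable W μ := by
    refine (integrable_const (1:ℝ)).mono' hW.aestronglyMeasurable ?_
    filter_upwards [h0, h1] with ω a b
    simpa [Real.norm_eq_abs, abs_of_nonneg a] using b
  rw [hint.integral_eq_integral_Ioc_meas_le h0 h1]
  simp only [Measure.real]
  have hcongr : ∫ t in Set.Ioc (0:ℝ) 1, (μ {a | t ≤ W a}).toReal
      = ∫ t in Set.Ioc (0:ℝ) 1, (1 - t ^ c) := by
    apply integral_congr_ae
    have hne : ∀ᵐ t ∂(volume.restrict (Set.Ioc (0:ℝ) 1)), t ≠ (1:ℝ) := by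
      refine ae_restrict_of_ae ?_
      rw [ae_iff]
      have hset : {t : ℝ | ¬ t ≠ 1} = {1} := by ext t; simp
      rw [hset]; exact Real.volume_singleton
    filter_upwards [meas_le_ae_eq_meas_lt μ (volume.restrict (Set.Ioc (0:ℝ) 1)) W,
      self_mem_ae_restrict measurableSet_Ioc, hne] with t heq hmem hne1
    have ht0 : 0 < t := hmem.1
    have ht1 : t < 1 := lt_of_le_of_ne hmem.2 hne1
    rw [heq]
    have hset : {a | t < W a} = {a | W a ≤ t}ᶜ := by
      ext a; simp [Set.mem_compl_iff, not_le]
    have hmeas : MeasurableSet {a | W a ≤ t} := hW measurableSet_Iic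
    rw [hset, measure_compl hmeas (measure_ne_top μ _), measure_univ,
      ENNReal.toReal_sub_of_le prob_le_one ENNReal.one_ne_top, ENNReal.toReal_one,
      hcdf t ht0 ht1]
  rw [hcongr, ← intervalIntegral.integral_of_le (zero_le_one)]
  have h1int : IntervalIntegrable (fun t : ℝ => t ^ c) volume 0 1 :=
    intervalIntegral.intervalIntegrable_rpow (Or.inl hc.le)
  rw [intervalIntegral.integral_sub intervalIntegrable_const h1int,
    intervalIntegral.integral_const, integral_rpow (Or.inl (by linarith))]
  rw [Real.one_rpow, Real.zero_rpow (by linarith : c + 1 ≠ 0)]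
  have hc1 : c + 1 ≠ 0 := by linarith
  field_simp
  simp only [sub_zero, smul_eq_mul, mul_one, one_mul]
  ring

/-- The λ-madogram formula: ν(λ) = (1/2)E|F(X₁)^λ − F(X₂)^{1−λ}|
equals l(1/λ,1/(1−λ))/(1+l(1/λ,1/(1−λ))) − (3/2)/((1+λ)(2−λ)). -/
theorem stmt9
    {Ω : Type*} [MeasurableSpace Ω] (μ : Measure Ω) [IsProbabilityMeasure μ]
    (X₁ X₂ : Ω → ℝ) (hX₁ : Measurable X₁) (hX₂ : Measurable X₂)
    (hmarg₁ : ∀ t : ℝ, 0 < t → (μ {ω | X₁ ω ≤ t}).toReal = frechetCDF t)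
    (hmarg₂ : ∀ t : ℝ, 0 < t → (μ {ω | X₂ ω ≤ t}).toReal = frechetCDF t)
    (hms : ∀ t : ℝ, 0 < t → ∀ x y : ℝ, 0 < x → 0 < y →
      ((μ {ω | X₁ ω ≤ t * x ∧ X₂ ω ≤ t * y}).toReal) ^ t
        = (μ {ω | X₁ ω ≤ x ∧ X₂ ω ≤ y}).toReal)
    (l : ℝ → ℝ → ℝ)
    (hl : ∀ x y : ℝ, 0 ≤ x → 0 ≤ y →
      l x y = - Real.log ((μ {ω | (0 < x → X₁ ω ≤ x⁻¹) ∧ (0 < y → X₂ ω ≤ y⁻¹)}).toReal))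
    (lam : ℝ) (hlam₀ : 0 < lam) (hlam₁ : lam < 1) :
    (1 / 2) * ∫ ω, |frechetCDF (X₁ ω) ^ lam - frechetCDF (X₂ ω) ^ (1 - lam)| ∂μ
      = l lam⁻¹ (1 - lam)⁻¹ / (1 + l lam⁻¹ (1 - lam)⁻¹)
        - (3 / 2) * (1 / ((1 + lam) * (2 - lam))) := by
  have hlam₂ : (0:ℝ) < 1 - lam := by linarith
  -- marginal laws have no mass on (-∞, 0]
  have nullOf : ∀ (Y : Ω → ℝ), (∀ t : ℝ, 0 < t → (μ {ω | Y ω ≤ t}).toReal = frechetCDF t) →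
      μ {ω | Y ω ≤ 0} = 0 := by
    intro Y hY
    have key : ∀ n : ℕ, (μ {ω | Y ω ≤ 0}).toReal ≤ Real.exp (-((n:ℝ)+1)) := by
      intro n
      have hpos : (0:ℝ) < ((n:ℝ)+1)⁻¹ := by positivity
      have hsub : μ {ω | Y ω ≤ 0} ≤ μ {ω | Y ω ≤ ((n:ℝ)+1)⁻¹} :=
        measure_mono (fun ω h => le_trans h hpos.le)
      have hY' := hY _ hpos
      calc (μ {ω | Y ω ≤ 0}).toReal ≤ (μ {ω | Y ω ≤ ((n:ℝ)+1)⁻¹}).toReal :=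
            ENNReal.toReal_mono (measure_ne_top μ _) hsub
      _ = Real.exp (-((n:ℝ)+1)) := by rw [hY']; unfold frechetCDF; rw [inv_inv]
    have hlim : Filter.Tendsto (fun n : ℕ => Real.exp (-((n:ℝ)+1))) Filter.atTop (nhds 0) := by
      apply Real.tendsto_exp_neg_atTop_nhds_zero.comp
      exact Filter.tendsto_atTop_add_const_right _ 1 tendsto_natCast_atTop_atTop
    have h0 : (μ {ω | Y ω ≤ 0}).toReal ≤ 0 := ge_of_tendsto hlim (Filter.Eventually.of_forall key)
    have h0' : (μ {ω | Y ω ≤ 0}).toReal = 0 := le_antisymm h0 ENNReal.toReal_nonneg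
    exact ((ENNReal.toReal_eq_zero_iff _).mp h0').resolve_right (measure_ne_top μ _)
  have hN1 := nullOf X₁ hmarg₁
  have hN2 := nullOf X₂ hmarg₂
  set N : Set Ω := {ω | X₁ ω ≤ 0 ∨ X₂ ω ≤ 0} with hNdef
  have hN : μ N = 0 := by
    have hsub : N ⊆ {ω | X₁ ω ≤ 0} ∪ {ω | X₂ ω ≤ 0} := fun ω h => h
    exact measure_mono_null hsub (measure_union_null hN1 hN2)
  have hae : ∀ᵐ ω ∂μ, ω ∉ N := measure_eq_zero_iff_ae_notMem.mp hN
  -- basic facts about frechetCDF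
  have hFpos : ∀ x : ℝ, 0 < frechetCDF x := fun x => Real.exp_pos _
  have hFlt1 : ∀ x : ℝ, 0 < x → frechetCDF x < 1 := by
    intro x hx
    unfold frechetCDF
    rw [Real.exp_lt_one_iff]
    simpa using inv_pos.mpr hx
  -- the key pointwise equivalence
  have hiff : ∀ (e x u : ℝ), 0 < e → 0 < x → 0 < u → u < 1 →
      (frechetCDF x ^ e ≤ u ↔ x ≤ e * (-Real.log u)⁻¹) := by
    intro e x u he hx hu hu1
    have hlu : Real.log u < 0 := Real.log_neg hu hu1
    have hnlu : 0 < -Real.log u := by linarith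
    unfold frechetCDF
    rw [← Real.exp_mul, ← Real.le_log_iff_exp_le hu, ← div_eq_mul_inv, le_div_iff₀ hnlu]
    constructor
    · intro h
      have h2 : -Real.log u ≤ x⁻¹ * e := by linarith
      have h3 : x * (-Real.log u) ≤ x * (x⁻¹ * e) :=
        mul_le_mul_of_nonneg_left h2 hx.le
      have h4 : x * (x⁻¹ * e) = e := by field_simp
      linarith
    · intro h
      have h2 : x⁻¹ * (x * (-Real.log u)) ≤ x⁻¹ * e :=
        mul_le_mul_of_nonneg_left h (inv_pos.mpr hx).le
      have h3 : x⁻¹ * (x * (-Real.log u)) = -Real.log u := by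
        field_simp
      linarith
  -- generic marginal cdf computation
  have hcdf_gen : ∀ (Y : Ω → ℝ), (∀ t, 0 < t → (μ {ω | Y ω ≤ t}).toReal = frechetCDF t) →
      μ {ω | Y ω ≤ 0} = 0 →
      ∀ e : ℝ, 0 < e → ∀ u : ℝ, 0 < u → u < 1 →
      (μ {ω | frechetCDF (Y ω) ^ e ≤ u}).toReal = u ^ (e⁻¹ : ℝ) := by
    intro Y hY hYnull e he u hu hu1
    have hlu : Real.log u < 0 := Real.log_neg hu hu1
    have hnlu : 0 < -Real.log u := by linarith
    set c : ℝ := e * (-Real.log u)⁻¹ with hc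
    have hcpos : 0 < c := by positivity
    have hseteq : {ω | frechetCDF (Y ω) ^ e ≤ u} \ {ω | Y ω ≤ 0}
        = {ω | Y ω ≤ c} \ {ω | Y ω ≤ 0} := by
      ext ω
      simp only [Set.mem_diff, Set.mem_setOf_eq, not_le]
      constructor
      · rintro ⟨h, hx⟩
        exact ⟨(hiff e (Y ω) u he hx hu hu1).1 h, hx⟩
      · rintro ⟨h, hx⟩
        exact ⟨(hiff e (Y ω) u he hx hu hu1).2 h, hx⟩
    rw [meas_eq_of_diff_null μ hYnull hseteq, hY c hcpos]
    unfold frechetCDF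
    rw [Real.rpow_def_of_pos hu]
    congr 1
    rw [hc, mul_inv, inv_inv]
    ring
  have hUcdf : ∀ u : ℝ, 0 < u → u < 1 →
      (μ {ω | frechetCDF (X₁ ω) ^ lam ≤ u}).toReal = u ^ (lam⁻¹ : ℝ) :=
    hcdf_gen X₁ hmarg₁ hN1 lam hlam₀
  have hVcdf : ∀ u : ℝ, 0 < u → u < 1 →
      (μ {ω | frechetCDF (X₂ ω) ^ (1-lam) ≤ u}).toReal = u ^ ((1-lam)⁻¹ : ℝ) :=
    hcdf_gen X₂ hmarg₂ hN2 (1-lam) hlam₂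
  -- the quantity G and its properties
  set G : ℝ := (μ {ω | X₁ ω ≤ lam ∧ X₂ ω ≤ 1 - lam}).toReal with hG
  have hG1 : G < 1 := by
    have hsub : μ {ω | X₁ ω ≤ lam ∧ X₂ ω ≤ 1-lam} ≤ μ {ω | X₁ ω ≤ lam} :=
      measure_mono (fun ω h => h.1)
    calc G ≤ (μ {ω | X₁ ω ≤ lam}).toReal := ENNReal.toReal_mono (measure_ne_top _ _) hsub
    _ = frechetCDF lam := hmarg₁ lam hlam₀
    _ < 1 := hFlt1 lam hlam₀
  -- inclusion-exclusion helper
  have hie : ∀ A B : Set Ω, MeasurableSet B →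
      (μ A).toReal + (μ B).toReal - 1 ≤ (μ (A ∩ B)).toReal := by
    intro A B hB
    have key := measure_union_add_inter (μ := μ) A hB
    have h' : (μ (A ∪ B)).toReal + (μ (A ∩ B)).toReal = (μ A).toReal + (μ B).toReal := by
      rw [← ENNReal.toReal_add (measure_ne_top _ _) (measure_ne_top _ _),
        ← ENNReal.toReal_add (measure_ne_top _ _) (measure_ne_top _ _), key]
    have hub : (μ (A ∪ B)).toReal ≤ 1 := by
      calc (μ (A ∪ B)).toReal ≤ (μ (Set.univ : Set Ω)).toReal :=
            ENNReal.toReal_mono (measure_ne_top _ _) (measure_mono (Set.subset_univ _))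
      _ = 1 := by simp
    linarith
  have hGpos : 0 < G := by
    set m : ℝ := min lam (1 - lam) with hm
    have hmpos : 0 < m := lt_min hlam₀ hlam₂
    set t : ℝ := 4 / m with htdef
    have htpos : 0 < t := by positivity
    have hb := hms t htpos lam (1-lam) hlam₀ hlam₂
    have h4a : (4:ℝ) ≤ t * lam := by
      have hml : m ≤ lam := min_le_left _ _
      calc (4:ℝ) = 4/m*m := by field_simp
      _ ≤ 4/m*lam := mul_le_mul_of_nonneg_left hml (by positivity)
    have h4b : (4:ℝ) ≤ t * (1-lam) := by
      have hml : m ≤ 1-lam := min_le_right _ _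
      calc (4:ℝ) = 4/m*m := by field_simp
      _ ≤ 4/m*(1-lam) := mul_le_mul_of_nonneg_left hml (by positivity)
    have hexp : ∀ s : ℝ, 4 ≤ s → (3/4 : ℝ) ≤ Real.exp (-s⁻¹) := by
      intro s hs
      have hsp : (0:ℝ) < s := by linarith
      have hinv : s⁻¹ ≤ (4:ℝ)⁻¹ := inv_anti₀ (by norm_num) hs
      calc (3/4:ℝ) = -(1/4) + 1 := by norm_num
      _ ≤ Real.exp (-(1/4)) := Real.add_one_le_exp _
      _ ≤ Real.exp (-s⁻¹) := Real.exp_le_exp.mpr (by norm_num at hinv ⊢; linarith)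
    have e1 := hmarg₁ (t*lam) (by linarith)
    have e2 := hmarg₂ (t*(1-lam)) (by linarith)
    have hA := hexp _ h4a
    have hB := hexp _ h4b
    have hIE := hie {ω | X₁ ω ≤ t*lam} {ω | X₂ ω ≤ t*(1-lam)}
      (hX₂ measurableSet_Iic)
    have hinter : ({ω | X₁ ω ≤ t*lam} ∩ {ω | X₂ ω ≤ t*(1-lam)})
        = {ω | X₁ ω ≤ t*lam ∧ X₂ ω ≤ t*(1-lam)} := rfl
    rw [hinter, e1, e2] at hIE
    unfold frechetCDF at hIE
    have hbase : (0:ℝ) < (μ {ω | X₁ ω ≤ t*lam ∧ X₂ ω ≤ t*(1-lam)}).toReal := by linarith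
    calc (0:ℝ) < (μ {ω | X₁ ω ≤ t*lam ∧ X₂ ω ≤ t*(1-lam)}).toReal ^ t :=
          Real.rpow_pos_of_pos hbase t
    _ = G := hb
  -- identify l with -log G
  have hlamInv : (0:ℝ) ≤ lam⁻¹ := (inv_pos.mpr hlam₀).le
  have h1lamInv : (0:ℝ) ≤ (1-lam)⁻¹ := (inv_pos.mpr hlam₂).le
  set L : ℝ := l lam⁻¹ (1 - lam)⁻¹ with hLdef
  have hLG : L = -Real.log G := by
    rw [hLdef, hl _ _ hlamInv h1lamInv]
    have hset : {ω | (0 < lam⁻¹ → X₁ ω ≤ (lam⁻¹)⁻¹) ∧ (0 < (1-lam)⁻¹ → X₂ ω ≤ ((1-lam)⁻¹)⁻¹)}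
        = {ω | X₁ ω ≤ lam ∧ X₂ ω ≤ 1 - lam} := by
      ext ω
      simp [inv_inv, inv_pos.mpr hlam₀, inv_pos.mpr hlam₂]
    rw [hset, ← hG]
  have hLpos : 0 < L := by
    rw [hLG]
    have := Real.log_neg hGpos hG1
    linarith
  -- cdf of the max
  have hMcdf : ∀ u : ℝ, 0 < u → u < 1 →
      (μ {ω | max (frechetCDF (X₁ ω) ^ lam) (frechetCDF (X₂ ω) ^ (1-lam)) ≤ u}).toReal
        = u ^ L := by
    intro u hu hu1
    have hlu : Real.log u < 0 := Real.log_neg hu hu1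
    have hnlu : 0 < -Real.log u := by linarith
    set s : ℝ := (-Real.log u)⁻¹ with hs
    have hspos : 0 < s := by positivity
    have hseteq : {ω | max (frechetCDF (X₁ ω) ^ lam) (frechetCDF (X₂ ω) ^ (1-lam)) ≤ u} \ N
        = {ω | X₁ ω ≤ s * lam ∧ X₂ ω ≤ s * (1-lam)} \ N := by
      ext ω
      simp only [Set.mem_diff, Set.mem_setOf_eq, hNdef, not_or, not_le, max_le_iff]
      constructor
      · rintro ⟨⟨h1, h2⟩, hx1, hx2⟩
        refine ⟨⟨?_, ?_⟩, hx1, hx2⟩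
        · have := (hiff lam (X₁ ω) u hlam₀ hx1 hu hu1).1 h1
          rwa [mul_comm] at this
        · have := (hiff (1-lam) (X₂ ω) u hlam₂ hx2 hu hu1).1 h2
          rwa [mul_comm] at this
      · rintro ⟨⟨h1, h2⟩, hx1, hx2⟩
        refine ⟨⟨?_, ?_⟩, hx1, hx2⟩
        · exact (hiff lam (X₁ ω) u hlam₀ hx1 hu hu1).2 (by rwa [mul_comm])
        · exact (hiff (1-lam) (X₂ ω) u hlam₂ hx2 hu hu1).2 (by rwa [mul_comm])
    rw [meas_eq_of_diff_null μ hN hseteq]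
    have hbG := hms s hspos lam (1-lam) hlam₀ hlam₂
    have hbval : (μ {ω | X₁ ω ≤ s * lam ∧ X₂ ω ≤ s * (1-lam)}).toReal = G ^ (s⁻¹ : ℝ) := by
      rw [hG, ← hbG, Real.rpow_rpow_inv ENNReal.toReal_nonneg hspos.ne']
    rw [hbval, hs, inv_inv, Real.rpow_def_of_pos hGpos, Real.rpow_def_of_pos hu, hLG]
    ring_nf
  -- a.e. bounds
  have hU0 : ∀ ω, 0 ≤ frechetCDF (X₁ ω) ^ lam := fun ω =>
    (Real.rpow_pos_of_pos (hFpos _) _).le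
  have hV0 : ∀ ω, 0 ≤ frechetCDF (X₂ ω) ^ (1-lam) := fun ω =>
    (Real.rpow_pos_of_pos (hFpos _) _).le
  have hgood : ∀ ω, ω ∉ N → 0 < X₁ ω ∧ 0 < X₂ ω := by
    intro ω hω
    simp only [hNdef, Set.mem_setOf_eq, not_or, not_le] at hω
    exact hω
  have hU1 : ∀ᵐ ω ∂μ, frechetCDF (X₁ ω) ^ lam ≤ 1 := by
    filter_upwards [hae] with ω hω
    exact Real.rpow_le_one (hFpos _).le (hFlt1 _ (hgood ω hω).1).le hlam₀.le
  have hV1 : ∀ᵐ ω ∂μ, frechetCDF (X₂ ω) ^ (1-lam) ≤ 1 := by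
    filter_upwards [hae] with ω hω
    exact Real.rpow_le_one (hFpos _).le (hFlt1 _ (hgood ω hω).2).le hlam₂.le
  have hM1 : ∀ᵐ ω ∂μ, max (frechetCDF (X₁ ω) ^ lam) (frechetCDF (X₂ ω) ^ (1-lam)) ≤ 1 := by
    filter_upwards [hU1, hV1] with ω h1 h2
    exact max_le h1 h2
  -- measurability
  have hUm : Measurable fun ω => frechetCDF (X₁ ω) ^ lam :=
    (Real.continuous_rpow_const hlam₀.le).measurable.comp
      (Real.measurable_exp.comp (hX₁.inv.neg))
  have hVm : Measurable fun ω => frechetCDF (X₂ ω) ^ (1-lam) :=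
    (Real.continuous_rpow_const hlam₂.le).measurable.comp
      (Real.measurable_exp.comp (hX₂.inv.neg))
  have hMm : Measurable fun ω =>
      max (frechetCDF (X₁ ω) ^ lam) (frechetCDF (X₂ ω) ^ (1-lam)) := hUm.max hVm
  -- expectations via layer cake
  have EU : ∫ ω, frechetCDF (X₁ ω) ^ lam ∂μ = lam⁻¹ / (lam⁻¹ + 1) :=
    layercake_pow μ hUm (Filter.Eventually.of_forall hU0) hU1 (inv_pos.mpr hlam₀) hUcdf
  have EV : ∫ ω, frechetCDF (X₂ ω) ^ (1-lam) ∂μ = (1-lam)⁻¹ / ((1-lam)⁻¹ + 1) :=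
    layercake_pow μ hVm (Filter.Eventually.of_forall hV0) hV1 (inv_pos.mpr hlam₂) hVcdf
  have EM : ∫ ω, max (frechetCDF (X₁ ω) ^ lam) (frechetCDF (X₂ ω) ^ (1-lam)) ∂μ
      = L / (L + 1) :=
    layercake_pow μ hMm
      (Filter.Eventually.of_forall (fun ω => le_max_of_le_left (hU0 ω))) hM1 hLpos hMcdf
  -- integrability
  have mkint : ∀ (W : Ω → ℝ), Measurable W → (∀ ω, 0 ≤ W ω) → (∀ᵐ ω ∂μ, W ω ≤ 1) →
      Integrable W μ := by
    intro W hW h0 h1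
    refine (integrable_const (1:ℝ)).mono' hW.aestronglyMeasurable ?_
    filter_upwards [h1] with ω b
    simpa [Real.norm_eq_abs, abs_of_nonneg (h0 ω)] using b
  have intU := mkint _ hUm hU0 hU1
  have intV := mkint _ hVm hV0 hV1
  have intM := mkint _ hMm (fun ω => le_max_of_le_left (hU0 ω)) hM1
  -- |U - V| = 2 max - U - V
  have habs : ∀ ω, |frechetCDF (X₁ ω) ^ lam - frechetCDF (X₂ ω) ^ (1-lam)|
      = 2 * max (frechetCDF (X₁ ω) ^ lam) (frechetCDF (X₂ ω) ^ (1-lam))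
        - frechetCDF (X₁ ω) ^ lam - frechetCDF (X₂ ω) ^ (1-lam) := by
    intro ω
    rcases le_total (frechetCDF (X₁ ω) ^ lam) (frechetCDF (X₂ ω) ^ (1-lam)) with h | h
    · rw [max_eq_right h, abs_of_nonpos (by linarith)]; ring
    · rw [max_eq_left h, abs_of_nonneg (by linarith)]; ring
  have hsplit : ∫ ω, |frechetCDF (X₁ ω) ^ lam - frechetCDF (X₂ ω) ^ (1-lam)| ∂μ
      = 2 * (∫ ω, max (frechetCDF (X₁ ω) ^ lam) (frechetCDF (X₂ ω) ^ (1-lam)) ∂μ)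
        - (∫ ω, frechetCDF (X₁ ω) ^ lam ∂μ) - (∫ ω, frechetCDF (X₂ ω) ^ (1-lam) ∂μ) := by
    have h1 : Integrable (fun ω => 2 * max (frechetCDF (X₁ ω) ^ lam) (frechetCDF (X₂ ω) ^ (1-lam))) μ :=
      intM.const_mul 2
    have h2 : Integrable (fun ω =>
        2 * max (frechetCDF (X₁ ω) ^ lam) (frechetCDF (X₂ ω) ^ (1-lam))
          - frechetCDF (X₁ ω) ^ lam) μ := h1.sub intU
    rw [integral_congr_ae (Filter.Eventually.of_forall habs)]
    rw [integral_sub h2 intV, integral_sub h1 intU, integral_const_mul]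
  rw [hsplit, EU, EV, EM]
  have d1 : (1:ℝ) + L ≠ 0 := by linarith
  have d1' : L + 1 ≠ 0 := by linarith
  have d2 : lam ≠ 0 := hlam₀.ne'
  have d3 : (1:ℝ) - lam ≠ 0 := hlam₂.ne'
  have d4 : (1:ℝ) + lam ≠ 0 := by linarith
  have d5 : (2:ℝ) - lam ≠ 0 := by linarith
  have h1 : lam⁻¹ / (lam⁻¹ + 1) = 1/(1+lam) := by
    rw [div_eq_div_iff (by positivity) (by linarith)]
    field_simp
  have h2 : (1-lam)⁻¹ / ((1-lam)⁻¹ + 1) = 1/(2-lam) := by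
    rw [div_eq_div_iff (by positivity) (by linarith)]
    field_simp
    ring
  rw [h1, h2]
  have hfinal : L / (L + 1) = L / (1 + L) := by rw [add_comm]
  rw [hfinal]
  field_simp
  ring
end

section
/- If X has MEV distribution with unit Fréchet margins and overall extremal coefficient ε_X, then R(X,1) = E[max_j F(X_j) − min_j F(X_j)] = (ε_X − 1)/(ε_X + 1) when d = 2; i.e., for a bivariate extreme value vector with unit Fréchet margins, E[|F(X₁) − F(X₂)|] = (ε_X − 1)/(ε_X + 1) where ε_X = l(1,1). -/
open MeasureTheory

private lemma abs_sub_eq_two_max (a b : ℝ) : |a - b| = 2 * max a b - a - b := by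
  rcases le_total a b with h | h
  · rw [max_eq_right h, abs_of_nonpos (sub_nonpos.mpr h)]; ring
  · rw [max_eq_left h, abs_of_nonneg (sub_nonneg.mpr h)]; ring

private lemma integrable_aux {Ω : Type*} [MeasurableSpace Ω] (μ : Measure Ω)
    [IsProbabilityMeasure μ] (f : Ω → ℝ) (hf : Measurable f) (hf0 : ∀ ω, 0 ≤ f ω)
    (h2 : μ {ω | 1 < f ω} = 0) : Integrable f μ := by
  have hb : ∀ᵐ ω ∂μ, f ω ≤ 1 := by
    rw [ae_iff]; simpa [not_le] using h2
  refine (integrable_const (1:ℝ)).mono' hf.aestronglyMeasurable ?_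
  filter_upwards [hb] with ω h
  rw [Real.norm_eq_abs, abs_of_nonneg (hf0 ω)]
  simpa using h

private lemma integral_aux {Ω : Type*} [MeasurableSpace Ω] (μ : Measure Ω)
    [IsProbabilityMeasure μ] (f : Ω → ℝ) (hf : Measurable f) (hf0 : ∀ ω, 0 ≤ f ω)
    (c : ℝ) (hc : 0 < c)
    (h1 : ∀ t ∈ Set.Ioo (0:ℝ) 1, (μ {ω | f ω ≤ t}).toReal = t ^ c)
    (h2 : ∀ t : ℝ, 1 ≤ t → μ {ω | t < f ω} = 0) :
    ∫ ω, f ω ∂μ = c / (c + 1) := by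
  have hint : Integrable f μ := integrable_aux μ f hf hf0 (h2 1 le_rfl)
  have hcompl : ∀ t : ℝ, 0 < t →
      (μ {ω | t < f ω}).toReal = 1 - (μ {ω | f ω ≤ t}).toReal := by
    intro t ht
    have hmeas : MeasurableSet {ω | f ω ≤ t} := measurableSet_le hf measurable_const
    have hset : {ω | t < f ω} = {ω | f ω ≤ t}ᶜ := by ext ω; simp [not_le]
    rw [hset, measure_compl hmeas (measure_ne_top μ _), measure_univ,
      ENNReal.toReal_sub_of_le prob_le_one ENNReal.one_ne_top, ENNReal.toReal_one]
  rw [hint.integral_eq_integral_meas_lt (Filter.Eventually.of_forall hf0)]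
  have congr1 : Set.EqOn (fun t => (μ {a | t < f a}).toReal)
      (Set.indicator (Set.Ioo (0:ℝ) 1) (fun t => 1 - t ^ c)) (Set.Ioi (0:ℝ)) := by
    intro t ht
    rcases lt_or_ge t 1 with h | h
    · rw [Set.indicator_of_mem (Set.mem_Ioo.mpr ⟨ht, h⟩)]
      exact (hcompl t ht).trans (by rw [h1 t ⟨ht, h⟩])
    · rw [Set.indicator_of_notMem (fun hm => absurd hm.2 (not_lt.mpr h))]
      simp [h2 t h]
  simp only [measureReal_def]
  rw [setIntegral_congr_fun measurableSet_Ioi congr1,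
    setIntegral_indicator measurableSet_Ioo,
    Set.inter_eq_right.mpr (fun x hx => hx.1),
    ← integral_Ioc_eq_integral_Ioo, ← intervalIntegral.integral_of_le zero_le_one,
    intervalIntegral.integral_sub intervalIntegrable_const
      (intervalIntegral.intervalIntegrable_rpow (Or.inl hc.le)),
    intervalIntegral.integral_const, integral_rpow (Or.inl (by linarith))]
  have hne : c + 1 ≠ 0 := by positivity
  rw [Real.one_rpow, Real.zero_rpow hne]
  field_simp
  simp only [smul_eq_mul]; ring

/-- For a bivariate extreme value vector with unit Fréchet margins,
E|F(X₁) − F(X₂)| = (ε − 1)/(ε + 1) where ε = l(1,1) is the extremal coefficient. -/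
theorem stmt10
    {Ω : Type*} [MeasurableSpace Ω] (μ : Measure Ω) [IsProbabilityMeasure μ]
    (X₁ X₂ : Ω → ℝ) (hX₁ : Measurable X₁) (hX₂ : Measurable X₂)
    (hmarg₁ : ∀ t : ℝ, 0 < t → (μ {ω | X₁ ω ≤ t}).toReal = frechetCDF t)
    (hmarg₂ : ∀ t : ℝ, 0 < t → (μ {ω | X₂ ω ≤ t}).toReal = frechetCDF t)
    (hms : ∀ t : ℝ, 0 < t → ∀ x y : ℝ, 0 < x → 0 < y →
      ((μ {ω | X₁ ω ≤ t * x ∧ X₂ ω ≤ t * y}).toReal) ^ t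
        = (μ {ω | X₁ ω ≤ x ∧ X₂ ω ≤ y}).toReal)
    (l : ℝ → ℝ → ℝ)
    (hl : ∀ x y : ℝ, 0 ≤ x → 0 ≤ y →
      l x y = - Real.log ((μ {ω | (0 < x → X₁ ω ≤ x⁻¹) ∧ (0 < y → X₂ ω ≤ y⁻¹)}).toReal)) :
    ∫ ω, |frechetCDF (X₁ ω) - frechetCDF (X₂ ω)| ∂μ
      = (l 1 1 - 1) / (l 1 1 + 1) := by
  have hFmeas : Measurable frechetCDF :=
    Real.measurable_exp.comp (measurable_id.inv.neg)
  -- null sets: X₁, X₂ are a.s. positive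
  have hnull : ∀ (X : Ω → ℝ),
      (∀ t : ℝ, 0 < t → (μ {ω | X ω ≤ t}).toReal = frechetCDF t) →
      μ {ω | X ω ≤ 0} = 0 := by
    intro X hm
    have hle : ∀ n : ℕ, (μ {ω | X ω ≤ 0}).toReal ≤ 1 / ((n:ℝ) + 1) := by
      intro n
      have hpos : (0:ℝ) < ((n:ℝ)+1)⁻¹ := by positivity
      have hsub : {ω | X ω ≤ 0} ⊆ {ω | X ω ≤ ((n:ℝ)+1)⁻¹} :=
        fun ω h => le_trans h hpos.le
      have hmono := ENNReal.toReal_mono (measure_ne_top μ _) (measure_mono hsub)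
      rw [hm _ hpos] at hmono
      refine hmono.trans ?_
      show Real.exp (-(((n:ℝ)+1)⁻¹)⁻¹) ≤ 1 / ((n:ℝ)+1)
      rw [inv_inv, Real.exp_neg, one_div]
      refine inv_anti₀ (by positivity) ?_
      have := Real.add_one_le_exp ((n:ℝ)+1)
      linarith
    have h0 : (μ {ω | X ω ≤ 0}).toReal ≤ 0 :=
      ge_of_tendsto' tendsto_one_div_add_atTop_nhds_zero_nat hle
    have h0' : (μ {ω | X ω ≤ 0}).toReal = 0 := le_antisymm h0 ENNReal.toReal_nonneg
    rcases (ENNReal.toReal_eq_zero_iff _).mp h0' with h | h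
    · exact h
    · exact absurd h (measure_ne_top μ _)
  have hn₁ := hnull X₁ hmarg₁
  have hn₂ := hnull X₂ hmarg₂
  have hpos : ∀ᵐ ω ∂μ, 0 < X₁ ω ∧ 0 < X₂ ω := by
    have a1 : ∀ᵐ ω ∂μ, 0 < X₁ ω := by rw [ae_iff]; simpa [not_lt] using hn₁
    have a2 : ∀ᵐ ω ∂μ, 0 < X₂ ω := by rw [ae_iff]; simpa [not_lt] using hn₂
    exact a1.and a2
  -- the joint "diagonal" distribution
  set p : ℝ := (μ {ω | X₁ ω ≤ 1 ∧ X₂ ω ≤ 1}).toReal with hp_def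
  have hG : ∀ s : ℝ, 0 < s →
      (μ {ω | X₁ ω ≤ s ∧ X₂ ω ≤ s}).toReal = p ^ s⁻¹ := by
    intro s hs
    have h := hms s hs 1 1 one_pos one_pos
    rw [mul_one] at h
    have h0 : (0:ℝ) ≤ (μ {ω | X₁ ω ≤ s ∧ X₂ ω ≤ s}).toReal := ENNReal.toReal_nonneg
    calc (μ {ω | X₁ ω ≤ s ∧ X₂ ω ≤ s}).toReal
        = ((μ {ω | X₁ ω ≤ s ∧ X₂ ω ≤ s}).toReal ^ s) ^ s⁻¹ := by
          rw [← Real.rpow_mul h0, mul_inv_cancel₀ hs.ne', Real.rpow_one]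
      _ = p ^ s⁻¹ := by rw [h]
  -- p is positive
  have hexp_half : (2:ℝ)⁻¹ < Real.exp (-2⁻¹) := by
    have h1 := Real.exp_one_lt_d9
    have h2 : Real.exp 2⁻¹ * Real.exp 2⁻¹ = Real.exp 1 := by
      rw [← Real.exp_add]; norm_num
    have h3 := Real.exp_pos (2⁻¹:ℝ)
    have h4 : Real.exp 2⁻¹ < 2 := by nlinarith
    rw [Real.exp_neg]
    rw [inv_lt_inv₀ (by norm_num) h3] at *
    nlinarith
  have hGA : 0 < (μ {ω | X₁ ω ≤ 2 ∧ X₂ ω ≤ 2}).toReal := by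
    have hB : MeasurableSet {ω | X₂ ω ≤ (2:ℝ)} := measurableSet_le hX₂ measurable_const
    have key := measure_union_add_inter (μ := μ) {ω | X₁ ω ≤ (2:ℝ)} hB
    have := congrArg ENNReal.toReal key
    rw [ENNReal.toReal_add (measure_ne_top _ _) (measure_ne_top _ _),
        ENNReal.toReal_add (measure_ne_top _ _) (measure_ne_top _ _)] at this
    have e1 := hmarg₁ 2 two_pos
    have e2 := hmarg₂ 2 two_pos
    have hset : {ω | X₁ ω ≤ (2:ℝ) ∧ X₂ ω ≤ (2:ℝ)}
        = {ω | X₁ ω ≤ (2:ℝ)} ∩ {ω | X₂ ω ≤ (2:ℝ)} := rfl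
    have hU1 : (μ ({ω | X₁ ω ≤ (2:ℝ)} ∪ {ω | X₂ ω ≤ (2:ℝ)})).toReal ≤ 1 := by
      have := ENNReal.toReal_mono ENNReal.one_ne_top (prob_le_one (μ := μ)
        (s := {ω | X₁ ω ≤ (2:ℝ)} ∪ {ω | X₂ ω ≤ (2:ℝ)}))
      simpa using this
    have hF2 : frechetCDF 2 = Real.exp (-2⁻¹) := rfl
    rw [hset]
    rw [e1, e2, hF2] at this
    linarith
  have hp0 : (0:ℝ) ≤ p := ENNReal.toReal_nonneg
  have hp_pos : 0 < p := by
    rcases hp0.lt_or_eq with h | h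
    · exact h
    · exfalso
      rw [hG 2 two_pos, ← h, Real.zero_rpow (by norm_num)] at hGA
      exact lt_irrefl 0 hGA
  have hp_le : p ≤ Real.exp (-1) := by
    have hsub : {ω | X₁ ω ≤ (1:ℝ) ∧ X₂ ω ≤ (1:ℝ)} ⊆ {ω | X₁ ω ≤ (1:ℝ)} := fun ω h => h.1
    have := ENNReal.toReal_mono (measure_ne_top μ _) (measure_mono hsub)
    rw [hmarg₁ 1 one_pos] at this
    simpa [frechetCDF] using this
  -- the extremal coefficient
  have hl11 : l 1 1 = -Real.log p := by
    rw [hl 1 1 zero_le_one zero_le_one, hp_def]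
    norm_num
  have hε1 : 1 ≤ l 1 1 := by
    rw [hl11]
    have := Real.log_le_log hp_pos hp_le
    rw [Real.log_exp] at this
    linarith
  have hlogp : Real.log p = -(l 1 1) := by rw [hl11]; ring
  -- key monotone equivalence for the Fréchet CDF
  have hkey : ∀ t : ℝ, 0 < t → t < 1 → ∀ x : ℝ, 0 < x →
      (frechetCDF x ≤ t ↔ x ≤ (-Real.log t)⁻¹) := by
    intro t ht ht1 x hx
    have hlt : 0 < -Real.log t := by
      have := Real.log_neg ht ht1; linarith
    have hiff : frechetCDF x ≤ t ↔ -x⁻¹ ≤ Real.log t := by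
      rw [show frechetCDF x = Real.exp (-x⁻¹) from rfl, ← Real.exp_log ht,
        Real.exp_le_exp, Real.log_exp]
    rw [hiff]
    constructor
    · intro h
      have h2 : -Real.log t ≤ x⁻¹ := by linarith
      have := inv_anti₀ hlt h2
      rwa [inv_inv] at this
    · intro h
      have := inv_anti₀ hx h
      rw [inv_inv] at this
      linarith
  -- tail bound
  have htail : ∀ (X : Ω → ℝ), μ {ω | X ω ≤ 0} = 0 →
      ∀ t : ℝ, 1 ≤ t → μ {ω | t < frechetCDF (X ω)} = 0 := by
    intro X hn t ht
    refine measure_mono_null ?_ hn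
    intro ω hω
    simp only [Set.mem_setOf_eq] at hω ⊢
    by_contra h
    push_neg at h
    have hle1 : frechetCDF (X ω) ≤ 1 := by
      show Real.exp (-(X ω)⁻¹) ≤ 1
      have h0 : (0:ℝ) ≤ (X ω)⁻¹ := by positivity
      calc Real.exp (-(X ω)⁻¹) ≤ Real.exp 0 := Real.exp_le_exp.mpr (by linarith)
        _ = 1 := Real.exp_zero
    exact absurd hω (not_lt.mpr (hle1.trans ht))
  -- CDF of U = F(X₁)
  have hcdf₁ : ∀ t ∈ Set.Ioo (0:ℝ) 1,
      (μ {ω | frechetCDF (X₁ ω) ≤ t}).toReal = t ^ (1:ℝ) := by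
    rintro t ⟨ht0, ht1⟩
    have hlt : 0 < -Real.log t := by have := Real.log_neg ht0 ht1; linarith
    have hs : 0 < (-Real.log t)⁻¹ := inv_pos.mpr hlt
    have heq : {ω | frechetCDF (X₁ ω) ≤ t} =ᵐ[μ] {ω | X₁ ω ≤ (-Real.log t)⁻¹} := by
      rw [Filter.eventuallyEq_set]
      filter_upwards [hpos] with ω hω
      simpa using hkey t ht0 ht1 (X₁ ω) hω.1
    rw [measure_congr heq, hmarg₁ _ hs, Real.rpow_one]
    show Real.exp (-((-Real.log t)⁻¹)⁻¹) = t
    rw [inv_inv, neg_neg, Real.exp_log ht0]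
  have hcdf₂ : ∀ t ∈ Set.Ioo (0:ℝ) 1,
      (μ {ω | frechetCDF (X₂ ω) ≤ t}).toReal = t ^ (1:ℝ) := by
    rintro t ⟨ht0, ht1⟩
    have hlt : 0 < -Real.log t := by have := Real.log_neg ht0 ht1; linarith
    have hs : 0 < (-Real.log t)⁻¹ := inv_pos.mpr hlt
    have heq : {ω | frechetCDF (X₂ ω) ≤ t} =ᵐ[μ] {ω | X₂ ω ≤ (-Real.log t)⁻¹} := by
      rw [Filter.eventuallyEq_set]
      filter_upwards [hpos] with ω hω
      simpa using hkey t ht0 ht1 (X₂ ω) hω.2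
    rw [measure_congr heq, hmarg₂ _ hs, Real.rpow_one]
    show Real.exp (-((-Real.log t)⁻¹)⁻¹) = t
    rw [inv_inv, neg_neg, Real.exp_log ht0]
  -- CDF of M = max(F(X₁), F(X₂))
  have hcdfM : ∀ t ∈ Set.Ioo (0:ℝ) 1,
      (μ {ω | max (frechetCDF (X₁ ω)) (frechetCDF (X₂ ω)) ≤ t}).toReal = t ^ (l 1 1) := by
    rintro t ⟨ht0, ht1⟩
    have hlt : 0 < -Real.log t := by have := Real.log_neg ht0 ht1; linarith
    have hs : 0 < (-Real.log t)⁻¹ := inv_pos.mpr hlt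
    have heq : {ω | max (frechetCDF (X₁ ω)) (frechetCDF (X₂ ω)) ≤ t}
        =ᵐ[μ] {ω | X₁ ω ≤ (-Real.log t)⁻¹ ∧ X₂ ω ≤ (-Real.log t)⁻¹} := by
      rw [Filter.eventuallyEq_set]
      filter_upwards [hpos] with ω hω
      simp only [Set.mem_setOf_eq, max_le_iff]
      rw [hkey t ht0 ht1 (X₁ ω) hω.1, hkey t ht0 ht1 (X₂ ω) hω.2]
    rw [measure_congr heq, hG _ hs, inv_inv,
      Real.rpow_def_of_pos hp_pos, Real.rpow_def_of_pos ht0, hlogp]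
    ring_nf
  have htailM : ∀ t : ℝ, 1 ≤ t →
      μ {ω | t < max (frechetCDF (X₁ ω)) (frechetCDF (X₂ ω))} = 0 := by
    intro t ht
    refine measure_mono_null (fun ω hω => ?_)
      (measure_union_null (htail X₁ hn₁ t ht) (htail X₂ hn₂ t ht))
    simp only [Set.mem_setOf_eq, lt_max_iff] at hω
    rcases hω with h | h
    · exact Or.inl h
    · exact Or.inr h
  -- integrals
  have hm₁ : Measurable fun ω => frechetCDF (X₁ ω) := hFmeas.comp hX₁
  have hm₂ : Measurable fun ω => frechetCDF (X₂ ω) := hFmeas.comp hX₂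
  have hnn : ∀ x : ℝ, 0 ≤ frechetCDF x := fun x => (Real.exp_pos _).le
  have hiU : ∫ ω, frechetCDF (X₁ ω) ∂μ = 1 / 2 := by
    have := integral_aux μ _ hm₁ (fun ω => hnn _) 1 one_pos hcdf₁ (htail X₁ hn₁)
    norm_num at this ⊢
    exact this
  have hiV : ∫ ω, frechetCDF (X₂ ω) ∂μ = 1 / 2 := by
    have := integral_aux μ _ hm₂ (fun ω => hnn _) 1 one_pos hcdf₂ (htail X₂ hn₂)
    norm_num at this ⊢
    exact this
  have hiM : ∫ ω, max (frechetCDF (X₁ ω)) (frechetCDF (X₂ ω)) ∂μ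
      = l 1 1 / (l 1 1 + 1) :=
    integral_aux μ _ (hm₁.max hm₂) (fun ω => le_max_of_le_left (hnn _))
      (l 1 1) (by linarith) hcdfM htailM
  -- integrability
  have hintU : Integrable (fun ω => frechetCDF (X₁ ω)) μ :=
    integrable_aux μ _ hm₁ (fun ω => hnn _) (htail X₁ hn₁ 1 le_rfl)
  have hintV : Integrable (fun ω => frechetCDF (X₂ ω)) μ :=
    integrable_aux μ _ hm₂ (fun ω => hnn _) (htail X₂ hn₂ 1 le_rfl)
  have hintM : Integrable (fun ω => max (frechetCDF (X₁ ω)) (frechetCDF (X₂ ω))) μ :=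
    integrable_aux μ _ (hm₁.max hm₂) (fun ω => le_max_of_le_left (hnn _))
      (htailM 1 le_rfl)
  -- put it together
  have habs : ∀ ω, |frechetCDF (X₁ ω) - frechetCDF (X₂ ω)|
      = 2 * max (frechetCDF (X₁ ω)) (frechetCDF (X₂ ω))
        - frechetCDF (X₁ ω) - frechetCDF (X₂ ω) :=
    fun ω => abs_sub_eq_two_max _ _
  calc ∫ ω, |frechetCDF (X₁ ω) - frechetCDF (X₂ ω)| ∂μ
      = ∫ ω, (2 * max (frechetCDF (X₁ ω)) (frechetCDF (X₂ ω))
          - frechetCDF (X₁ ω) - frechetCDF (X₂ ω)) ∂μ := by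
        exact integral_congr_ae (Filter.Eventually.of_forall habs)
    _ = (2 * (l 1 1 / (l 1 1 + 1)) - 1/2) - 1/2 := by
        have hint1 : Integrable (fun ω => 2 * max (frechetCDF (X₁ ω)) (frechetCDF (X₂ ω))
            - frechetCDF (X₁ ω)) μ := (hintM.const_mul 2).sub hintU
        rw [integral_sub hint1 hintV, integral_sub (hintM.const_mul 2) hintU,
          integral_const_mul, hiM, hiU, hiV]
    _ = (l 1 1 - 1) / (l 1 1 + 1) := by
        have hne : l 1 1 + 1 ≠ 0 := by linarith
        field_simp
        ring
end

section
/- If the random variables M₁,...,M_p are associated, then for all x₁,...,x_p: (i) min_j P(M_j > x_j) ≥ P(∩_j {M_j > x_j}) ≥ Π_j P(M_j > x_j), and (ii) min_j P(M_j ≤ x_j) ≥ P(∩_j {M_j ≤ x_j}) ≥ Π_j P(M_j ≤ x_j). -/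
open MeasureTheory Finset

/-- Random variables M₁,...,M_p (as a random vector) are associated if every pair of
coordinatewise nondecreasing functionals with existing covariance is nonnegatively
correlated (Esary–Proschan–Walkup). -/
def AssociatedRV {Ω : Type*} [MeasurableSpace Ω] (μ : MeasureTheory.Measure Ω)
    {p : ℕ} (M : Fin p → Ω → ℝ) : Prop :=
  ∀ f g : (Fin p → ℝ) → ℝ, Monotone f → Monotone g →
    MeasureTheory.Integrable (fun ω => f (fun j => M j ω)) μ →
    MeasureTheory.Integrable (fun ω => g (fun j => M j ω)) μ →
    MeasureTheory.Integrable (fun ω => f (fun j => M j ω) * g (fun j => M j ω)) μ →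
    (∫ ω, f (fun j => M j ω) ∂μ) * (∫ ω, g (fun j => M j ω) ∂μ)
      ≤ ∫ ω, f (fun j => M j ω) * g (fun j => M j ω) ∂μ

section Aux

variable {Ω : Type*} [MeasurableSpace Ω] {μ : Measure Ω} [IsProbabilityMeasure μ]
  {p : ℕ} {M : Fin p → Ω → ℝ}

lemma assoc_pair (hMm : ∀ j, Measurable (M j)) (hassoc : AssociatedRV μ M)
    {ε : ℝ} (hε : ε = 1 ∨ ε = -1)
    (A B : Set (Fin p → ℝ)) (hAmeas : MeasurableSet A) (hBmeas : MeasurableSet B)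
    (hA : Monotone (fun v => ε * A.indicator 1 v))
    (hB : Monotone (fun v => ε * B.indicator 1 v)) :
    (μ ((fun ω j => M j ω) ⁻¹' A)).toReal * (μ ((fun ω j => M j ω) ⁻¹' B)).toReal
      ≤ (μ ((fun ω j => M j ω) ⁻¹' (A ∩ B))).toReal := by
  have hX : Measurable (fun ω j => M j ω) := measurable_pi_lambda _ hMm
  have hε2 : ε * ε = 1 := by rcases hε with h | h <;> simp [h]
  -- pointwise identities
  have hfA : ∀ ω, A.indicator (1 : (Fin p → ℝ) → ℝ) ((fun ω j => M j ω) ω)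
      = ((fun ω j => M j ω) ⁻¹' A).indicator (fun _ => (1:ℝ)) ω := by
    intro ω
    by_cases h : (fun j => M j ω) ∈ A <;> simp [Set.indicator, h, Set.mem_preimage]
  have hfB : ∀ ω, B.indicator (1 : (Fin p → ℝ) → ℝ) ((fun ω j => M j ω) ω)
      = ((fun ω j => M j ω) ⁻¹' B).indicator (fun _ => (1:ℝ)) ω := by
    intro ω
    by_cases h : (fun j => M j ω) ∈ B <;> simp [Set.indicator, h, Set.mem_preimage]
  have hfAB : ∀ ω, A.indicator (1 : (Fin p → ℝ) → ℝ) ((fun ω j => M j ω) ω)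
        * B.indicator (1 : (Fin p → ℝ) → ℝ) ((fun ω j => M j ω) ω)
      = ((fun ω j => M j ω) ⁻¹' (A ∩ B)).indicator (fun _ => (1:ℝ)) ω := by
    intro ω
    by_cases hA' : (fun j => M j ω) ∈ A <;> by_cases hB' : (fun j => M j ω) ∈ B <;>
      simp [Set.indicator, hA', hB', Set.mem_preimage]
  have intA : Integrable (fun ω => ((fun ω j => M j ω) ⁻¹' A).indicator (fun _ => (1:ℝ)) ω) μ :=
    (integrable_const (1:ℝ)).indicator (hX hAmeas)
  have intB : Integrable (fun ω => ((fun ω j => M j ω) ⁻¹' B).indicator (fun _ => (1:ℝ)) ω) μ :=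
    (integrable_const (1:ℝ)).indicator (hX hBmeas)
  have intAB : Integrable (fun ω => ((fun ω j => M j ω) ⁻¹' (A ∩ B)).indicator (fun _ => (1:ℝ)) ω) μ :=
    (integrable_const (1:ℝ)).indicator (hX (hAmeas.inter hBmeas))
  have key := hassoc (fun v => ε * A.indicator 1 v) (fun v => ε * B.indicator 1 v) hA hB
    (by simpa [hfA] using intA.const_mul ε)
    (by simpa [hfB] using intB.const_mul ε)
    (by
      have : (fun ω => (ε * A.indicator 1 (fun j => M j ω)) * (ε * B.indicator 1 (fun j => M j ω)))
          = fun ω => ((fun ω j => M j ω) ⁻¹' (A ∩ B)).indicator (fun _ => (1:ℝ)) ω := by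
        funext ω
        have h1 := hfAB ω
        simp only at h1
        calc (ε * A.indicator 1 fun j => M j ω) * (ε * B.indicator 1 fun j => M j ω)
            = (ε * ε) * ((A.indicator 1 fun j => M j ω) * (B.indicator 1 fun j => M j ω)) := by ring
          _ = (A.indicator 1 fun j => M j ω) * (B.indicator 1 fun j => M j ω) := by rw [hε2, one_mul]
          _ = _ := h1
      rw [this]; exact intAB)
  have iA : (∫ ω, ε * A.indicator 1 (fun j => M j ω) ∂μ)
      = ε * (μ ((fun ω j => M j ω) ⁻¹' A)).toReal := by
    simp only [hfA]
    rw [integral_const_mul]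
    congr 1
    exact integral_indicator_one (μ := μ) (hX hAmeas)
  have iB : (∫ ω, ε * B.indicator 1 (fun j => M j ω) ∂μ)
      = ε * (μ ((fun ω j => M j ω) ⁻¹' B)).toReal := by
    simp only [hfB]
    rw [integral_const_mul]
    congr 1
    exact integral_indicator_one (μ := μ) (hX hBmeas)
  have iAB : (∫ ω, (ε * A.indicator 1 (fun j => M j ω)) * (ε * B.indicator 1 (fun j => M j ω)) ∂μ)
      = (μ ((fun ω j => M j ω) ⁻¹' (A ∩ B))).toReal := by
    have hfun : (fun ω => (ε * A.indicator 1 (fun j => M j ω)) * (ε * B.indicator 1 (fun j => M j ω)))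
        = fun ω => ((fun ω j => M j ω) ⁻¹' (A ∩ B)).indicator (fun _ => (1:ℝ)) ω := by
      funext ω
      have h1 := hfAB ω
      simp only at h1
      calc (ε * A.indicator 1 fun j => M j ω) * (ε * B.indicator 1 fun j => M j ω)
          = (ε * ε) * ((A.indicator 1 fun j => M j ω) * (B.indicator 1 fun j => M j ω)) := by ring
        _ = (A.indicator 1 fun j => M j ω) * (B.indicator 1 fun j => M j ω) := by rw [hε2, one_mul]
        _ = _ := h1
    rw [hfun]
    exact integral_indicator_one (μ := μ) (hX (hAmeas.inter hBmeas))
  rw [iA, iB, iAB] at key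
  calc (μ ((fun ω j => M j ω) ⁻¹' A)).toReal * (μ ((fun ω j => M j ω) ⁻¹' B)).toReal
      = (ε * (μ ((fun ω j => M j ω) ⁻¹' A)).toReal) * (ε * (μ ((fun ω j => M j ω) ⁻¹' B)).toReal) := by
        rw [show (ε * (μ ((fun ω j => M j ω) ⁻¹' A)).toReal) * (ε * (μ ((fun ω j => M j ω) ⁻¹' B)).toReal)
            = (ε*ε) * ((μ ((fun ω j => M j ω) ⁻¹' A)).toReal * (μ ((fun ω j => M j ω) ⁻¹' B)).toReal) from by ring,
          hε2, one_mul]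
    _ ≤ _ := key


lemma upper_mono {s : Set (Fin p → ℝ)} (h : ∀ ⦃v w : Fin p → ℝ⦄, v ≤ w → v ∈ s → w ∈ s) :
    Monotone (fun v => (1:ℝ) * s.indicator 1 v) := by
  intro v w hvw
  by_cases hv : v ∈ s
  · simp [Set.indicator, hv, h hvw hv]
  · by_cases hw : w ∈ s <;> simp [Set.indicator, hv, hw]

lemma lower_mono {s : Set (Fin p → ℝ)} (h : ∀ ⦃v w : Fin p → ℝ⦄, v ≤ w → w ∈ s → v ∈ s) :
    Monotone (fun v => (-1:ℝ) * s.indicator 1 v) := by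
  intro v w hvw
  by_cases hw : w ∈ s
  · simp [Set.indicator, hw, h hvw hw]
  · by_cases hv : v ∈ s <;> simp [Set.indicator, hv, hw]

lemma assoc_prod (hMm : ∀ j, Measurable (M j)) (hassoc : AssociatedRV μ M)
    (C : Fin p → Set (Fin p → ℝ)) (hmeas : ∀ j, MeasurableSet (C j))
    (hud : (∀ j, ∀ ⦃v w : Fin p → ℝ⦄, v ≤ w → v ∈ C j → w ∈ C j)
         ∨ (∀ j, ∀ ⦃v w : Fin p → ℝ⦄, v ≤ w → w ∈ C j → v ∈ C j))
    (S : Finset (Fin p)) :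
    ∏ j ∈ S, (μ ((fun ω j => M j ω) ⁻¹' C j)).toReal
      ≤ (μ ((fun ω j => M j ω) ⁻¹' (⋂ j ∈ S, C j))).toReal := by
  classical
  induction S using Finset.induction_on with
  | empty => simp
  | @insert a S ha ih =>
    have hmeasInt : MeasurableSet (⋂ j ∈ S, C j) :=
      MeasurableSet.biInter (Set.to_countable _) (fun j _ => hmeas j)
    have hpair : (μ ((fun ω j => M j ω) ⁻¹' C a)).toReal
        * (μ ((fun ω j => M j ω) ⁻¹' (⋂ j ∈ S, C j))).toReal
        ≤ (μ ((fun ω j => M j ω) ⁻¹' (C a ∩ ⋂ j ∈ S, C j))).toReal := by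
      rcases hud with h | h
      · refine assoc_pair hMm hassoc (Or.inl rfl) _ _ (hmeas a) hmeasInt
          (upper_mono (h a)) (upper_mono ?_)
        intro v w hvw hv
        simp only [Set.mem_iInter] at hv ⊢
        exact fun j hj => h j hvw (hv j hj)
      · refine assoc_pair hMm hassoc (Or.inr rfl) _ _ (hmeas a) hmeasInt
          (lower_mono (h a)) (lower_mono ?_)
        intro v w hvw hw
        simp only [Set.mem_iInter] at hw ⊢
        exact fun j hj => h j hvw (hw j hj)
    rw [Finset.prod_insert ha, Finset.set_biInter_insert]
    calc (μ ((fun ω j => M j ω) ⁻¹' C a)).toReal * ∏ j ∈ S, (μ ((fun ω j => M j ω) ⁻¹' C j)).toReal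
        ≤ (μ ((fun ω j => M j ω) ⁻¹' C a)).toReal
            * (μ ((fun ω j => M j ω) ⁻¹' (⋂ j ∈ S, C j))).toReal :=
          mul_le_mul_of_nonneg_left ih ENNReal.toReal_nonneg
      _ ≤ _ := hpair

end Aux

/-- Associated random variables satisfy the positive upper and lower orthant
dependence bounds. -/
theorem stmt12
    {Ω : Type*} [MeasurableSpace Ω] (μ : Measure Ω) [IsProbabilityMeasure μ]
    {p : ℕ} (hp : 0 < p) (M : Fin p → Ω → ℝ) (hMm : ∀ j, Measurable (M j))
    (hassoc : AssociatedRV μ M) (x : Fin p → ℝ) :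
    ((μ {ω | ∀ j, x j < M j ω}).toReal
        ≤ Finset.univ.inf' ⟨⟨0, hp⟩, Finset.mem_univ _⟩
            (fun j => (μ {ω | x j < M j ω}).toReal) ∧
      ∏ j, (μ {ω | x j < M j ω}).toReal ≤ (μ {ω | ∀ j, x j < M j ω}).toReal) ∧
    ((μ {ω | ∀ j, M j ω ≤ x j}).toReal
        ≤ Finset.univ.inf' ⟨⟨0, hp⟩, Finset.mem_univ _⟩
            (fun j => (μ {ω | M j ω ≤ x j}).toReal) ∧
      ∏ j, (μ {ω | M j ω ≤ x j}).toReal ≤ (μ {ω | ∀ j, M j ω ≤ x j}).toReal) := by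
  have left1 : (μ {ω | ∀ j, x j < M j ω}).toReal
      ≤ Finset.univ.inf' ⟨⟨0, hp⟩, Finset.mem_univ _⟩
          (fun j => (μ {ω | x j < M j ω}).toReal) := by
    refine Finset.le_inf' _ _ fun j _ => ?_
    exact ENNReal.toReal_mono (measure_ne_top μ _) (measure_mono fun ω h => h j)
  have left2 : (μ {ω | ∀ j, M j ω ≤ x j}).toReal
      ≤ Finset.univ.inf' ⟨⟨0, hp⟩, Finset.mem_univ _⟩
          (fun j => (μ {ω | M j ω ≤ x j}).toReal) := by
    refine Finset.le_inf' _ _ fun j _ => ?_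
    exact ENNReal.toReal_mono (measure_ne_top μ _) (measure_mono fun ω h => h j)
  have right1 : ∏ j, (μ {ω | x j < M j ω}).toReal ≤ (μ {ω | ∀ j, x j < M j ω}).toReal := by
    have h := assoc_prod (μ := μ) hMm hassoc (fun j => {v : Fin p → ℝ | x j < v j})
      (fun j => measurableSet_lt measurable_const (measurable_pi_apply j))
      (Or.inl fun j v w hvw hv => lt_of_lt_of_le hv (hvw j))
      Finset.univ
    have e1 : ∀ j, (fun ω (j : Fin p) => M j ω) ⁻¹' {v : Fin p → ℝ | x j < v j}
        = {ω | x j < M j ω} := fun j => rfl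
    have e2 : (fun ω (j : Fin p) => M j ω) ⁻¹' (⋂ j ∈ Finset.univ, {v : Fin p → ℝ | x j < v j})
        = {ω | ∀ j, x j < M j ω} := by
      ext ω; simp
    simp only [e1, e2] at h
    exact h
  have right2 : ∏ j, (μ {ω | M j ω ≤ x j}).toReal ≤ (μ {ω | ∀ j, M j ω ≤ x j}).toReal := by
    have h := assoc_prod (μ := μ) hMm hassoc (fun j => {v : Fin p → ℝ | v j ≤ x j})
      (fun j => measurableSet_le (measurable_pi_apply j) measurable_const)
      (Or.inr fun j v w hvw hw => le_trans (hvw j) hw)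
      Finset.univ
    have e1 : ∀ j, (fun ω (j : Fin p) => M j ω) ⁻¹' {v : Fin p → ℝ | v j ≤ x j}
        = {ω | M j ω ≤ x j} := fun j => rfl
    have e2 : (fun ω (j : Fin p) => M j ω) ⁻¹' (⋂ j ∈ Finset.univ, {v : Fin p → ℝ | v j ≤ x j})
        = {ω | ∀ j, M j ω ≤ x j} := by
      ext ω; simp
    simp only [e1, e2] at h
    exact h
  exact ⟨⟨left1, right1⟩, ⟨left2, right2⟩⟩
end

section
/- For the symmetric logistic MEV model with tail dependence function l(x₁,...,x_d) = (Σ_{j=1}^d x_j^{1/θ})^θ, θ ∈ (0,1], and λ = (1,...,1): R(X,1) = Σ_{k=1}^{d−1} (−1)^{k+1} C(d,k) · 1/(1 + k^θ) − (1 + (−1)^d)/(1 + d^θ). -/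
open MeasureTheory Finset

lemma aux_rpow_integrableOn {ε : ℝ} (hε : 0 ≤ ε) :
    IntegrableOn (fun t : ℝ => t ^ ε) (Set.Ioo (0:ℝ) 1) volume := by
  have : IntervalIntegrable (fun t : ℝ => t ^ ε) volume 0 1 :=
    intervalIntegral.intervalIntegrable_rpow (Or.inl (by linarith))
  have h := this.1
  exact h.mono_set Set.Ioo_subset_Ioc_self

lemma aux_rpow_integral {ε : ℝ} (hε : 0 ≤ ε) :
    ∫ t in Set.Ioo (0:ℝ) 1, t ^ ε = 1 / (ε + 1) := by
  rw [← MeasureTheory.integral_Ioc_eq_integral_Ioo,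
    ← intervalIntegral.integral_of_le (zero_le_one (α := ℝ))]
  rw [integral_rpow (Or.inl (by linarith))]
  rw [Real.one_rpow, Real.zero_rpow (by linarith)]
  ring

lemma aux_meas_inf' {Ω : Type*} [MeasurableSpace Ω] {ι : Type*} {s : Finset ι}
    (hs : s.Nonempty) {f : ι → Ω → ℝ} (hf : ∀ n ∈ s, Measurable (f n)) :
    Measurable (s.inf' hs f) :=
  Finset.inf'_induction hs _ (fun _f hf _g hg => hf.inf hg) fun n hn => hf n hn


lemma aux_prod_ind {ι Ω : Type*} (T : Finset ι) (A : ι → Set Ω) (ω : Ω) :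
    ∏ j ∈ T, (A j).indicator (fun _ => (1:ℝ)) ω
      = Set.indicator {ω | ∀ j ∈ T, ω ∈ A j} (fun _ => (1:ℝ)) ω := by
  classical
  by_cases h : ∀ j ∈ T, ω ∈ A j
  · rw [Set.indicator_of_mem (by exact h)]
    exact Finset.prod_eq_one fun j hj => Set.indicator_of_mem (h j hj) _
  · rw [Set.indicator_of_notMem (by exact h)]
    push_neg at h
    obtain ⟨j, hj, hA⟩ := h
    exact Finset.prod_eq_zero hj (Set.indicator_of_notMem hA _)

section Aux

variable {Ω : Type*} [MeasurableSpace Ω] (μ : Measure Ω) [IsProbabilityMeasure μ]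
  {d : ℕ} (hd : 0 < d) (θ : ℝ) (hθ₀ : 0 < θ) (hθ₁ : θ ≤ 1)
  (X : Fin d → Ω → ℝ) (hXm : ∀ j, Measurable (X j))
  (hlog : ∀ S : Finset (Fin d), S.Nonempty → ∀ x : Fin d → ℝ, (∀ j, 0 < x j) →
      (μ {ω | ∀ j ∈ S, X j ω ≤ x j}).toReal
        = Real.exp (-(∑ j ∈ S, ((x j)⁻¹) ^ θ⁻¹) ^ θ))

include hlog hθ₀ in
lemma aux_pos : ∀ᵐ ω ∂μ, ∀ j, 0 < X j ω := by
  rw [MeasureTheory.ae_all_iff]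
  intro j
  have key : ∀ n : ℕ, (μ {ω | X j ω ≤ 0}).toReal ≤ Real.exp (-(n+1)) := by
    intro n
    have hx : ∀ i : Fin d, (0:ℝ) < ((n:ℝ)+1)⁻¹ := fun _ => by positivity
    have h := hlog {j} (Finset.singleton_nonempty j) (fun _ => ((n:ℝ)+1)⁻¹) hx
    rw [Finset.sum_singleton, inv_inv,
      Real.rpow_inv_rpow (by positivity) (ne_of_gt hθ₀)] at h
    have hsub : {ω | X j ω ≤ 0} ⊆ {ω | ∀ i ∈ ({j} : Finset (Fin d)), X i ω ≤ ((n:ℝ)+1)⁻¹} := by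
      intro ω hω i hi
      rw [Finset.mem_singleton] at hi
      subst hi
      exact le_trans hω (by positivity)
    calc (μ {ω | X j ω ≤ 0}).toReal
        ≤ (μ {ω | ∀ i ∈ ({j} : Finset (Fin d)), X i ω ≤ ((n:ℝ)+1)⁻¹}).toReal := by
          exact ENNReal.toReal_mono (measure_ne_top μ _) (measure_mono hsub)
      _ = Real.exp (-((n:ℝ)+1)) := h
  have hlim : Filter.Tendsto (fun n : ℕ => Real.exp (-((n:ℝ)+1))) Filter.atTop (nhds 0) := by
    apply Real.tendsto_exp_atBot.comp
    apply Filter.tendsto_neg_atTop_atBot.comp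
    exact Filter.tendsto_atTop_add_const_right _ 1 tendsto_natCast_atTop_atTop
  have h0 : (μ {ω | X j ω ≤ 0}).toReal ≤ 0 :=
    ge_of_tendsto hlim (Filter.Eventually.of_forall key)
  have h0' : μ {ω | X j ω ≤ 0} = 0 := by
    have h00 : (μ {ω | X j ω ≤ 0}).toReal = 0 := le_antisymm h0 ENNReal.toReal_nonneg
    rw [ENNReal.toReal_eq_zero_iff] at h00
    exact h00.resolve_right (measure_ne_top μ _)
  rw [MeasureTheory.ae_iff]
  convert h0' using 2
  ext ω; simp

include hlog hθ₀ in
lemma aux_cdf (T : Finset (Fin d)) (hT : T.Nonempty) {t : ℝ} (ht0 : 0 < t) (ht1 : t < 1) :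
    (μ {ω | ∀ j ∈ T, frechetCDF (X j ω) ≤ t}).toReal = t ^ ((T.card : ℝ) ^ θ) := by
  have hlt : Real.log t < 0 := Real.log_neg ht0 ht1
  set L : ℝ := -Real.log t with hLdef
  have hL : 0 < L := by simp [hLdef]; linarith
  have hc : ∀ j : Fin d, (0:ℝ) < L⁻¹ := fun _ => by positivity
  have hae := aux_pos μ θ hθ₀ X hlog
  have hsets : {ω | ∀ j ∈ T, frechetCDF (X j ω) ≤ t}
      =ᵐ[μ] {ω | ∀ j ∈ T, X j ω ≤ L⁻¹} := by
    rw [Filter.eventuallyEq_set]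
    filter_upwards [hae] with ω hω
    have hiff : ∀ j, frechetCDF (X j ω) ≤ t ↔ X j ω ≤ L⁻¹ := by
      intro j
      unfold frechetCDF
      rw [← Real.exp_log ht0, Real.exp_le_exp, neg_le, ← hLdef,
        le_inv_comm₀ hL (hω j)]
    constructor
    · intro h j hj; exact (hiff j).1 (h j hj)
    · intro h j hj; exact (hiff j).2 (h j hj)
  rw [measure_congr hsets]
  have h := hlog T hT (fun _ => L⁻¹) hc
  rw [h, Finset.sum_const, inv_inv, nsmul_eq_mul,
    Real.mul_rpow (by positivity) (by positivity),
    Real.rpow_inv_rpow hL.le (ne_of_gt hθ₀)]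
  rw [Real.rpow_def_of_pos ht0]
  congr 1
  simp [hLdef]
  ring

include hXm hlog hθ₀ in
lemma aux_ie {t : ℝ} (ht0 : 0 < t) (ht1 : t < 1) :
    (μ {ω | ∀ j, t < frechetCDF (X j ω)}).toReal
      = ∑ T ∈ (univ : Finset (Fin d)).powerset,
          (-1:ℝ) ^ T.card * t ^ ((T.card : ℝ) ^ θ) := by
  have hF : Measurable frechetCDF := Real.measurable_exp.comp measurable_inv.neg
  set A : Fin d → Set Ω := fun j => {ω | frechetCDF (X j ω) ≤ t} with hA
  have hAm : ∀ j, MeasurableSet (A j) := fun j =>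
    measurableSet_le (hF.comp (hXm j)) measurable_const
  set S : Finset (Fin d) → Set Ω := fun T => {ω | ∀ j ∈ T, ω ∈ A j} with hS
  have hSm : ∀ T, MeasurableSet (S T) := by
    intro T
    have : S T = ⋂ j ∈ T, A j := by ext ω; simp [hS, Set.mem_iInter]
    rw [this]
    exact MeasurableSet.biInter (Set.to_countable _) fun j _ => hAm j
  -- pointwise expansion
  have hpt : ∀ ω, Set.indicator {ω | ∀ j, t < frechetCDF (X j ω)} (fun _ => (1:ℝ)) ω
      = ∑ T ∈ (univ : Finset (Fin d)).powerset,
          (-1:ℝ) ^ T.card * Set.indicator (S T) (fun _ => (1:ℝ)) ω := by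
    intro ω
    have lhs_eq : Set.indicator {ω | ∀ j, t < frechetCDF (X j ω)} (fun _ => (1:ℝ)) ω
        = ∏ j ∈ (univ : Finset (Fin d)), ((1:ℝ) - (A j).indicator (fun _ => (1:ℝ)) ω) := by
      have : ∀ j, (1:ℝ) - (A j).indicator (fun _ => (1:ℝ)) ω
          = (A j)ᶜ.indicator (fun _ => (1:ℝ)) ω := by
        intro j
        by_cases h : ω ∈ A j
        · rw [Set.indicator_of_mem h, Set.indicator_of_notMem (by simpa using h)]; ring
        · rw [Set.indicator_of_notMem h, Set.indicator_of_mem (by simpa using h)]; ring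
      rw [Finset.prod_congr rfl fun j _ => this j, aux_prod_ind]
      congr 1
      ext ω'; simp [hA, Set.mem_compl_iff]
    rw [lhs_eq]
    have : ∀ j ∈ (univ : Finset (Fin d)), (1:ℝ) - (A j).indicator (fun _ => (1:ℝ)) ω
        = -((A j).indicator (fun _ => (1:ℝ)) ω) + 1 := fun j _ => by ring
    rw [Finset.prod_congr rfl this, Finset.prod_add]
    apply Finset.sum_congr rfl
    intro T _
    rw [Finset.prod_const_one, mul_one]
    have hneg : ∀ j ∈ T, -((A j).indicator (fun _ => (1:ℝ)) ω)
        = (-1) * (A j).indicator (fun _ => (1:ℝ)) ω := fun _ _ => by ring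
    rw [Finset.prod_congr rfl hneg, Finset.prod_mul_distrib, Finset.prod_const, aux_prod_ind]
  -- integrate
  have hBm : MeasurableSet {ω | ∀ j, t < frechetCDF (X j ω)} := by
    have : {ω | ∀ j, t < frechetCDF (X j ω)} = ⋂ j, {ω | t < frechetCDF (X j ω)} := by
      ext ω; simp
    rw [this]
    exact MeasurableSet.iInter fun j =>
      measurableSet_lt measurable_const (hF.comp (hXm j))
  have step1 : (μ {ω | ∀ j, t < frechetCDF (X j ω)}).toReal
      = ∫ ω, Set.indicator {ω | ∀ j, t < frechetCDF (X j ω)} (fun _ => (1:ℝ)) ω ∂μ := by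
    rw [integral_indicator_const _ hBm]; simp [Measure.real]
  rw [step1, integral_congr_ae (Filter.Eventually.of_forall hpt), integral_finset_sum]
  · apply Finset.sum_congr rfl
    intro T _
    rw [MeasureTheory.integral_const_mul, integral_indicator_const _ (hSm T)]
    simp only [smul_eq_mul, mul_one]
    congr 1
    rcases T.eq_empty_or_nonempty with h | h
    · subst h
      simp [hS, Real.zero_rpow (ne_of_gt hθ₀)]
    · have := aux_cdf μ θ hθ₀ X hlog T h ht0 ht1
      rw [← this]
      congr 1
  · intro T _
    exact (((integrable_const (1:ℝ)).indicator (hSm T)).const_mul _)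

include hXm hlog hθ₀ in
lemma aux_max (hne : (univ : Finset (Fin d)).Nonempty) :
    Integrable (fun ω => univ.sup' hne (fun j => frechetCDF (X j ω))) μ ∧
    ∫ ω, univ.sup' hne (fun j => frechetCDF (X j ω)) ∂μ
      = 1 - 1 / ((Fintype.card (Fin d) : ℝ) ^ θ + 1) := by
  have hF : Measurable frechetCDF := Real.measurable_exp.comp measurable_inv.neg
  have hae := aux_pos μ θ hθ₀ X hlog
  set f : Ω → ℝ := fun ω => univ.sup' hne (fun j => frechetCDF (X j ω)) with hf
  have hmeas : Measurable f := by
    have : f = univ.sup' hne (fun j ω => frechetCDF (X j ω)) := by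
      funext ω; rw [Finset.sup'_apply]
    rw [this]
    exact Finset.measurable_sup' hne fun j _ => hF.comp (hXm j)
  have hnn : ∀ ω, 0 ≤ f ω := by
    intro ω
    obtain ⟨j, hj⟩ := hne
    simp only [hf]
    exact le_trans (Real.exp_pos _).le (Finset.le_sup' (fun j => frechetCDF (X j ω)) hj)
  have hlt1 : ∀ᵐ ω ∂μ, f ω < 1 := by
    filter_upwards [hae] with ω hω
    apply Finset.sup'_lt_iff hne |>.2
    intro j _
    rw [frechetCDF, Real.exp_lt_one_iff, neg_lt_zero]
    exact inv_pos.2 (hω j)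
  have hint : Integrable f μ := by
    refine ⟨hmeas.aestronglyMeasurable, HasFiniteIntegral.of_bounded (C := 1) ?_⟩
    filter_upwards [hlt1] with ω h1
    rw [Real.norm_eq_abs, abs_of_nonneg (hnn ω)]
    exact h1.le
  refine ⟨hint, ?_⟩
  rw [hint.integral_eq_integral_meas_lt (Filter.Eventually.of_forall hnn)]
  have hcongr : Set.EqOn (fun t => (μ {a | t < f a}).toReal)
      (Set.indicator (Set.Ioo (0:ℝ) 1) (fun t => 1 - t ^ ((d:ℝ) ^ θ)))
      (Set.Ioi 0) := by
    intro t ht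
    rw [Set.mem_Ioi] at ht
    by_cases ht1 : t < 1
    · rw [Set.indicator_of_mem (Set.mem_Ioo.mpr ⟨ht, ht1⟩)]
      have hset : {a | t < f a} = {ω | ∀ j ∈ (univ : Finset (Fin d)), frechetCDF (X j ω) ≤ t}ᶜ := by
        ext ω
        simp only [Set.mem_compl_iff, Set.mem_setOf_eq, not_forall, not_le, hf,
          Finset.lt_sup'_iff]
        constructor
        · rintro ⟨j, _, h⟩; exact ⟨j, Finset.mem_univ j, h⟩
        · rintro ⟨j, _, h⟩; exact ⟨j, Finset.mem_univ j, h⟩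
      have hms : MeasurableSet {ω | ∀ j ∈ (univ : Finset (Fin d)), frechetCDF (X j ω) ≤ t} := by
        have he : {ω | ∀ j ∈ (univ : Finset (Fin d)), frechetCDF (X j ω) ≤ t}
            = ⋂ j ∈ (univ : Finset (Fin d)), {ω | frechetCDF (X j ω) ≤ t} := by
          ext ω; simp [Set.mem_iInter]
        rw [he]
        exact MeasurableSet.biInter (Set.to_countable _) fun j _ =>
          measurableSet_le (hF.comp (hXm j)) measurable_const
      show (μ {a | t < f a}).toReal = 1 - t ^ ((d:ℝ) ^ θ)
      rw [hset, prob_compl_eq_one_sub hms,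
        ENNReal.toReal_sub_of_le prob_le_one ENNReal.one_ne_top, ENNReal.toReal_one]
      congr 1
      have := aux_cdf μ θ hθ₀ X hlog univ hne ht ht1
      rw [this, Finset.card_univ, Fintype.card_fin]
    · show (μ {a | t < f a}).toReal = _
      rw [Set.indicator_of_notMem (by simp [Set.mem_Ioo]; intro _; linarith)]
      have h0 : μ {a | t < f a} = 0 := by
        rw [measure_eq_zero_iff_ae_notMem]
        filter_upwards [hlt1] with ω h1
        simp only [Set.mem_setOf_eq, not_lt]
        linarith
      rw [h0, ENNReal.toReal_zero]
  rw [setIntegral_congr_fun measurableSet_Ioi (f := fun t => μ.real {a | t < f a}) hcongr]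
  rw [MeasureTheory.setIntegral_indicator measurableSet_Ioo]
  rw [Set.inter_eq_self_of_subset_right Set.Ioo_subset_Ioi_self]
  have hsub : ∫ t in Set.Ioo (0:ℝ) 1, (1 - t ^ ((d:ℝ) ^ θ))
      = (∫ t in Set.Ioo (0:ℝ) 1, (1:ℝ)) - ∫ t in Set.Ioo (0:ℝ) 1, t ^ ((d:ℝ) ^ θ) := by
    apply MeasureTheory.integral_sub (show IntegrableOn (fun _ : ℝ => (1:ℝ)) (Set.Ioo (0:ℝ) 1) volume from integrableOn_const (by simp))
      (aux_rpow_integrableOn (by positivity))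
  rw [hsub, aux_rpow_integral (by positivity)]
  simp [Fintype.card_fin]

include hXm hlog hθ₀ in
lemma aux_min (hne : (univ : Finset (Fin d)).Nonempty) :
    Integrable (fun ω => univ.inf' hne (fun j => frechetCDF (X j ω))) μ ∧
    ∫ ω, univ.inf' hne (fun j => frechetCDF (X j ω)) ∂μ
      = ∑ m ∈ range (d + 1), (d.choose m : ℝ) * ((-1:ℝ) ^ m * (1 / ((m:ℝ) ^ θ + 1))) := by
  have hF : Measurable frechetCDF := Real.measurable_exp.comp measurable_inv.neg
  have hae := aux_pos μ θ hθ₀ X hlog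
  set f : Ω → ℝ := fun ω => univ.inf' hne (fun j => frechetCDF (X j ω)) with hf
  have hmeas : Measurable f := by
    have : f = univ.inf' hne (fun j ω => frechetCDF (X j ω)) := by
      funext ω; rw [Finset.inf'_apply]
    rw [this]
    exact aux_meas_inf' hne fun j _ => hF.comp (hXm j)
  have hnn : ∀ ω, 0 ≤ f ω := by
    intro ω
    simp only [hf]
    exact Finset.le_inf' hne _ fun j _ => (Real.exp_pos _).le
  have hlt1 : ∀ᵐ ω ∂μ, f ω < 1 := by
    filter_upwards [hae] with ω hω
    obtain ⟨j, hj⟩ := hne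
    apply lt_of_le_of_lt (Finset.inf'_le (fun j => frechetCDF (X j ω)) hj)
    rw [frechetCDF, Real.exp_lt_one_iff, neg_lt_zero]
    exact inv_pos.2 (hω j)
  have hint : Integrable f μ := by
    refine ⟨hmeas.aestronglyMeasurable, HasFiniteIntegral.of_bounded (C := 1) ?_⟩
    filter_upwards [hlt1] with ω h1
    rw [Real.norm_eq_abs, abs_of_nonneg (hnn ω)]
    exact h1.le
  refine ⟨hint, ?_⟩
  rw [hint.integral_eq_integral_meas_lt (Filter.Eventually.of_forall hnn)]
  have hcongr : Set.EqOn (fun t => (μ {a | t < f a}).toReal)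
      (Set.indicator (Set.Ioo (0:ℝ) 1)
        (fun t => ∑ T ∈ (univ : Finset (Fin d)).powerset,
          (-1:ℝ) ^ T.card * t ^ ((T.card : ℝ) ^ θ)))
      (Set.Ioi 0) := by
    intro t ht
    rw [Set.mem_Ioi] at ht
    by_cases ht1 : t < 1
    · rw [Set.indicator_of_mem (Set.mem_Ioo.mpr ⟨ht, ht1⟩)]
      show (μ {a | t < f a}).toReal = _
      have hset : {a | t < f a} = {ω | ∀ j, t < frechetCDF (X j ω)} := by
        ext ω
        simp only [Set.mem_setOf_eq, hf, Finset.lt_inf'_iff]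
        constructor
        · intro h j; exact h j (Finset.mem_univ j)
        · intro h j _; exact h j
      rw [hset]
      exact aux_ie μ θ hθ₀ X hXm hlog ht ht1
    · show (μ {a | t < f a}).toReal = _
      rw [Set.indicator_of_notMem (by simp [Set.mem_Ioo]; intro _; linarith)]
      have h0 : μ {a | t < f a} = 0 := by
        rw [measure_eq_zero_iff_ae_notMem]
        filter_upwards [hlt1] with ω h1
        simp only [Set.mem_setOf_eq, not_lt]
        linarith
      rw [h0, ENNReal.toReal_zero]
  rw [setIntegral_congr_fun measurableSet_Ioi (f := fun t => μ.real {a | t < f a}) hcongr]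
  rw [MeasureTheory.setIntegral_indicator measurableSet_Ioo]
  rw [Set.inter_eq_self_of_subset_right Set.Ioo_subset_Ioi_self]
  rw [MeasureTheory.integral_finset_sum _ (fun T _ =>
    ((aux_rpow_integrableOn (by positivity)).const_mul _))]
  have hterm : ∀ T ∈ (univ : Finset (Fin d)).powerset,
      ∫ t in Set.Ioo (0:ℝ) 1, (-1:ℝ) ^ T.card * t ^ ((T.card : ℝ) ^ θ)
        = (-1:ℝ) ^ T.card * (1 / ((T.card : ℝ) ^ θ + 1)) := by
    intro T _
    rw [MeasureTheory.integral_const_mul, aux_rpow_integral (by positivity)]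
  rw [Finset.sum_congr rfl hterm]
  rw [Finset.sum_powerset_apply_card (fun m => (-1:ℝ) ^ m * (1 / ((m:ℝ) ^ θ + 1)))]
  simp only [Finset.card_univ, Fintype.card_fin, nsmul_eq_mul]

include hlog hθ₀ hXm in
theorem stmt17_aux :
    ∫ ω, (Finset.univ.sup' ⟨⟨0, hd⟩, Finset.mem_univ _⟩
          (fun j => frechetCDF (X j ω))
        - Finset.univ.inf' ⟨⟨0, hd⟩, Finset.mem_univ _⟩
          (fun j => frechetCDF (X j ω))) ∂μ
      = (∑ k ∈ Finset.Icc 1 (d - 1),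
            (-1 : ℝ) ^ (k + 1) * (d.choose k : ℝ) * (1 / (1 + (k : ℝ) ^ θ)))
        - (1 + (-1 : ℝ) ^ d) * (1 / (1 + (d : ℝ) ^ θ)) := by
  have hne : (univ : Finset (Fin d)).Nonempty := ⟨⟨0, hd⟩, Finset.mem_univ _⟩
  obtain ⟨hmaxint, hmaxval⟩ := aux_max μ θ hθ₀ X hXm hlog hne
  obtain ⟨hminint, hminval⟩ := aux_min μ θ hθ₀ X hXm hlog hne
  rw [MeasureTheory.integral_sub hmaxint hminint, hmaxval, hminval]
  -- algebra
  obtain ⟨e, rfl⟩ : ∃ e, d = e + 1 := ⟨d - 1, by omega⟩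
  simp only [Fintype.card_fin, Nat.add_sub_cancel]
  rw [Finset.range_eq_Ico, Finset.sum_eq_sum_Ico_succ_bot (Nat.succ_pos _)]
  rw [Nat.succ_eq_add_one, Finset.Ico_add_one_right_eq_Icc]
  rw [show (e + 1 : ℕ) = e + 1 from rfl]
  rw [Finset.sum_Icc_succ_top (by omega : 1 ≤ e + 1)]
  have h0 : (((e+1).choose 0 : ℝ)) * ((-1:ℝ) ^ (0:ℕ) * (1 / (((0:ℕ):ℝ) ^ θ + 1))) = 1 := by
    simp [Real.zero_rpow (ne_of_gt hθ₀)]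
  rw [h0, Nat.choose_self]
  have hsum : ∑ k ∈ Finset.Icc 1 e, (-1 : ℝ) ^ (k + 1) * ((e+1).choose k : ℝ)
        * (1 / (1 + (k : ℝ) ^ θ))
      = -∑ k ∈ Finset.Icc 1 e, ((e+1).choose k : ℝ) * ((-1:ℝ) ^ k * (1 / ((k:ℝ) ^ θ + 1))) := by
    rw [← Finset.sum_neg_distrib]
    apply Finset.sum_congr rfl
    intro k _
    rw [show (1 + (k:ℝ) ^ θ) = ((k:ℝ) ^ θ + 1) from by ring, pow_succ]
    ring
  rw [hsum]
  rw [show (1 + ((e+1:ℕ):ℝ) ^ θ) = (((e+1:ℕ):ℝ) ^ θ + 1) from by ring]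
  push_cast
  ring

end Aux

/-- Max-min coefficient R(X,1) for the symmetric logistic MEV model with
tail dependence function l(x) = (Σ x_j^{1/θ})^θ. -/
theorem stmt17
    {Ω : Type*} [MeasurableSpace Ω] (μ : Measure Ω) [IsProbabilityMeasure μ]
    {d : ℕ} (hd : 0 < d) (θ : ℝ) (hθ₀ : 0 < θ) (hθ₁ : θ ≤ 1)
    (X : Fin d → Ω → ℝ) (hXm : ∀ j, Measurable (X j))
    -- all margins of X are symmetric logistic with unit Fréchet margins:
    -- for every nonempty S, P(∀ j∈S, X j ≤ x j) = exp(−(Σ_{j∈S} (x j)⁻¹^{1/θ})^θ)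
    (hlog : ∀ S : Finset (Fin d), S.Nonempty → ∀ x : Fin d → ℝ, (∀ j, 0 < x j) →
      (μ {ω | ∀ j ∈ S, X j ω ≤ x j}).toReal
        = Real.exp (-(∑ j ∈ S, ((x j)⁻¹) ^ θ⁻¹) ^ θ)) :
    ∫ ω, (Finset.univ.sup' ⟨⟨0, hd⟩, Finset.mem_univ _⟩
          (fun j => frechetCDF (X j ω))
        - Finset.univ.inf' ⟨⟨0, hd⟩, Finset.mem_univ _⟩
          (fun j => frechetCDF (X j ω))) ∂μ
      = (∑ k ∈ Finset.Icc 1 (d - 1),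
            (-1 : ℝ) ^ (k + 1) * (d.choose k : ℝ) * (1 / (1 + (k : ℝ) ^ θ)))
        - (1 + (-1 : ℝ) ^ d) * (1 / (1 + (d : ℝ) ^ θ)) :=
  stmt17_aux μ hd θ hθ₀ X hXm hlog
end
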